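/- arXiv:1306.5307 — 14 statements merged into one kernel-verified Lean document; each statement's English description precedes it below -/
import Mathlib

section
/- Let (α_n)_{n≥1} be a sequence in [0,1] and (a_n)_{n≥1}, (b_n)_{n≥1} be sequences of nonnegative reals such that a_{n+1} ≤ (1 − α_{n+1})·a_n + b_n for all n ≥ 1. Assume that γ : (0,∞) → ℤ₊ is a Cauchy modulus for the series ∑_{n≥1} b_n (i.e. for all ε > 0 and all m ≥ 1, ∑_{n=γ(ε)+1}^{γ(ε)+m} b_n ≤ ε), that θ : ℤ₊ → ℤ₊ is a rate of divergence for ∑_{n≥1} α_{n+1} (i.e. ∑_{n=1}^{θ(m)} α_{n+1} ≥ m for all m ∈ ℤ₊), and that P > 0 is an upper bound on (a_n). Then a_n → 0 with rate of convergence Σ(ε) = θ(γ(ε/2) + max{⌈ln(2P/ε)⌉, 1}) + 1, i.e. for every ε > 0 and every n ≥ Σ(ε), a_n ≤ ε. -/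
/-- Quantitative lemma: if `a (n+1) ≤ (1 - α (n+1)) * a n + b n`, `γ` is a Cauchy modulus
for `∑_{n≥1} b n`, `θ` is a rate of divergence for `∑_{n≥1} α (n+1)` and `P > 0` bounds
`(a n)`, then `a n → 0` with rate `Σ(ε) = θ(γ(ε/2) + max{⌈ln(2P/ε)⌉, 1}) + 1`. -/
theorem stmt_0 (a b α : ℕ → ℝ) (γ : ℝ → ℕ) (θ : ℕ → ℕ) (P : ℝ)
    (hα : ∀ n, 1 ≤ n → α n ∈ Set.Icc (0 : ℝ) 1)
    (ha : ∀ n, 1 ≤ n → 0 ≤ a n) (hb : ∀ n, 1 ≤ n → 0 ≤ b n)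
    (hrec : ∀ n, 1 ≤ n → a (n + 1) ≤ (1 - α (n + 1)) * a n + b n)
    (hγ : ∀ ε : ℝ, 0 < ε → ∀ m, 1 ≤ m →
      ∑ n ∈ Finset.Icc (γ ε + 1) (γ ε + m), b n ≤ ε)
    (hθ : ∀ m : ℕ, 1 ≤ m → (m : ℝ) ≤ ∑ n ∈ Finset.Icc 1 (θ m), α (n + 1))
    (hP : 0 < P) (haP : ∀ n, 1 ≤ n → a n ≤ P) :
    ∀ ε : ℝ, 0 < ε → ∀ n : ℕ,
      θ (γ (ε / 2) + max ⌈Real.log (2 * P / ε)⌉₊ 1) + 1 ≤ n → a n ≤ ε := by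
  intro ε hε n hn
  set N := γ (ε / 2) with hNdef
  set K := max ⌈Real.log (2 * P / ε)⌉₊ 1 with hKdef
  set T := θ (N + K) with hTdef
  have hK1 : 1 ≤ K := le_max_right _ _
  have hαnn : ∀ k, 1 ≤ k → (0:ℝ) ≤ α (k+1) := fun k hk => (hα (k+1) (by omega)).1
  have hα1 : ∀ k, 1 ≤ k → α (k+1) ≤ 1 := fun k hk => (hα (k+1) (by omega)).2
  have hTge : N + K ≤ T := by
    have h1 := hθ (N + K) (by omega)
    have h2 : ∑ k ∈ Finset.Icc 1 T, α (k+1) ≤ (T:ℝ) := by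
      calc ∑ k ∈ Finset.Icc 1 T, α (k+1) ≤ ∑ _k ∈ Finset.Icc 1 T, (1:ℝ) :=
            Finset.sum_le_sum (fun k hk => hα1 k (Finset.mem_Icc.mp hk).1)
        _ = (T:ℝ) := by simp [Nat.card_Icc]
    exact_mod_cast h1.trans h2
  have key : ∀ m, N + 1 ≤ m →
      a (m+1) ≤ (∏ k ∈ Finset.Icc (N+1) m, (1 - α (k+1))) * a (N+1)
        + ∑ k ∈ Finset.Icc (N+1) m, b k := by
    intro m hm
    induction m, hm using Nat.le_induction with
    | base =>
      simp only [Finset.Icc_self, Finset.prod_singleton, Finset.sum_singleton]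
      exact hrec (N+1) (by omega)
    | succ m hm ih =>
      have h1 : a (m+1+1) ≤ (1 - α (m+1+1)) * a (m+1) + b (m+1) := hrec (m+1) (by omega)
      have hfac0 : (0:ℝ) ≤ 1 - α (m+1+1) := by have := hα1 (m+1) (by omega); linarith
      have hfac1 : 1 - α (m+1+1) ≤ 1 := by have := hαnn (m+1) (by omega); linarith
      have hprod0 : (0:ℝ) ≤ ∏ k ∈ Finset.Icc (N+1) m, (1 - α (k+1)) :=
        Finset.prod_nonneg (fun k hk => by
          have := hα1 k (by have := (Finset.mem_Icc.mp hk).1; omega); linarith)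
      have hsum0 : (0:ℝ) ≤ ∑ k ∈ Finset.Icc (N+1) m, b k :=
        Finset.sum_nonneg (fun k hk => hb k (by have := (Finset.mem_Icc.mp hk).1; omega))
      have haN : 0 ≤ a (N+1) := ha (N+1) (by omega)
      rw [Finset.prod_Icc_succ_top (by omega), Finset.sum_Icc_succ_top (by omega)]
      calc a (m+1+1) ≤ (1 - α (m+1+1)) * a (m+1) + b (m+1) := h1
        _ ≤ (1 - α (m+1+1)) * ((∏ k ∈ Finset.Icc (N+1) m, (1 - α (k+1))) * a (N+1)
              + ∑ k ∈ Finset.Icc (N+1) m, b k) + b (m+1) := by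
            have := mul_le_mul_of_nonneg_left ih hfac0
            linarith
        _ ≤ (∏ k ∈ Finset.Icc (N+1) m, (1 - α (k+1))) * (1 - α (m+1+1)) * a (N+1)
              + (∑ k ∈ Finset.Icc (N+1) m, b k + b (m+1)) := by
            nlinarith [mul_nonneg hprod0 haN]
  obtain ⟨m, rfl, hmT⟩ : ∃ m, n = m + 1 ∧ T ≤ m := ⟨n - 1, by omega, by omega⟩
  have hmN : N + 1 ≤ m := by omega
  have h := key m hmN
  -- bound on the sum of α's
  have hsumα : (K : ℝ) ≤ ∑ k ∈ Finset.Icc (N+1) m, α (k+1) := by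
    have hsplit : ∑ k ∈ Finset.Ioc 0 N, α (k+1) + ∑ k ∈ Finset.Ioc N m, α (k+1)
        = ∑ k ∈ Finset.Ioc 0 m, α (k+1) :=
      Finset.sum_Ioc_consecutive _ (Nat.zero_le N) (by omega)
    have hsub : ∑ k ∈ Finset.Ioc 0 T, α (k+1) ≤ ∑ k ∈ Finset.Ioc 0 m, α (k+1) := by
      apply Finset.sum_le_sum_of_subset_of_nonneg
      · exact Finset.Ioc_subset_Ioc_right (by omega)
      · intro k hk _; exact hαnn k (by have := (Finset.mem_Ioc.mp hk).1; omega)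
    have hθ' : (N + K : ℝ) ≤ ∑ k ∈ Finset.Ioc 0 T, α (k+1) := by
      have := hθ (N + K) (by omega)
      rw [show Finset.Icc 1 T = Finset.Ioc 0 T from rfl] at this
      exact_mod_cast this
    have hupper : ∑ k ∈ Finset.Ioc 0 N, α (k+1) ≤ (N:ℝ) := by
      calc ∑ k ∈ Finset.Ioc 0 N, α (k+1) ≤ ∑ _k ∈ Finset.Ioc 0 N, (1:ℝ) :=
            Finset.sum_le_sum (fun k hk => hα1 k (by have := (Finset.mem_Ioc.mp hk).1; omega))
        _ = (N:ℝ) := by simp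
    have heq : Finset.Icc (N+1) m = Finset.Ioc N m := by
      rw [Finset.Icc_add_one_left_eq_Ioc]
    rw [heq]
    push_cast at hθ' ⊢
    linarith
  have hprodle : ∏ k ∈ Finset.Icc (N+1) m, (1 - α (k+1)) ≤ Real.exp (-(K:ℝ)) := by
    calc ∏ k ∈ Finset.Icc (N+1) m, (1 - α (k+1))
        ≤ ∏ k ∈ Finset.Icc (N+1) m, Real.exp (-(α (k+1))) := by
          apply Finset.prod_le_prod
          · intro k hk
            have := hα1 k (by have := (Finset.mem_Icc.mp hk).1; omega); linarith
          · intro k hk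
            have := Real.add_one_le_exp (-(α (k+1))); linarith
      _ = Real.exp (∑ k ∈ Finset.Icc (N+1) m, -(α (k+1))) := (Real.exp_sum _ _).symm
      _ ≤ Real.exp (-(K:ℝ)) := by
          apply Real.exp_le_exp.mpr
          rw [Finset.sum_neg_distrib]
          linarith
  have hexp : Real.exp (-(K:ℝ)) ≤ ε / (2*P) := by
    rcases le_or_gt (2*P) ε with hc | hc
    · have h1 : (1:ℝ) ≤ ε / (2*P) := (one_le_div (by positivity)).mpr hc
      have h2 : Real.exp (-(K:ℝ)) ≤ 1 := Real.exp_le_one_iff.mpr (by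
        have : (1:ℝ) ≤ (K:ℝ) := by exact_mod_cast hK1
        linarith)
      linarith
    · have hpos : (0:ℝ) < 2*P/ε := by positivity
      have hlog : Real.log (2*P/ε) ≤ (K:ℝ) := by
        calc Real.log (2*P/ε) ≤ (⌈Real.log (2*P/ε)⌉₊ : ℝ) := Nat.le_ceil _
          _ ≤ (K:ℝ) := by exact_mod_cast le_max_left _ _
      calc Real.exp (-(K:ℝ)) ≤ Real.exp (-(Real.log (2*P/ε))) :=
            Real.exp_le_exp.mpr (by linarith)
        _ = ε/(2*P) := by
            rw [Real.exp_neg, Real.exp_log hpos, inv_div]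
  have hprod0 : (0:ℝ) ≤ ∏ k ∈ Finset.Icc (N+1) m, (1 - α (k+1)) :=
    Finset.prod_nonneg (fun k hk => by
      have := hα1 k (by have := (Finset.mem_Icc.mp hk).1; omega); linarith)
  have haN : 0 ≤ a (N+1) := ha (N+1) (by omega)
  have haNP : a (N+1) ≤ P := haP (N+1) (by omega)
  have hterm1 : (∏ k ∈ Finset.Icc (N+1) m, (1 - α (k+1))) * a (N+1) ≤ ε/2 := by
    calc (∏ k ∈ Finset.Icc (N+1) m, (1 - α (k+1))) * a (N+1)
        ≤ Real.exp (-(K:ℝ)) * P :=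
          mul_le_mul hprodle haNP haN (Real.exp_nonneg _)
      _ ≤ (ε/(2*P)) * P := by
          apply mul_le_mul_of_nonneg_right hexp hP.le
      _ = ε/2 := by field_simp
  have hterm2 : ∑ k ∈ Finset.Icc (N+1) m, b k ≤ ε/2 := by
    have := hγ (ε/2) (by positivity) (m - N) (by omega)
    rwa [show N + (m - N) = m by omega] at this
  linarith
end

section
/- Let N ≥ 1, X a real normed space, C ⊆ X a convex subset, T_1,…,T_N : C → C nonexpansive mappings extended cyclically by T_n := T_{((n−1) mod N)+1}, (λ_n)_{n≥1} a sequence in [0,1], u ∈ C, and let (x_n) be the cyclic Halpern iteration: x_0 = u, x_{n+1} = λ_{n+1}·u + (1 − λ_{n+1})·T_{n+1}x_n. Let M > 0 with ‖x_n − u‖ ≤ M for all n ≥ 1 and ‖u − T_i u‖ ≤ M for each i = 1,…,N. Assume θ : ℤ₊ → ℤ₊ is a rate of divergence for ∑_{n≥1} λ_n (i.e. ∑_{n=1}^{θ(m)} λ_n ≥ m for all m) and γ : (0,∞) → ℤ₊ is a Cauchy modulus for ∑_{n≥1} |λ_{n+N} − λ_n| (i.e. for all ε > 0 and m ≥ 1,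 ∑_{n=γ(ε)+1}^{γ(ε)+m} |λ_{n+N} − λ_n| ≤ ε). Then ‖x_n − x_{n+N}‖ → 0 with rate of convergence Φ̃(ε) = θ(γ(ε/(4M)) + max{⌈ln(4M/ε)⌉, 1}), i.e. ‖x_n − x_{n+N}‖ ≤ ε for all ε > 0 and all n ≥ Φ̃(ε). -/
/-- Rate of convergence of `‖x n - x (n+N)‖ → 0` for the cyclic Halpern iteration
`x 0 = u`, `x (n+1) = λ_{n+1} • u + (1 - λ_{n+1}) • T_{n+1} (x n)`. -/
theorem stmt_1 {X : Type*} [NormedAddCommGroup X] [NormedSpace ℝ X]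
    (N : ℕ) (hN : 1 ≤ N) (C : Set X) (hC : Convex ℝ C)
    (T : ℕ → X → X)
    (hTmap : ∀ i, 1 ≤ i → i ≤ N → Set.MapsTo (T i) C C)
    (hTne : ∀ i, 1 ≤ i → i ≤ N → ∀ x ∈ C, ∀ y ∈ C, ‖T i x - T i y‖ ≤ ‖x - y‖)
    (hcyc : ∀ n, 1 ≤ n → T n = T ((n - 1) % N + 1))
    (lam : ℕ → ℝ) (hlam : ∀ n, 1 ≤ n → lam n ∈ Set.Icc (0 : ℝ) 1)
    (u : X) (hu : u ∈ C) (x : ℕ → X) (hx0 : x 0 = u)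
    (hx : ∀ n : ℕ, x (n + 1) = lam (n + 1) • u + (1 - lam (n + 1)) • T (n + 1) (x n))
    (M : ℝ) (hM : 0 < M)
    (hxb : ∀ n, 1 ≤ n → ‖x n - u‖ ≤ M)
    (hTu : ∀ i, 1 ≤ i → i ≤ N → ‖u - T i u‖ ≤ M)
    (θ : ℕ → ℕ)
    (hθ : ∀ m : ℕ, 1 ≤ m → (m : ℝ) ≤ ∑ n ∈ Finset.Icc 1 (θ m), lam n)
    (γ : ℝ → ℕ)
    (hγ : ∀ ε : ℝ, 0 < ε → ∀ m, 1 ≤ m →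
      ∑ n ∈ Finset.Icc (γ ε + 1) (γ ε + m), |lam (n + N) - lam n| ≤ ε) :
    ∀ ε : ℝ, 0 < ε → ∀ n : ℕ,
      θ (γ (ε / (4 * M)) + max ⌈Real.log (4 * M / ε)⌉₊ 1) ≤ n →
      ‖x n - x (n + N)‖ ≤ ε := by
  -- preliminaries
  have hN0 : 0 < N := hN
  have hlam0 : ∀ k, 1 ≤ k → 0 ≤ lam k := fun k hk => (hlam k hk).1
  have hlam1 : ∀ k, 1 ≤ k → lam k ≤ 1 := fun k hk => (hlam k hk).2
  have hTidx : ∀ n : ℕ, T (n + 1) = T (n % N + 1) := by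
    intro n
    simpa using hcyc (n + 1) (by omega)
  have hidx : ∀ n : ℕ, 1 ≤ n % N + 1 ∧ n % N + 1 ≤ N := by
    intro n
    have := Nat.mod_lt n hN0
    omega
  have hxC : ∀ n, x n ∈ C := by
    intro n
    induction n with
    | zero => rw [hx0]; exact hu
    | succ n ih =>
      rw [hx n, hTidx n]
      exact hC hu (hTmap _ (hidx n).1 (hidx n).2 ih) (hlam0 (n + 1) (by omega))
        (by linarith [hlam1 (n + 1) (by omega)]) (by ring)
  set a : ℕ → ℝ := fun n => ‖x (n + N) - x n‖ with ha
  have hbound : ∀ n : ℕ, ‖u - T (n + 1) (x (n + N))‖ ≤ 2 * M := by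
    intro n
    rw [hTidx n]
    have h1 := (hidx n).1
    have h2 := (hidx n).2
    have t1 : ‖u - T (n % N + 1) (x (n + N))‖ ≤ ‖u - T (n % N + 1) u‖ +
        ‖T (n % N + 1) u - T (n % N + 1) (x (n + N))‖ := norm_sub_le_norm_sub_add_norm_sub _ _ _
    have t2 := hTne _ h1 h2 u hu (x (n + N)) (hxC (n + N))
    have t3 : ‖u - x (n + N)‖ ≤ M := by
      rw [norm_sub_rev]; exact hxb (n + N) (by omega)
    have t4 := hTu _ h1 h2
    linarith
  have key : ∀ n : ℕ, a (n + 1) ≤ (1 - lam (n + 1)) * a n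
      + 2 * M * |lam (n + 1 + N) - lam (n + 1)| := by
    intro n
    have hT' : T (n + N + 1) = T (n + 1) := by
      rw [hTidx (n + N), hTidx n, Nat.add_mod_right]
    have e1 : x (n + 1 + N) - x (n + 1)
        = (lam (n + N + 1) - lam (n + 1)) • (u - T (n + 1) (x (n + N)))
          + (1 - lam (n + 1)) • (T (n + 1) (x (n + N)) - T (n + 1) (x n)) := by
      have h2 := hx (n + N)
      rw [hT'] at h2
      rw [show n + 1 + N = n + N + 1 by ring, h2, hx n]
      module
    have hlm1 : lam (n + 1) ≤ 1 := hlam1 (n + 1) (by omega)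
    have hne : ‖T (n + 1) (x (n + N)) - T (n + 1) (x n)‖ ≤ ‖x (n + N) - x n‖ := by
      rw [hTidx n]
      exact hTne _ (hidx n).1 (hidx n).2 _ (hxC (n + N)) _ (hxC n)
    have eidx : lam (n + 1 + N) = lam (n + N + 1) := by rw [show n + 1 + N = n + N + 1 by ring]
    calc a (n + 1) = ‖x (n + 1 + N) - x (n + 1)‖ := rfl
      _ ≤ ‖(lam (n + N + 1) - lam (n + 1)) • (u - T (n + 1) (x (n + N)))‖
          + ‖(1 - lam (n + 1)) • (T (n + 1) (x (n + N)) - T (n + 1) (x n))‖ := by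
            rw [e1]; exact norm_add_le _ _
      _ = |lam (n + N + 1) - lam (n + 1)| * ‖u - T (n + 1) (x (n + N))‖
          + |1 - lam (n + 1)| * ‖T (n + 1) (x (n + N)) - T (n + 1) (x n)‖ := by
            rw [norm_smul, norm_smul, Real.norm_eq_abs, Real.norm_eq_abs]
      _ ≤ |lam (n + N + 1) - lam (n + 1)| * (2 * M)
          + (1 - lam (n + 1)) * ‖x (n + N) - x n‖ := by
            rw [abs_of_nonneg (by linarith : (0:ℝ) ≤ 1 - lam (n + 1))]
            have := hbound n
            have h0 : (0:ℝ) ≤ |lam (n + N + 1) - lam (n + 1)| := abs_nonneg _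
            have := norm_nonneg (T (n + 1) (x (n + N)) - T (n + 1) (x n))
            nlinarith
      _ = (1 - lam (n + 1)) * a n + 2 * M * |lam (n + 1 + N) - lam (n + 1)| := by
            rw [eidx]; ring
  -- unrolling
  have unroll : ∀ n₀ m : ℕ,
      a (n₀ + m) ≤ (∏ k ∈ Finset.Icc (n₀ + 1) (n₀ + m), (1 - lam k)) * a n₀
        + 2 * M * ∑ k ∈ Finset.Icc (n₀ + 1) (n₀ + m), |lam (k + N) - lam k| := by
    intro n₀ m
    induction m with
    | zero => simp
    | succ m ih =>
      have hle : n₀ + 1 ≤ n₀ + m + 1 := by omega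
      have hprodnn : (0:ℝ) ≤ ∏ k ∈ Finset.Icc (n₀ + 1) (n₀ + m), (1 - lam k) :=
        Finset.prod_nonneg fun k hk => by
          have := hlam1 k (by have := (Finset.mem_Icc.mp hk).1; omega)
          linarith
      have hsumnn : (0:ℝ) ≤ ∑ k ∈ Finset.Icc (n₀ + 1) (n₀ + m), |lam (k + N) - lam k| :=
        Finset.sum_nonneg fun k _ => abs_nonneg _
      have hlm0 : 0 ≤ lam (n₀ + m + 1) := hlam0 _ (by omega)
      have hlm1 : lam (n₀ + m + 1) ≤ 1 := hlam1 _ (by omega)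
      have hk := key (n₀ + m)
      have hrw : n₀ + (m + 1) = n₀ + m + 1 := by ring
      rw [hrw, Finset.prod_Icc_succ_top hle, Finset.sum_Icc_succ_top hle]
      have hann : 0 ≤ a n₀ := norm_nonneg _
      calc a (n₀ + m + 1)
          ≤ (1 - lam (n₀ + m + 1)) * a (n₀ + m)
            + 2 * M * |lam (n₀ + m + 1 + N) - lam (n₀ + m + 1)| := hk
        _ ≤ (1 - lam (n₀ + m + 1)) *
              ((∏ k ∈ Finset.Icc (n₀ + 1) (n₀ + m), (1 - lam k)) * a n₀
                + 2 * M * ∑ k ∈ Finset.Icc (n₀ + 1) (n₀ + m), |lam (k + N) - lam k|)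
            + 2 * M * |lam (n₀ + m + 1 + N) - lam (n₀ + m + 1)| := by
              have := ih
              nlinarith
        _ ≤ (∏ k ∈ Finset.Icc (n₀ + 1) (n₀ + m), (1 - lam k)) * (1 - lam (n₀ + m + 1)) * a n₀
            + 2 * M * (∑ k ∈ Finset.Icc (n₀ + 1) (n₀ + m), |lam (k + N) - lam k|
              + |lam (n₀ + m + 1 + N) - lam (n₀ + m + 1)|) := by
              nlinarith [mul_nonneg hlm0 (mul_nonneg (by positivity : (0:ℝ) ≤ 2 * M) hsumnn),
                mul_nonneg hlm0 (mul_nonneg hprodnn hann)]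
  -- main argument
  intro ε hε n hn
  set n₀ := γ (ε / (4 * M)) with hn₀
  set K := max ⌈Real.log (4 * M / ε)⌉₊ 1 with hK
  have hθge : ∀ m, 1 ≤ m → m ≤ θ m := by
    intro m hm
    by_contra h
    push_neg at h
    have h1 := hθ m hm
    have h2 : ∑ k ∈ Finset.Icc 1 (θ m), lam k ≤ (θ m : ℝ) := by
      have := Finset.sum_le_card_nsmul (Finset.Icc 1 (θ m)) lam 1
        (fun k hk => hlam1 k (Finset.mem_Icc.mp hk).1)
      simpa [Nat.card_Icc] using this
    have : (m : ℝ) ≤ (θ m : ℝ) := le_trans h1 h2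
    exact absurd (Nat.cast_le.mp this) (by omega)
  have hK1 : 1 ≤ K := le_max_right _ _
  have hnge : n₀ + K ≤ n := le_trans (hθge (n₀ + K) (by omega)) hn
  have hn1 : 1 ≤ n := by omega
  by_cases hcase : 4 * M < ε
  · have t1 : ‖x n - u‖ ≤ M := hxb n hn1
    have t2 : ‖u - x (n + N)‖ ≤ M := by rw [norm_sub_rev]; exact hxb (n + N) (by omega)
    have := norm_sub_le_norm_sub_add_norm_sub (x n) u (x (n + N))
    linarith
  · push_neg at hcase
    have hεM : 0 < ε / (4 * M) := by positivity
    set m := n - n₀ with hm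
    have hmn : n = n₀ + m := by omega
    have hm1 : 1 ≤ m := by omega
    -- sum bound
    have hS : ∑ k ∈ Finset.Icc (n₀ + 1) n, |lam (k + N) - lam k| ≤ ε / (4 * M) := by
      have := hγ (ε / (4 * M)) hεM m hm1
      rwa [← hn₀, show n₀ + m = n from hmn.symm] at this
    -- lambda sum lower bound
    have hsplit : ∑ k ∈ Finset.Ioc 0 n₀, lam k + ∑ k ∈ Finset.Ioc n₀ n, lam k
        = ∑ k ∈ Finset.Ioc 0 n, lam k :=
      Finset.sum_Ioc_consecutive _ (Nat.zero_le _) (by omega)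
    have hIcc0 : ∀ r : ℕ, Finset.Icc 1 r = Finset.Ioc 0 r := by
      intro r; ext k; simp [Nat.lt_iff_add_one_le]
    have hsum1 : (↑(n₀ + K) : ℝ) ≤ ∑ k ∈ Finset.Ioc 0 n, lam k := by
      have h1 := hθ (n₀ + K) (by omega)
      rw [hIcc0] at h1
      refine le_trans h1 (Finset.sum_le_sum_of_subset_of_nonneg ?_ ?_)
      · intro k hk
        simp only [Finset.mem_Ioc] at *
        omega
      · intro k hk _
        exact hlam0 k (by simp at hk; omega)
    have hsum2 : ∑ k ∈ Finset.Ioc 0 n₀, lam k ≤ (n₀ : ℝ) := by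
      have := Finset.sum_le_card_nsmul (Finset.Ioc 0 n₀) lam 1
        (fun k hk => hlam1 k (by simp at hk; omega))
      simpa [Nat.card_Ioc] using this
    have hsumlam : (K : ℝ) ≤ ∑ k ∈ Finset.Ioc n₀ n, lam k := by
      push_cast at hsum1 ⊢
      linarith
    -- product bound
    have hIccIoc : Finset.Icc (n₀ + 1) n = Finset.Ioc n₀ n := by
      ext k; simp only [Finset.mem_Icc, Finset.mem_Ioc]; omega
    have hprod : (∏ k ∈ Finset.Icc (n₀ + 1) n, (1 - lam k))
        ≤ Real.exp (-(K : ℝ)) := by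
      rw [hIccIoc]
      calc (∏ k ∈ Finset.Ioc n₀ n, (1 - lam k))
          ≤ ∏ k ∈ Finset.Ioc n₀ n, Real.exp (-(lam k)) := by
            apply Finset.prod_le_prod
            · intro k hk
              have := hlam1 k (by simp at hk; omega)
              linarith
            · intro k hk
              have := Real.add_one_le_exp (-(lam k))
              linarith
        _ = Real.exp (∑ k ∈ Finset.Ioc n₀ n, -(lam k)) := (Real.exp_sum _ _).symm
        _ = Real.exp (-(∑ k ∈ Finset.Ioc n₀ n, lam k)) := by rw [Finset.sum_neg_distrib]
        _ ≤ Real.exp (-(K : ℝ)) := Real.exp_le_exp.mpr (by linarith)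
    have hexpK : Real.exp (-(K : ℝ)) ≤ ε / (4 * M) := by
      have hlogle : Real.log (4 * M / ε) ≤ (K : ℝ) := by
        calc Real.log (4 * M / ε) ≤ (⌈Real.log (4 * M / ε)⌉₊ : ℝ) := Nat.le_ceil _
          _ ≤ (K : ℝ) := by exact_mod_cast Nat.cast_le.mpr (le_max_left _ _)
      calc Real.exp (-(K : ℝ)) ≤ Real.exp (-Real.log (4 * M / ε)) :=
            Real.exp_le_exp.mpr (by linarith)
        _ = ε / (4 * M) := by
            rw [Real.exp_neg, Real.exp_log (by positivity), inv_div]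
    have han₀ : a n₀ ≤ 2 * M := by
      rcases Nat.eq_zero_or_pos n₀ with h0 | hpos
      · have : a n₀ = ‖x N - u‖ := by
          rw [ha]; simp [h0, hx0]
        rw [this]
        linarith [hxb N (by omega)]
      · have t1 : ‖x (n₀ + N) - u‖ ≤ M := hxb (n₀ + N) (by omega)
        have t2 : ‖u - x n₀‖ ≤ M := by rw [norm_sub_rev]; exact hxb n₀ (by omega)
        have := norm_sub_le_norm_sub_add_norm_sub (x (n₀ + N)) u (x n₀)
        simp only [ha]
        linarith
    have hu1 := unroll n₀ m
    rw [← hmn] at hu1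
    have hprodnn : (0:ℝ) ≤ ∏ k ∈ Finset.Icc (n₀ + 1) n, (1 - lam k) :=
      Finset.prod_nonneg fun k hk => by
        have := hlam1 k (by have := (Finset.mem_Icc.mp hk).1; omega)
        linarith
    have hann : 0 ≤ a n := norm_nonneg _
    have hann0 : 0 ≤ a n₀ := norm_nonneg _
    have hfinal : a n ≤ ε := by
      have e1 : (∏ k ∈ Finset.Icc (n₀ + 1) n, (1 - lam k)) * a n₀
          ≤ (ε / (4 * M)) * (2 * M) := by
        calc (∏ k ∈ Finset.Icc (n₀ + 1) n, (1 - lam k)) * a n₀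
            ≤ Real.exp (-(K : ℝ)) * a n₀ := mul_le_mul_of_nonneg_right hprod hann0
          _ ≤ (ε / (4 * M)) * a n₀ := mul_le_mul_of_nonneg_right hexpK hann0
          _ ≤ (ε / (4 * M)) * (2 * M) := mul_le_mul_of_nonneg_left han₀ (le_of_lt hεM)
      have e2 : 2 * M * ∑ k ∈ Finset.Icc (n₀ + 1) n, |lam (k + N) - lam k|
          ≤ 2 * M * (ε / (4 * M)) := mul_le_mul_of_nonneg_left hS (by positivity)
      have e3 : (ε / (4 * M)) * (2 * M) = ε / 2 := by field_simp; ring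
      have e4 : 2 * M * (ε / (4 * M)) = ε / 2 := by field_simp; ring
      linarith
    rw [norm_sub_rev]
    exact hfinal
end

section
/- Let N ≥ 1, X a real normed space, C ⊆ X a convex subset, T_1,…,T_N : C → C nonexpansive mappings extended cyclically by T_n := T_{((n−1) mod N)+1}, (λ_n)_{n≥1} a sequence in [0,1], u ∈ C, and let (x_n) be the cyclic Halpern iteration: x_0 = u, x_{n+1} = λ_{n+1}·u + (1 − λ_{n+1})·T_{n+1}x_n. Let M > 0 with ‖x_n − u‖ ≤ M for all n ≥ 1 and ‖u − T_i u‖ ≤ M for each i = 1,…,N. Assume θ : ℤ₊ → ℤ₊ is a rate of divergence for ∑_{n≥1} λ_n, γ : (0,∞) → ℤ₊ is a Cauchy modulus for ∑_{n≥1} |λ_{n+N} − λ_n|, and α : (0,∞) → ℤ₊ satisfies λ_{n+1} ≤ ε for all ε > 0 and all n ≥ α(ε). Then ‖x_n − T_{n+N}T_{n+N−1}⋯T_{n+1}x_n‖ → 0 with rate of convergence Φ(ε) = max{Φ̃(ε/2), α(ε/(4MN))}, where Φ̃(ε) = θ(γ(ε/(4M)) + max{⌈ln(4M/ε)⌉,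 1}); i.e. ‖x_n − T_{n+N}⋯T_{n+1}x_n‖ ≤ ε for all ε > 0 and all n ≥ Φ(ε). -/
lemma unroll_aux (a t b : ℕ → ℝ) (ha : ∀ n, 0 ≤ a n)
    (hb : ∀ n, 1 ≤ n → 0 ≤ b n)
    (ht0 : ∀ n, 1 ≤ n → 0 ≤ t n) (ht1 : ∀ n, 1 ≤ n → t n ≤ 1)
    (hrec : ∀ n, a (n+1) ≤ (1 - t (n+1)) * a n + b (n+1)) (n₀ : ℕ) :
    ∀ n, n₀ ≤ n → a n ≤ a n₀ * ∏ k ∈ Finset.Ioc n₀ n, (1 - t k)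
      + ∑ k ∈ Finset.Ioc n₀ n, b k := by
  intro n hn
  induction n, hn using Nat.le_induction with
  | base => simp
  | succ n hn ih =>
    have hP : 0 ≤ ∏ k ∈ Finset.Ioc n₀ n, (1 - t k) :=
      Finset.prod_nonneg fun k hk => by
        have hk1 : 1 ≤ k := le_trans (Nat.succ_le_succ (Nat.zero_le _)) (Finset.mem_Ioc.mp hk).1
        linarith [ht1 k hk1]
    have hS : 0 ≤ ∑ k ∈ Finset.Ioc n₀ n, b k :=
      Finset.sum_nonneg fun k hk => hb k (le_trans (Nat.succ_le_succ (Nat.zero_le _)) (Finset.mem_Ioc.mp hk).1)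
    have h1 : 0 ≤ 1 - t (n+1) := by linarith [ht1 (n+1) (Nat.succ_le_succ (Nat.zero_le _))]
    have h2 : 1 - t (n+1) ≤ 1 := by linarith [ht0 (n+1) (Nat.succ_le_succ (Nat.zero_le _))]
    rw [Finset.prod_Ioc_succ_top hn, Finset.sum_Ioc_succ_top hn]
    have := hrec n
    nlinarith [ha n₀, ha n, mul_nonneg (ha n₀) hP]

lemma prod_le_exp_aux (t : ℕ → ℝ) (s : Finset ℕ) (h1 : ∀ k ∈ s, t k ≤ 1) :
    ∏ k ∈ s, (1 - t k) ≤ Real.exp (-∑ k ∈ s, t k) := by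
  have h : ∏ k ∈ s, (1 - t k) ≤ ∏ k ∈ s, Real.exp (-t k) := by
    apply Finset.prod_le_prod
    · intro k hk; linarith [h1 k hk]
    · intro k hk; linarith [Real.add_one_le_exp (-t k)]
  calc ∏ k ∈ s, (1 - t k) ≤ ∏ k ∈ s, Real.exp (-t k) := h
    _ = Real.exp (∑ k ∈ s, (-t k)) := (Real.exp_sum s fun k => -t k).symm
    _ = Real.exp (-∑ k ∈ s, t k) := by rw [Finset.sum_neg_distrib]

/-- `iterComp T n N z` is the composition `T (n+N) (T (n+N-1) (⋯ (T (n+1) z)))`. -/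
def iterComp {Y : Type*} (T : ℕ → Y → Y) (n : ℕ) : ℕ → Y → Y
  | 0, z => z
  | (k + 1), z => T (n + k + 1) (iterComp T n k z)

/-- Rate of asymptotic regularity `‖x n - T_{n+N}⋯T_{n+1} (x n)‖ → 0` for the cyclic
Halpern iteration `x 0 = u`, `x (n+1) = λ_{n+1} • u + (1 - λ_{n+1}) • T_{n+1} (x n)`. -/
theorem stmt_2 {X : Type*} [NormedAddCommGroup X] [NormedSpace ℝ X]
    (N : ℕ) (hN : 1 ≤ N) (C : Set X) (hC : Convex ℝ C)
    (T : ℕ → X → X)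
    (hTmap : ∀ i, 1 ≤ i → i ≤ N → Set.MapsTo (T i) C C)
    (hTne : ∀ i, 1 ≤ i → i ≤ N → ∀ x ∈ C, ∀ y ∈ C, ‖T i x - T i y‖ ≤ ‖x - y‖)
    (hcyc : ∀ n, 1 ≤ n → T n = T ((n - 1) % N + 1))
    (lam : ℕ → ℝ) (hlam : ∀ n, 1 ≤ n → lam n ∈ Set.Icc (0 : ℝ) 1)
    (u : X) (hu : u ∈ C) (x : ℕ → X) (hx0 : x 0 = u)
    (hx : ∀ n : ℕ, x (n + 1) = lam (n + 1) • u + (1 - lam (n + 1)) • T (n + 1) (x n))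
    (M : ℝ) (hM : 0 < M)
    (hxb : ∀ n, 1 ≤ n → ‖x n - u‖ ≤ M)
    (hTu : ∀ i, 1 ≤ i → i ≤ N → ‖u - T i u‖ ≤ M)
    (θ : ℕ → ℕ)
    (hθ : ∀ m : ℕ, 1 ≤ m → (m : ℝ) ≤ ∑ n ∈ Finset.Icc 1 (θ m), lam n)
    (γ : ℝ → ℕ)
    (hγ : ∀ ε : ℝ, 0 < ε → ∀ m, 1 ≤ m →
      ∑ n ∈ Finset.Icc (γ ε + 1) (γ ε + m), |lam (n + N) - lam n| ≤ ε)
    (α : ℝ → ℕ)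
    (hα : ∀ ε : ℝ, 0 < ε → ∀ n : ℕ, α ε ≤ n → lam (n + 1) ≤ ε) :
    ∀ ε : ℝ, 0 < ε → ∀ n : ℕ,
      max (θ (γ (ε / 2 / (4 * M)) + max ⌈Real.log (4 * M / (ε / 2))⌉₊ 1))
        (α (ε / (4 * M * N))) ≤ n →
      ‖x n - iterComp T n N (x n)‖ ≤ ε := by
  intro ε hε n hn
  -- basic index facts
  have hidx : ∀ m : ℕ, 1 ≤ m → 1 ≤ (m - 1) % N + 1 ∧ (m - 1) % N + 1 ≤ N := by
    intro m _
    exact ⟨Nat.succ_le_succ (Nat.zero_le _), Nat.mod_lt _ (by omega)⟩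
  have hTmap' : ∀ m, 1 ≤ m → Set.MapsTo (T m) C C := by
    intro m hm; rw [hcyc m hm]; exact hTmap _ (hidx m hm).1 (hidx m hm).2
  have hTne' : ∀ m, 1 ≤ m → ∀ y ∈ C, ∀ z ∈ C, ‖T m y - T m z‖ ≤ ‖y - z‖ := by
    intro m hm; rw [hcyc m hm]; exact hTne _ (hidx m hm).1 (hidx m hm).2
  have hTu' : ∀ m, 1 ≤ m → ‖u - T m u‖ ≤ M := by
    intro m hm; rw [hcyc m hm]; exact hTu _ (hidx m hm).1 (hidx m hm).2
  -- x stays in C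
  have hxC : ∀ m, x m ∈ C := by
    intro m
    induction m with
    | zero => rw [hx0]; exact hu
    | succ m ih =>
      rw [hx m]
      have hl := hlam (m+1) (Nat.succ_le_succ (Nat.zero_le _))
      exact hC hu (hTmap' (m+1) (Nat.succ_le_succ (Nat.zero_le _)) ih) hl.1 (by linarith [hl.2]) (by ring)
  have hxb' : ∀ m, ‖x m - u‖ ≤ M := by
    intro m
    match m with
    | 0 => rw [hx0]; simp; linarith
    | (m+1) => exact hxb (m+1) (Nat.succ_le_succ (Nat.zero_le _))
  -- bound on ‖u - T m (x j)‖
  have huT : ∀ m, 1 ≤ m → ∀ j, ‖u - T m (x j)‖ ≤ 2 * M := by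
    intro m hm j
    calc ‖u - T m (x j)‖ ≤ ‖u - T m u‖ + ‖T m u - T m (x j)‖ := norm_sub_le_norm_sub_add_norm_sub _ _ _
      _ ≤ M + ‖u - x j‖ := add_le_add (hTu' m hm) (hTne' m hm u hu (x j) (hxC j))
      _ ≤ M + M := by rw [norm_sub_rev]; linarith [hxb' j]
      _ = 2 * M := by ring
  -- cyclicity
  have hcyc' : ∀ m : ℕ, T (m + N + 1) = T (m + 1) := by
    intro m
    have he : (m + N + 1 - 1) % N + 1 = (m + 1 - 1) % N + 1 := by
      simp only [Nat.add_sub_cancel, Nat.add_mod_right]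
    rw [hcyc (m + N + 1) (by omega), hcyc (m + 1) (by omega), he]
  -- the recurrence for a m = ‖x (m+N) - x m‖
  have harec : ∀ m : ℕ, ‖x (m+1+N) - x (m+1)‖ ≤
      (1 - lam (m+1)) * ‖x (m+N) - x m‖ + 2 * M * |lam (m+1+N) - lam (m+1)| := by
    intro m
    have h1 : x (m+1+N) = lam (m+N+1) • u + (1 - lam (m+N+1)) • T (m+1) (x (m+N)) := by
      have : m+1+N = (m+N)+1 := by ring
      rw [this, hx (m+N), hcyc' m]
    have h2 : x (m+1+N) - x (m+1) =
        (lam (m+N+1) - lam (m+1)) • (u - T (m+1) (x (m+N)))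
        + (1 - lam (m+1)) • (T (m+1) (x (m+N)) - T (m+1) (x m)) := by
      rw [h1, hx m]; module
    have hl := hlam (m+1) (Nat.succ_le_succ (Nat.zero_le _))
    have hmN : m+1+N = m+N+1 := by ring
    calc ‖x (m+1+N) - x (m+1)‖
        ≤ ‖(lam (m+N+1) - lam (m+1)) • (u - T (m+1) (x (m+N)))‖
          + ‖(1 - lam (m+1)) • (T (m+1) (x (m+N)) - T (m+1) (x m))‖ := by
          rw [h2]; exact norm_add_le _ _
      _ ≤ |lam (m+N+1) - lam (m+1)| * (2*M)
          + (1 - lam (m+1)) * ‖x (m+N) - x m‖ := by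
          apply add_le_add
          · rw [norm_smul, Real.norm_eq_abs]
            exact mul_le_mul_of_nonneg_left (huT (m+1) (Nat.succ_le_succ (Nat.zero_le _)) (m+N)) (abs_nonneg _)
          · rw [norm_smul, Real.norm_eq_abs, abs_of_nonneg (by linarith [hl.2])]
            exact mul_le_mul_of_nonneg_left
              (hTne' (m+1) (Nat.succ_le_succ (Nat.zero_le _)) (x (m+N)) (hxC _) (x m) (hxC _))
              (by linarith [hl.2])
      _ = (1 - lam (m+1)) * ‖x (m+N) - x m‖ + 2 * M * |lam (m+1+N) - lam (m+1)| := by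
          rw [hmN]; ring
  -- notation
  set δ₁ : ℝ := ε / 2 / (4 * M) with hδ₁def
  set K : ℕ := max ⌈Real.log (4 * M / (ε / 2))⌉₊ 1 with hKdef
  set n₀ : ℕ := γ δ₁ with hn₀def
  have hδ₁ : 0 < δ₁ := by rw [hδ₁def]; positivity
  have hK1 : 1 ≤ K := le_max_right _ _
  have hIoc0 : ∀ b : ℕ, Finset.Icc 1 b = Finset.Ioc 0 b := by
    intro b; ext k; simp [Finset.mem_Icc, Finset.mem_Ioc]; omega
  have hθge : ∀ m, 1 ≤ m → m ≤ θ m := by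
    intro m hm
    have h1 : (m:ℝ) ≤ ∑ k ∈ Finset.Icc 1 (θ m), lam k := hθ m hm
    have h2 : ∑ k ∈ Finset.Icc 1 (θ m), lam k ≤ (θ m : ℝ) := by
      calc ∑ k ∈ Finset.Icc 1 (θ m), lam k ≤ (Finset.Icc 1 (θ m)).card • (1:ℝ) :=
            Finset.sum_le_card_nsmul _ _ _ (fun k hk => (hlam k (Finset.mem_Icc.mp hk).1).2)
        _ = (θ m : ℝ) := by rw [Nat.card_Icc]; simp
    exact_mod_cast le_trans h1 h2
  have hnK : n₀ + K ≤ n := le_trans (hθge (n₀+K) (by omega)) (le_trans (le_max_left _ _) hn)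
  have hn₀n : n₀ ≤ n := by omega
  -- apply the recurrence-unrolling lemma
  have key := unroll_aux (fun m => ‖x (m+N) - x m‖) lam (fun m => 2*M*|lam (m+N) - lam m|)
    (fun m => norm_nonneg _) (fun m _ => by positivity)
    (fun m hm => (hlam m hm).1) (fun m hm => (hlam m hm).2)
    (fun m => harec m) n₀ n hn₀n
  -- bound on a n₀
  have han₀ : ‖x (n₀+N) - x n₀‖ ≤ 2*M := by
    calc ‖x (n₀+N) - x n₀‖ ≤ ‖x (n₀+N) - u‖ + ‖u - x n₀‖ := norm_sub_le_norm_sub_add_norm_sub _ _ _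
      _ ≤ M + M := add_le_add (hxb' _) (by rw [norm_sub_rev]; exact hxb' _)
      _ = 2*M := by ring
  -- bound on the error sum
  have hSsum : ∑ k ∈ Finset.Ioc n₀ n, 2*M*|lam (k+N) - lam k| ≤ ε/4 := by
    have hIcc : Finset.Ioc n₀ n = Finset.Icc (n₀+1) (n₀+(n-n₀)) := by
      ext k; simp [Finset.mem_Icc, Finset.mem_Ioc]; omega
    rw [← Finset.mul_sum, hIcc]
    have hg := hγ δ₁ hδ₁ (n - n₀) (by omega)
    have h2 : 2*M*δ₁ = ε/4 := by rw [hδ₁def]; field_simp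
    calc (2*M) * ∑ k ∈ Finset.Icc (n₀+1) (n₀+(n-n₀)), |lam (k+N) - lam k| ≤ 2*M*δ₁ :=
          mul_le_mul_of_nonneg_left hg (by linarith)
      _ = ε/4 := h2
  -- lower bound on the sum of lam over Ioc n₀ n
  have hsumlam : (K:ℝ) ≤ ∑ k ∈ Finset.Ioc n₀ n, lam k := by
    have hsplit := Finset.sum_Ioc_consecutive lam (Nat.zero_le n₀) hn₀n
    have h0n₀ : ∑ k ∈ Finset.Ioc 0 n₀, lam k ≤ (n₀:ℝ) := by
      calc ∑ k ∈ Finset.Ioc 0 n₀, lam k ≤ (Finset.Ioc 0 n₀).card • (1:ℝ) :=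
            Finset.sum_le_card_nsmul _ _ _ (fun k hk => (hlam k (Finset.mem_Ioc.mp hk).1).2)
        _ = (n₀:ℝ) := by rw [Nat.card_Ioc]; simp
    have hbig : (n₀:ℝ) + K ≤ ∑ k ∈ Finset.Ioc 0 n, lam k := by
      have h1 := hθ (n₀+K) (by omega)
      rw [hIoc0] at h1
      have h2 : ∑ k ∈ Finset.Ioc 0 (θ (n₀+K)), lam k ≤ ∑ k ∈ Finset.Ioc 0 n, lam k :=
        Finset.sum_le_sum_of_subset_of_nonneg
          (Finset.Ioc_subset_Ioc_right (le_trans (le_max_left _ _) hn))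
          (fun k hk _ => (hlam k (by have := (Finset.mem_Ioc.mp hk).1; omega)).1)
      push_cast at h1 ⊢
      linarith
    linarith [hsplit]
  -- bound on the product
  have hmemge1 : ∀ k ∈ Finset.Ioc n₀ n, 1 ≤ k := by
    intro k hk; have := (Finset.mem_Ioc.mp hk).1; omega
  have hprod : ∏ k ∈ Finset.Ioc n₀ n, (1 - lam k) ≤ ε/(8*M) := by
    have h1 := prod_le_exp_aux lam (Finset.Ioc n₀ n) (fun k hk => (hlam k (hmemge1 k hk)).2)
    have h2 : Real.exp (-∑ k ∈ Finset.Ioc n₀ n, lam k) ≤ Real.exp (-(K:ℝ)) :=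
      Real.exp_le_exp.mpr (by linarith)
    have hlog : Real.log (4*M/(ε/2)) ≤ (K:ℝ) := by
      calc Real.log (4*M/(ε/2)) ≤ (⌈Real.log (4*M/(ε/2))⌉₊ : ℝ) := Nat.le_ceil _
        _ ≤ (K:ℝ) := by exact_mod_cast le_max_left _ _
    have h3 : Real.exp (-(K:ℝ)) ≤ Real.exp (-(Real.log (4*M/(ε/2)))) :=
      Real.exp_le_exp.mpr (by linarith)
    have h4 : Real.exp (-(Real.log (4*M/(ε/2)))) = ε/(8*M) := by
      rw [Real.exp_neg, Real.exp_log (by positivity)]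
      rw [inv_div]
      field_simp
      ring
    linarith
  have key1 : ‖x (n+N) - x n‖ ≤ ε/2 := by
    have hPnonneg : 0 ≤ ∏ k ∈ Finset.Ioc n₀ n, (1 - lam k) :=
      Finset.prod_nonneg (fun k hk => by linarith [(hlam k (hmemge1 k hk)).2])
    have h5 : ‖x (n₀+N) - x n₀‖ * ∏ k ∈ Finset.Ioc n₀ n, (1 - lam k) ≤ 2*M * (ε/(8*M)) :=
      mul_le_mul han₀ hprod hPnonneg (by linarith)
    have h6 : 2*M*(ε/(8*M)) = ε/4 := by field_simp; ring
    linarith [key, hSsum]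
  -- second part: distance from x (n+N) to the iterated composition
  set δ₂ : ℝ := ε / (4 * M * N) with hδ₂def
  have hNpos : (0:ℝ) < N := by exact_mod_cast Nat.lt_of_lt_of_le Nat.zero_lt_one hN
  have hδ₂ : 0 < δ₂ := by rw [hδ₂def]; positivity
  have hαn : α δ₂ ≤ n := le_trans (le_max_right _ _) hn
  have hiter : ∀ k : ℕ, iterComp T n k (x n) ∈ C ∧
      ‖x (n+k) - iterComp T n k (x n)‖ ≤ (k:ℝ) * (2*M*δ₂) := by
    intro k
    induction k with
    | zero =>
      refine ⟨hxC n, ?_⟩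
      simp [iterComp]
    | succ k ih =>
      have hmem : iterComp T n (k+1) (x n) ∈ C := by
        simp only [iterComp]
        exact hTmap' (n+k+1) (by omega) ih.1
      refine ⟨hmem, ?_⟩
      have hlm := hlam (n+k+1) (by omega)
      have hlsmall : lam (n+k+1) ≤ δ₂ := hα δ₂ hδ₂ (n+k) (by omega)
      have heq : x (n+(k+1)) - iterComp T n (k+1) (x n) =
          lam (n+k+1) • (u - T (n+k+1) (x (n+k)))
          + (T (n+k+1) (x (n+k)) - T (n+k+1) (iterComp T n k (x n))) := by
        have hnk : n+(k+1) = (n+k)+1 := by ring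
        rw [hnk, hx (n+k)]
        simp only [iterComp]
        have hnk2 : n+k+1 = (n+k)+1 := rfl
        module
      calc ‖x (n+(k+1)) - iterComp T n (k+1) (x n)‖
          ≤ ‖lam (n+k+1) • (u - T (n+k+1) (x (n+k)))‖
            + ‖T (n+k+1) (x (n+k)) - T (n+k+1) (iterComp T n k (x n))‖ := by
            rw [heq]; exact norm_add_le _ _
        _ ≤ lam (n+k+1) * (2*M) + ‖x (n+k) - iterComp T n k (x n)‖ := by
            apply add_le_add
            · rw [norm_smul, Real.norm_eq_abs, abs_of_nonneg hlm.1]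
              exact mul_le_mul_of_nonneg_left (huT (n+k+1) (by omega) (n+k)) hlm.1
            · exact hTne' (n+k+1) (by omega) _ (hxC _) _ ih.1
        _ ≤ δ₂ * (2*M) + (k:ℝ) * (2*M*δ₂) :=
            add_le_add (mul_le_mul_of_nonneg_right hlsmall (by linarith)) ih.2
        _ = ((k+1:ℕ):ℝ) * (2*M*δ₂) := by push_cast; ring
  have key2 : ‖x (n+N) - iterComp T n N (x n)‖ ≤ ε/2 := by
    have h1 := (hiter N).2
    have h2 : (N:ℝ) * (2*M*δ₂) = ε/2 := by rw [hδ₂def]; field_simp; ring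
    linarith
  calc ‖x n - iterComp T n N (x n)‖
      ≤ ‖x n - x (n+N)‖ + ‖x (n+N) - iterComp T n N (x n)‖ := norm_sub_le_norm_sub_add_norm_sub _ _ _
    _ ≤ ε/2 + ε/2 := add_le_add (by rw [norm_sub_rev]; exact key1) key2
    _ = ε := by ring
end

section
/- Let N ≥ 1, X a real normed space, C ⊆ X a convex subset, T_1,…,T_N : C → C nonexpansive mappings extended cyclically by T_n := T_{((n−1) mod N)+1}, (λ_n)_{n≥1} a sequence in [0,1], u ∈ C, and let (x_n) be the iteration x_0 = u, x_{n+1} = T_{n+1}(λ_{n+1}·u + (1 − λ_{n+1})·x_n). Let M > 0 with ‖x_n − u‖ ≤ M for all n ≥ 1. Assume θ : ℤ₊ → ℤ₊ is a rate of divergence for ∑_{n≥1} λ_n (i.e. ∑_{n=1}^{θ(m)} λ_n ≥ m for all m) and γ : (0,∞) → ℤ₊ is a Cauchy modulus for ∑_{n≥1} |λ_{n+N} − λ_n| (i.e. for all ε > 0 and m ≥ 1, ∑_{n=γ(ε)+1}^{γ(ε)+m} |λ_{n+N} − λ_n| ≤ ε). Then ‖x_n − x_{n+N}‖ → 0 with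 rate of convergence Φ̃(ε) = θ(γ(ε/(4M)) + max{⌈ln(4M/ε)⌉, 1}), i.e. ‖x_n − x_{n+N}‖ ≤ ε for all ε > 0 and all n ≥ Φ̃(ε). -/
/-- Rate of convergence of `‖x n - x (n+N)‖ → 0` for the cyclic iteration
`x 0 = u`, `x (n+1) = T_{n+1} (λ_{n+1} • u + (1 - λ_{n+1}) • x n)`. -/
theorem stmt_3 {X : Type*} [NormedAddCommGroup X] [NormedSpace ℝ X]
    (N : ℕ) (hN : 1 ≤ N) (C : Set X) (hC : Convex ℝ C)
    (T : ℕ → X → X)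
    (hTmap : ∀ i, 1 ≤ i → i ≤ N → Set.MapsTo (T i) C C)
    (hTne : ∀ i, 1 ≤ i → i ≤ N → ∀ x ∈ C, ∀ y ∈ C, ‖T i x - T i y‖ ≤ ‖x - y‖)
    (hcyc : ∀ n, 1 ≤ n → T n = T ((n - 1) % N + 1))
    (lam : ℕ → ℝ) (hlam : ∀ n, 1 ≤ n → lam n ∈ Set.Icc (0 : ℝ) 1)
    (u : X) (hu : u ∈ C) (x : ℕ → X) (hx0 : x 0 = u)
    (hx : ∀ n : ℕ, x (n + 1) = T (n + 1) (lam (n + 1) • u + (1 - lam (n + 1)) • x n))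
    (M : ℝ) (hM : 0 < M)
    (hxb : ∀ n, 1 ≤ n → ‖x n - u‖ ≤ M)
    (θ : ℕ → ℕ)
    (hθ : ∀ m : ℕ, 1 ≤ m → (m : ℝ) ≤ ∑ n ∈ Finset.Icc 1 (θ m), lam n)
    (γ : ℝ → ℕ)
    (hγ : ∀ ε : ℝ, 0 < ε → ∀ m, 1 ≤ m →
      ∑ n ∈ Finset.Icc (γ ε + 1) (γ ε + m), |lam (n + N) - lam n| ≤ ε) :
    ∀ ε : ℝ, 0 < ε → ∀ n : ℕ,
      θ (γ (ε / (4 * M)) + max ⌈Real.log (4 * M / ε)⌉₊ 1) ≤ n →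
      ‖x n - x (n + N)‖ ≤ ε := by
  intro ε hε n hn
  have hε4M : (0 : ℝ) < ε / (4 * M) := by positivity
  set K := γ (ε / (4 * M)) with hKdef
  set m := max ⌈Real.log (4 * M / ε)⌉₊ 1 with hmdef
  have hm1 : 1 ≤ m := le_max_right _ _
  -- all iterates lie in C
  have hxC : ∀ k, x k ∈ C := by
    intro k
    induction k with
    | zero => rw [hx0]; exact hu
    | succ k ih =>
      rw [hx k]
      have hl := hlam (k + 1) (by omega)
      have hz : lam (k + 1) • u + (1 - lam (k + 1)) • x k ∈ C :=
        hC hu ih hl.1 (by linarith [hl.2]) (by ring)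
      have hi : T (k + 1) = T (k % N + 1) := by simpa using hcyc (k + 1) (by omega)
      rw [hi]
      exact hTmap (k % N + 1) (by omega)
        (by have := Nat.mod_lt k (show 0 < N by omega); omega) hz
  -- the key recurrence
  have hrec : ∀ k : ℕ, ‖x (k + 1) - x (k + 1 + N)‖ ≤
      (1 - lam (k + 1)) * ‖x k - x (k + N)‖ + M * |lam (k + 1 + N) - lam (k + 1)| := by
    intro k
    have e1 : k + 1 + N = (k + N) + 1 := by omega
    rw [e1]
    rw [hx k, hx (k + N)]
    have hT1 : T (k + 1) = T (k % N + 1) := by simpa using hcyc (k + 1) (by omega)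
    have hT2 : T (k + N + 1) = T (k % N + 1) := by
      have := hcyc (k + N + 1) (by omega)
      simpa [Nat.add_mod_right] using this
    rw [hT1, hT2]
    set i := k % N + 1 with hidef
    have hl1 := hlam (k + 1) (by omega)
    have hl2 := hlam (k + N + 1) (by omega)
    have hz1 : lam (k + 1) • u + (1 - lam (k + 1)) • x k ∈ C :=
      hC hu (hxC k) hl1.1 (by linarith [hl1.2]) (by ring)
    have hz2 : lam (k + N + 1) • u + (1 - lam (k + N + 1)) • x (k + N) ∈ C :=
      hC hu (hxC (k + N)) hl2.1 (by linarith [hl2.2]) (by ring)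
    have hne := hTne i (by omega)
      (by have := Nat.mod_lt k (show 0 < N by omega); omega) _ hz1 _ hz2
    refine hne.trans ?_
    have hdiff : (lam (k + 1) • u + (1 - lam (k + 1)) • x k) -
        (lam (k + N + 1) • u + (1 - lam (k + N + 1)) • x (k + N)) =
        (1 - lam (k + 1)) • (x k - x (k + N)) +
        (lam (k + N + 1) - lam (k + 1)) • (x (k + N) - u) := by
      module
    rw [hdiff]
    have h1 : ‖(1 - lam (k + 1)) • (x k - x (k + N))‖
        = (1 - lam (k + 1)) * ‖x k - x (k + N)‖ := by
      rw [norm_smul, Real.norm_eq_abs, abs_of_nonneg (by linarith [hl1.2])]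
    have h2 : ‖(lam (k + N + 1) - lam (k + 1)) • (x (k + N) - u)‖
        ≤ |lam (k + N + 1) - lam (k + 1)| * M := by
      rw [norm_smul, Real.norm_eq_abs]
      exact mul_le_mul_of_nonneg_left (hxb (k + N) (by omega)) (abs_nonneg _)
    calc ‖(1 - lam (k + 1)) • (x k - x (k + N)) +
          (lam (k + N + 1) - lam (k + 1)) • (x (k + N) - u)‖
        ≤ ‖(1 - lam (k + 1)) • (x k - x (k + N))‖ +
          ‖(lam (k + N + 1) - lam (k + 1)) • (x (k + N) - u)‖ := norm_add_le _ _
      _ ≤ (1 - lam (k + 1)) * ‖x k - x (k + N)‖ +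
          M * |lam (k + N + 1) - lam (k + 1)| := by
          rw [h1]; linarith [h2]
  -- chained estimate from K
  have hchain : ∀ j, K ≤ j → ‖x j - x (j + N)‖ ≤
      (∏ k ∈ Finset.Icc (K + 1) j, (1 - lam k)) * ‖x K - x (K + N)‖ +
      M * ∑ k ∈ Finset.Icc (K + 1) j, |lam (k + N) - lam k| := by
    intro j hj
    induction j, hj using Nat.le_induction with
    | base => simp
    | succ j hj ih =>
      have hle : K + 1 ≤ j + 1 := by omega
      rw [Finset.prod_Icc_succ_top hle, Finset.sum_Icc_succ_top hle]
      have hl := hlam (j + 1) (by omega)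
      have hP0 : (0:ℝ) ≤ ∏ k ∈ Finset.Icc (K + 1) j, (1 - lam k) :=
        Finset.prod_nonneg fun k hk => by
          have := hlam k (by exact le_trans (by omega) (Finset.mem_Icc.mp hk).1)
          linarith [this.2]
      have hS0 : (0:ℝ) ≤ ∑ k ∈ Finset.Icc (K + 1) j, |lam (k + N) - lam k| :=
        Finset.sum_nonneg fun k _ => abs_nonneg _
      have h0 := hrec j
      have haK : (0:ℝ) ≤ ‖x K - x (K + N)‖ := norm_nonneg _
      have h1 : (1 - lam (j+1)) * ‖x j - x (j + N)‖ ≤ (1 - lam (j+1)) *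
          ((∏ k ∈ Finset.Icc (K + 1) j, (1 - lam k)) * ‖x K - x (K + N)‖ +
           M * ∑ k ∈ Finset.Icc (K + 1) j, |lam (k + N) - lam k|) :=
        mul_le_mul_of_nonneg_left ih (by linarith [hl.2])
      have hMS : (1 - lam (j+1)) * (M * ∑ k ∈ Finset.Icc (K + 1) j, |lam (k + N) - lam k|)
          ≤ M * ∑ k ∈ Finset.Icc (K + 1) j, |lam (k + N) - lam k| := by
        nlinarith [mul_nonneg hl.1 (mul_nonneg hM.le hS0)]
      nlinarith [h0, h1, hMS, abs_nonneg (lam (j + 1 + N) - lam (j + 1)), hM.le]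
  -- product bound by exponential
  have hprod : ∀ j, (∏ k ∈ Finset.Icc (K + 1) j, (1 - lam k)) ≤
      Real.exp (-(∑ k ∈ Finset.Icc (K + 1) j, lam k)) := by
    intro j
    rw [← Finset.sum_neg_distrib, Real.exp_sum]
    refine Finset.prod_le_prod (fun k hk => ?_) (fun k hk => ?_)
    · have := hlam k (le_trans (by omega) (Finset.mem_Icc.mp hk).1)
      linarith [this.2]
    · have := Real.add_one_le_exp (-(lam k)); linarith
  -- a_K ≤ 2M
  have haK2M : ‖x K - x (K + N)‖ ≤ 2 * M := by
    rcases Nat.eq_zero_or_pos K with hK0 | hKpos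
    · rw [hK0]
      rw [hx0, norm_sub_rev]
      calc ‖x (0 + N) - u‖ ≤ M := hxb (0 + N) (by omega)
        _ ≤ 2 * M := by linarith
    · calc ‖x K - x (K + N)‖ ≤ ‖x K - u‖ + ‖u - x (K + N)‖ := by
            rw [← sub_add_sub_cancel (x K) u (x (K + N))]; exact norm_add_le _ _
        _ ≤ M + M := by
            rw [norm_sub_rev u]
            exact add_le_add (hxb K hKpos) (hxb (K + N) (by omega))
        _ = 2 * M := by ring
  -- θ(K+m) ≥ K+m, so n ≥ K+m
  have hθge : K + m ≤ θ (K + m) := by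
    have h1 := hθ (K + m) (by omega)
    have h2 : ∑ k ∈ Finset.Icc 1 (θ (K + m)), lam k ≤ (θ (K + m) : ℝ) := by
      calc ∑ k ∈ Finset.Icc 1 (θ (K + m)), lam k
          ≤ ∑ k ∈ Finset.Icc 1 (θ (K + m)), 1 :=
            Finset.sum_le_sum fun k hk =>
              (hlam k (Finset.mem_Icc.mp hk).1).2
        _ = ((Finset.Icc 1 (θ (K + m))).card : ℝ) := by simp
        _ ≤ (θ (K + m) : ℝ) := by simp [Nat.card_Icc]
    have h3 : ((K + m : ℕ) : ℝ) ≤ ((θ (K + m) : ℕ) : ℝ) := le_trans h1 h2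
    exact_mod_cast h3
  have hnK : K + m ≤ n := le_trans hθge hn
  -- sum of lam from K+1 to n is at least m
  have hsumlam : (m : ℝ) ≤ ∑ k ∈ Finset.Icc (K + 1) n, lam k := by
    have hsub : Finset.Icc 1 (θ (K + m)) ⊆ Finset.Icc 1 n := by
      apply Finset.Icc_subset_Icc_right hn
    have h1 : ((K + m : ℕ) : ℝ) ≤ ∑ k ∈ Finset.Icc 1 n, lam k := by
      refine le_trans (hθ (K + m) (by omega)) ?_
      exact Finset.sum_le_sum_of_subset_of_nonneg hsub
        (fun k hk _ => (hlam k (Finset.mem_Icc.mp hk).1).1)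
    have hsplit : ∑ k ∈ Finset.Icc 1 K, lam k + ∑ k ∈ Finset.Icc (K + 1) n, lam k
        = ∑ k ∈ Finset.Icc 1 n, lam k := by
      have e1 : Finset.Icc 1 K = Finset.Ioc 0 K := by
        ext a; simp [Finset.mem_Icc, Finset.mem_Ioc]; omega
      have e2 : Finset.Icc (K + 1) n = Finset.Ioc K n := by
        ext a; simp [Finset.mem_Icc, Finset.mem_Ioc]
      have e3 : Finset.Icc 1 n = Finset.Ioc 0 n := by
        ext a; simp [Finset.mem_Icc, Finset.mem_Ioc]; omega
      rw [e1, e2, e3]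
      exact Finset.sum_Ioc_consecutive _ (Nat.zero_le K) (by omega)
    have h2 : ∑ k ∈ Finset.Icc 1 K, lam k ≤ (K : ℝ) := by
      calc ∑ k ∈ Finset.Icc 1 K, lam k ≤ ∑ k ∈ Finset.Icc 1 K, 1 :=
            Finset.sum_le_sum fun k hk => (hlam k (Finset.mem_Icc.mp hk).1).2
        _ = ((Finset.Icc 1 K).card : ℝ) := by simp
        _ ≤ (K : ℝ) := by simp [Nat.card_Icc]
    push_cast at h1
    linarith
  -- Cauchy modulus bound
  have hsumb : ∑ k ∈ Finset.Icc (K + 1) n, |lam (k + N) - lam k| ≤ ε / (4 * M) := by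
    have hmn : 1 ≤ n - K := by omega
    have := hγ (ε / (4 * M)) hε4M (n - K) hmn
    rwa [show K + (n - K) = n from by omega] at this
  -- exp(-m) ≤ ε/(4M)
  have hexp : Real.exp (-(m : ℝ)) ≤ ε / (4 * M) := by
    have hlogle : Real.log (4 * M / ε) ≤ (m : ℝ) := by
      calc Real.log (4 * M / ε) ≤ (⌈Real.log (4 * M / ε)⌉₊ : ℝ) := Nat.le_ceil _
        _ ≤ (m : ℝ) := by exact_mod_cast Nat.cast_le.mpr (le_max_left _ _)
    have h4M : (0:ℝ) < 4 * M / ε := by positivity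
    have : -(m : ℝ) ≤ Real.log (ε / (4 * M)) := by
      rw [show ε / (4 * M) = (4 * M / ε)⁻¹ from by field_simp, Real.log_inv]
      linarith
    calc Real.exp (-(m : ℝ)) ≤ Real.exp (Real.log (ε / (4 * M))) :=
          Real.exp_le_exp.mpr this
      _ = ε / (4 * M) := Real.exp_log hε4M
  -- assemble
  have hP := hprod n
  have hCh := hchain n (by omega)
  have hE1 : Real.exp (-(∑ k ∈ Finset.Icc (K + 1) n, lam k)) ≤ Real.exp (-(m : ℝ)) :=
    Real.exp_le_exp.mpr (by linarith)
  have hP0 : (0:ℝ) ≤ ∏ k ∈ Finset.Icc (K + 1) n, (1 - lam k) :=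
    Finset.prod_nonneg fun k hk => by
      have := hlam k (le_trans (by omega) (Finset.mem_Icc.mp hk).1)
      linarith [this.2]
  have haK0 : (0:ℝ) ≤ ‖x K - x (K + N)‖ := norm_nonneg _
  have hterm1 : (∏ k ∈ Finset.Icc (K + 1) n, (1 - lam k)) * ‖x K - x (K + N)‖
      ≤ (ε / (4 * M)) * (2 * M) := by
    have hPle : (∏ k ∈ Finset.Icc (K + 1) n, (1 - lam k)) ≤ ε / (4 * M) :=
      le_trans hP (le_trans hE1 hexp)
    exact mul_le_mul hPle haK2M haK0 (le_of_lt hε4M)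
  have hterm2 : M * ∑ k ∈ Finset.Icc (K + 1) n, |lam (k + N) - lam k| ≤ ε / 4 := by
    calc M * ∑ k ∈ Finset.Icc (K + 1) n, |lam (k + N) - lam k|
        ≤ M * (ε / (4 * M)) := mul_le_mul_of_nonneg_left hsumb hM.le
      _ = ε / 4 := by field_simp
  have hfin : (ε / (4 * M)) * (2 * M) = ε / 2 := by field_simp; ring
  linarith [hCh, hterm1, hterm2]
end

section
/- Let N ≥ 1, X a real normed space, C ⊆ X a convex subset, T_1,…,T_N : C → C nonexpansive mappings extended cyclically by T_n := T_{((n−1) mod N)+1}, (λ_n)_{n≥1} a sequence in [0,1], u ∈ C, and let (x_n) be the iteration x_0 = u, x_{n+1} = T_{n+1}(λ_{n+1}·u + (1 − λ_{n+1})·x_n). Let M > 0 with ‖x_n − u‖ ≤ M for all n ≥ 1. Assume θ : ℤ₊ → ℤ₊ is a rate of divergence for ∑_{n≥1} λ_n, γ : (0,∞) → ℤ₊ is a Cauchy modulus for ∑_{n≥1} |λ_{n+N} − λ_n|, and α : (0,∞) → ℤ₊ satisfies λ_{n+1} ≤ ε for all ε > 0 and all n ≥ α(ε). Then ‖x_n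 − T_{n+N}T_{n+N−1}⋯T_{n+1}x_n‖ → 0 with rate of convergence Φ(ε) = max{Φ̃(ε/2), α(ε/(4MN))}, where Φ̃(ε) = θ(γ(ε/(4M)) + max{⌈ln(4M/ε)⌉, 1}); i.e. ‖x_n − T_{n+N}⋯T_{n+1}x_n‖ ≤ ε for all ε > 0 and all n ≥ Φ(ε). -/
lemma sum_shift_aux (f : ℕ → ℝ) (K n : ℕ) :
    ∑ j ∈ Finset.Ico K n, f (j + 1) = ∑ j ∈ Finset.Icc (K + 1) n, f j := by
  rw [← Finset.Ico_add_one_right_eq_Icc, Finset.sum_Ico_eq_sum_range, Finset.sum_Ico_eq_sum_range]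
  have hnk : n + 1 - (K + 1) = n - K := by omega
  rw [hnk]
  exact Finset.sum_congr rfl fun i _ => congrArg f (by omega)

/-- Rate of asymptotic regularity `‖x n - T_{n+N}⋯T_{n+1} (x n)‖ → 0` for the cyclic
iteration `x 0 = u`, `x (n+1) = T_{n+1} (λ_{n+1} • u + (1 - λ_{n+1}) • x n)`. -/
theorem stmt_4 {X : Type*} [NormedAddCommGroup X] [NormedSpace ℝ X]
    (N : ℕ) (hN : 1 ≤ N) (C : Set X) (hC : Convex ℝ C)
    (T : ℕ → X → X)
    (hTmap : ∀ i, 1 ≤ i → i ≤ N → Set.MapsTo (T i) C C)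
    (hTne : ∀ i, 1 ≤ i → i ≤ N → ∀ x ∈ C, ∀ y ∈ C, ‖T i x - T i y‖ ≤ ‖x - y‖)
    (hcyc : ∀ n, 1 ≤ n → T n = T ((n - 1) % N + 1))
    (lam : ℕ → ℝ) (hlam : ∀ n, 1 ≤ n → lam n ∈ Set.Icc (0 : ℝ) 1)
    (u : X) (hu : u ∈ C) (x : ℕ → X) (hx0 : x 0 = u)
    (hx : ∀ n : ℕ, x (n + 1) = T (n + 1) (lam (n + 1) • u + (1 - lam (n + 1)) • x n))
    (M : ℝ) (hM : 0 < M)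
    (hxb : ∀ n, 1 ≤ n → ‖x n - u‖ ≤ M)
    (θ : ℕ → ℕ)
    (hθ : ∀ m : ℕ, 1 ≤ m → (m : ℝ) ≤ ∑ n ∈ Finset.Icc 1 (θ m), lam n)
    (γ : ℝ → ℕ)
    (hγ : ∀ ε : ℝ, 0 < ε → ∀ m, 1 ≤ m →
      ∑ n ∈ Finset.Icc (γ ε + 1) (γ ε + m), |lam (n + N) - lam n| ≤ ε)
    (α : ℝ → ℕ)
    (hα : ∀ ε : ℝ, 0 < ε → ∀ n : ℕ, α ε ≤ n → lam (n + 1) ≤ ε) :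
    ∀ ε : ℝ, 0 < ε → ∀ n : ℕ,
      max (θ (γ (ε / 2 / (4 * M)) + max ⌈Real.log (4 * M / (ε / 2))⌉₊ 1))
        (α (ε / (4 * M * N))) ≤ n →
      ‖x n - iterComp T n N (x n)‖ ≤ ε := by
  have hNpos : 0 < N := hN
  have hMne : M ≠ 0 := ne_of_gt hM
  have hTmap' : ∀ m : ℕ, Set.MapsTo (T (m + 1)) C C := by
    intro m
    rw [hcyc (m + 1) (by omega)]
    simp only [Nat.add_sub_cancel]
    exact hTmap (m % N + 1) (by omega) (by have := Nat.mod_lt m hNpos; omega)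
  have hTne' : ∀ m : ℕ, ∀ p ∈ C, ∀ q ∈ C, ‖T (m + 1) p - T (m + 1) q‖ ≤ ‖p - q‖ := by
    intro m p hp q hq
    rw [hcyc (m + 1) (by omega)]
    simp only [Nat.add_sub_cancel]
    exact hTne (m % N + 1) (by omega) (by have := Nat.mod_lt m hNpos; omega) p hp q hq
  have hTcyc : ∀ m : ℕ, T (m + N + 1) = T (m + 1) := by
    intro m
    rw [hcyc (m + N + 1) (by omega), hcyc (m + 1) (by omega)]
    simp only [Nat.add_sub_cancel]
    rw [Nat.add_mod_right]
  have hlam0 : ∀ m : ℕ, 0 ≤ lam (m + 1) := fun m => (hlam (m + 1) (by omega)).1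
  have hlam1 : ∀ m : ℕ, lam (m + 1) ≤ 1 := fun m => (hlam (m + 1) (by omega)).2
  have hxC : ∀ m, x m ∈ C := by
    intro m
    induction m with
    | zero => rw [hx0]; exact hu
    | succ m ih =>
      rw [hx m]
      exact hTmap' m (hC hu ih (hlam0 m) (by linarith [hlam1 m]) (by ring))
  have hconvC : ∀ m : ℕ, lam (m + 1) • u + (1 - lam (m + 1)) • x m ∈ C :=
    fun m => hC hu (hxC m) (hlam0 m) (by linarith [hlam1 m]) (by ring)
  have hxb' : ∀ m, ‖x m - u‖ ≤ M := by
    intro m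
    cases m with
    | zero => rw [hx0]; simp; linarith
    | succ m => exact hxb (m + 1) (by omega)
  -- key one-step recurrence for b m = ‖x (m+N) - x m‖
  have hrec : ∀ m : ℕ, ‖x (m + N + 1) - x (m + 1)‖ ≤
      (1 - lam (m + 1)) * ‖x (m + N) - x m‖ + M * |lam (m + N + 1) - lam (m + 1)| := by
    intro m
    have e1 : x (m + N + 1)
        = T (m + 1) (lam (m + N + 1) • u + (1 - lam (m + N + 1)) • x (m + N)) := by
      rw [hx (m + N), hTcyc m]
    rw [e1, hx m]
    refine (hTne' m _ (hconvC (m + N)) _ (hconvC m)).trans ?_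
    have e2 : lam (m + N + 1) • u + (1 - lam (m + N + 1)) • x (m + N)
        - (lam (m + 1) • u + (1 - lam (m + 1)) • x m)
        = (1 - lam (m + 1)) • (x (m + N) - x m)
          + (lam (m + N + 1) - lam (m + 1)) • (u - x (m + N)) := by
      module
    rw [e2]
    refine (norm_add_le _ _).trans ?_
    rw [norm_smul, norm_smul, Real.norm_eq_abs, Real.norm_eq_abs,
      abs_of_nonneg (by linarith [hlam1 m] : (0:ℝ) ≤ 1 - lam (m + 1))]
    have h3 : ‖u - x (m + N)‖ ≤ M := by rw [norm_sub_rev]; exact hxb' (m + N)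
    have h4 : |lam (m + N + 1) - lam (m + 1)| * ‖u - x (m + N)‖
        ≤ |lam (m + N + 1) - lam (m + 1)| * M :=
      mul_le_mul_of_nonneg_left h3 (abs_nonneg _)
    linarith [h4, mul_comm M |lam (m + N + 1) - lam (m + 1)|]
  intro ε hε n hn
  have hε2 : (0:ℝ) < ε / 2 / (4 * M) := by positivity
  set K := γ (ε / 2 / (4 * M)) with hKdef
  set L := max ⌈Real.log (4 * M / (ε / 2))⌉₊ 1 with hLdef
  have hL1 : 1 ≤ L := le_max_right _ _
  have hn0 : θ (K + L) ≤ n := le_trans (le_max_left _ _) hn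
  have hnα : α (ε / (4 * M * N)) ≤ n := le_trans (le_max_right _ _) hn
  have hSle : ∀ m : ℕ, ∑ i ∈ Finset.Icc 1 m, lam i ≤ (m : ℝ) := by
    intro m
    calc ∑ i ∈ Finset.Icc 1 m, lam i ≤ ∑ _i ∈ Finset.Icc 1 m, (1:ℝ) :=
          Finset.sum_le_sum fun i hi => (hlam i (Finset.mem_Icc.mp hi).1).2
      _ = (m : ℝ) := by simp
  have hθKL : ((K + L : ℕ) : ℝ) ≤ ∑ i ∈ Finset.Icc 1 (θ (K + L)), lam i :=
    hθ (K + L) (by omega)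
  have hθge : K + L ≤ θ (K + L) := by
    have h2 := hSle (θ (K + L))
    exact_mod_cast hθKL.trans h2
  have hKn : K < n := by omega
  -- inductive bound
  have hbound : ∀ m, K ≤ m → ‖x (m + N) - x m‖ ≤
      2 * M * ∏ i ∈ Finset.Ico K m, (1 - lam (i + 1))
        + M * ∑ j ∈ Finset.Ico K m, |lam (j + N + 1) - lam (j + 1)| := by
    intro m hm
    induction m, hm using Nat.le_induction with
    | base =>
      simp only [Finset.Ico_self, Finset.prod_empty, Finset.sum_empty, mul_one, mul_zero,
        add_zero]
      calc ‖x (K + N) - x K‖ = ‖(x (K + N) - u) + (u - x K)‖ := by rw [sub_add_sub_cancel]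
        _ ≤ ‖x (K + N) - u‖ + ‖u - x K‖ := norm_add_le _ _
        _ ≤ M + M := add_le_add (hxb' _) (by rw [norm_sub_rev]; exact hxb' _)
        _ = 2 * M := by ring
    | succ m hm ih =>
      rw [show m + 1 + N = m + N + 1 by omega,
        Finset.prod_Ico_succ_top hm, Finset.sum_Ico_succ_top hm]
      have h1 := hrec m
      have hP0 : (0:ℝ) ≤ ∏ i ∈ Finset.Ico K m, (1 - lam (i + 1)) :=
        Finset.prod_nonneg fun i _ => by linarith [hlam1 i]
      have hS0 : (0:ℝ) ≤ ∑ j ∈ Finset.Ico K m, |lam (j + N + 1) - lam (j + 1)| :=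
        Finset.sum_nonneg fun j _ => abs_nonneg _
      have hl0 := hlam0 m
      have hl1 := hlam1 m
      have h2 : (1 - lam (m + 1)) * ‖x (m + N) - x m‖
          ≤ (1 - lam (m + 1)) * (2 * M * ∏ i ∈ Finset.Ico K m, (1 - lam (i + 1))
            + M * ∑ j ∈ Finset.Ico K m, |lam (j + N + 1) - lam (j + 1)|) :=
        mul_le_mul_of_nonneg_left ih (by linarith)
      have h3 : (1 - lam (m + 1)) * (2 * M * ∏ i ∈ Finset.Ico K m, (1 - lam (i + 1))
            + M * ∑ j ∈ Finset.Ico K m, |lam (j + N + 1) - lam (j + 1)|)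
          ≤ 2 * M * ((∏ i ∈ Finset.Ico K m, (1 - lam (i + 1))) * (1 - lam (m + 1)))
            + M * ∑ j ∈ Finset.Ico K m, |lam (j + N + 1) - lam (j + 1)| := by
        nlinarith [mul_nonneg (mul_nonneg hl0 hM.le) hS0]
      linarith
  have hmain := hbound n hKn.le
  -- lower bound on the lambda-sum over Ico K n
  have hsum_lam : (L : ℝ) ≤ ∑ i ∈ Finset.Ico K n, lam (i + 1) := by
    have e : ∑ i ∈ Finset.Ico K n, lam (i + 1) = ∑ i ∈ Finset.Icc (K + 1) n, lam i :=
      sum_shift_aux lam K n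
    have e2 : ∑ i ∈ Finset.Icc 1 K, lam i + ∑ i ∈ Finset.Icc (K + 1) n, lam i
        = ∑ i ∈ Finset.Icc 1 n, lam i := by
      rw [← Finset.Ico_add_one_right_eq_Icc 1 K, ← Finset.Ico_add_one_right_eq_Icc (K + 1) n, ← Finset.Ico_add_one_right_eq_Icc 1 n]
      exact Finset.sum_Ico_consecutive _ (by omega) (by omega)
    have hmono : ∑ i ∈ Finset.Icc 1 (θ (K + L)), lam i ≤ ∑ i ∈ Finset.Icc 1 n, lam i :=
      Finset.sum_le_sum_of_subset_of_nonneg (Finset.Icc_subset_Icc_right hn0)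
        (fun i hi _ => (hlam i (Finset.mem_Icc.mp hi).1).1)
    have hK' := hSle K
    have hlow : ((K : ℝ) + L) ≤ ∑ i ∈ Finset.Icc 1 n, lam i := by
      have h5 := hθKL.trans hmono
      push_cast at h5
      linarith
    rw [e]
    linarith
  -- product estimate
  have hprod : ∏ i ∈ Finset.Ico K n, (1 - lam (i + 1)) ≤ ε / 2 / (4 * M) := by
    have h1 : ∏ i ∈ Finset.Ico K n, (1 - lam (i + 1))
        ≤ ∏ i ∈ Finset.Ico K n, Real.exp (-(lam (i + 1))) :=
      Finset.prod_le_prod (fun i _ => by linarith [hlam1 i])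
        (fun i _ => by linarith [Real.add_one_le_exp (-(lam (i + 1)))])
    have h2 : ∏ i ∈ Finset.Ico K n, Real.exp (-(lam (i + 1)))
        = Real.exp (-(∑ i ∈ Finset.Ico K n, lam (i + 1))) := by
      rw [← Real.exp_sum, Finset.sum_neg_distrib]
    have h3 : Real.exp (-(∑ i ∈ Finset.Ico K n, lam (i + 1))) ≤ Real.exp (-(L : ℝ)) :=
      Real.exp_le_exp.mpr (by linarith)
    have hτ : (0:ℝ) < 4 * M / (ε / 2) := by positivity
    have hlog : Real.log (4 * M / (ε / 2)) ≤ (L : ℝ) := by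
      refine (Nat.le_ceil _).trans ?_
      exact_mod_cast le_max_left _ _
    have h4 : Real.exp (-(L : ℝ)) ≤ ε / 2 / (4 * M) := by
      calc Real.exp (-(L : ℝ)) ≤ Real.exp (-(Real.log (4 * M / (ε / 2)))) :=
            Real.exp_le_exp.mpr (neg_le_neg hlog)
        _ = (4 * M / (ε / 2))⁻¹ := by rw [Real.exp_neg, Real.exp_log hτ]
        _ = ε / 2 / (4 * M) := inv_div _ _
    linarith [h1, h2 ▸ h3]
  -- abs-sum estimate via the Cauchy modulus
  have habs : ∑ j ∈ Finset.Ico K n, |lam (j + N + 1) - lam (j + 1)| ≤ ε / 2 / (4 * M) := by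
    have e1 := sum_shift_aux (fun j => |lam (j + N) - lam j|) K n
    beta_reduce at e1
    have e0 : ∑ j ∈ Finset.Ico K n, |lam (j + N + 1) - lam (j + 1)|
        = ∑ j ∈ Finset.Ico K n, |lam (j + 1 + N) - lam (j + 1)| :=
      Finset.sum_congr rfl fun j _ => by rw [show j + 1 + N = j + N + 1 from by omega]
    have hγn := hγ (ε / 2 / (4 * M)) hε2 (n - K) (by omega)
    rw [← hKdef, show K + (n - K) = n from by omega] at hγn
    rw [e0, e1]
    exact hγn
  have hb : ‖x (n + N) - x n‖ ≤ ε / 2 := by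
    have h2 : 2 * M * ∏ i ∈ Finset.Ico K n, (1 - lam (i + 1))
        ≤ 2 * M * (ε / 2 / (4 * M)) := mul_le_mul_of_nonneg_left hprod (by linarith)
    have h3 : M * ∑ j ∈ Finset.Ico K n, |lam (j + N + 1) - lam (j + 1)|
        ≤ M * (ε / 2 / (4 * M)) := mul_le_mul_of_nonneg_left habs hM.le
    have h4 : 2 * M * (ε / 2 / (4 * M)) = ε / 4 := by field_simp
    have h5 : M * (ε / 2 / (4 * M)) = ε / 8 := by field_simp; ring
    linarith
  -- part 2: x (n+k) stays close to the pure composition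
  have hNR : (0:ℝ) < (N : ℝ) := by exact_mod_cast hNpos
  have hεN : (0:ℝ) < ε / (4 * M * N) :=
    div_pos hε (by nlinarith)
  have hpart2 : ∀ k : ℕ, iterComp T n k (x n) ∈ C ∧
      ‖x (n + k) - iterComp T n k (x n)‖ ≤ (k : ℝ) * (M * (ε / (4 * M * N))) := by
    intro k
    induction k with
    | zero => exact ⟨hxC n, by simp [iterComp]⟩
    | succ k ih =>
      obtain ⟨hCk, hbk⟩ := ih
      have hit : iterComp T n (k + 1) (x n) = T (n + k + 1) (iterComp T n k (x n)) := rfl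
      refine ⟨by rw [hit]; exact hTmap' (n + k) hCk, ?_⟩
      rw [hit, show n + (k + 1) = (n + k) + 1 from rfl, hx (n + k)]
      refine (hTne' (n + k) _ (hconvC (n + k)) _ hCk).trans ?_
      have ed : lam (n + k + 1) • u + (1 - lam (n + k + 1)) • x (n + k)
            - iterComp T n k (x n)
          = (x (n + k) - iterComp T n k (x n)) + lam (n + k + 1) • (u - x (n + k)) := by
        module
      rw [ed]
      refine (norm_add_le _ _).trans ?_
      have h6 : ‖lam (n + k + 1) • (u - x (n + k))‖ ≤ (ε / (4 * M * N)) * M := by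
        rw [norm_smul, Real.norm_eq_abs, abs_of_nonneg (hlam0 _)]
        have hl := hα (ε / (4 * M * N)) hεN (n + k) (by omega)
        have hub : ‖u - x (n + k)‖ ≤ M := by rw [norm_sub_rev]; exact hxb' _
        exact mul_le_mul hl hub (norm_nonneg _) hεN.le
      have h7 : (ε / (4 * M * N)) * M = M * (ε / (4 * M * N)) := mul_comm _ _
      push_cast
      linarith
  have htri : ‖x n - iterComp T n N (x n)‖
      ≤ ‖x (n + N) - x n‖ + ‖x (n + N) - iterComp T n N (x n)‖ := by
    calc ‖x n - iterComp T n N (x n)‖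
        = ‖(x n - x (n + N)) + (x (n + N) - iterComp T n N (x n))‖ := by
          rw [sub_add_sub_cancel]
      _ ≤ ‖x n - x (n + N)‖ + ‖x (n + N) - iterComp T n N (x n)‖ := norm_add_le _ _
      _ = ‖x (n + N) - x n‖ + ‖x (n + N) - iterComp T n N (x n)‖ := by rw [norm_sub_rev]
  have hNc : (N : ℝ) * (M * (ε / (4 * M * N))) = ε / 4 := by
    have hNne : (N : ℝ) ≠ 0 := ne_of_gt hNR
    field_simp
  linarith [(hpart2 N).2, hb, htri]
end

section
/- Let N ≥ 1, X a real normed space, C ⊆ X a nonempty bounded convex subset with diameter at most M for some M > 0, T_1,…,T_N : C → C nonexpansive mappings extended cyclically by T_n := T_{((n−1) mod N)+1}, (λ_n)_{n≥1} a sequence in [0,1], u ∈ C, and let (x_n) be the cyclic Halpern iteration: x_0 = u, x_{n+1} = λ_{n+1}·u + (1 − λ_{n+1})·T_{n+1}x_n. Assume θ : ℤ₊ → ℤ₊ is a rate of divergence for ∑_{n≥1} λ_n, γ : (0,∞) → ℤ₊ is a Cauchy modulus for ∑_{n≥1} |λ_{n+N} − λ_n|, and α : (0,∞) → ℤ₊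 satisfies λ_{n+1} ≤ ε for all ε > 0 and all n ≥ α(ε). Then ‖x_n − x_{n+N}‖ ≤ ε for all n ≥ Φ̃(ε) := θ(γ(ε/(4M)) + max{⌈ln(4M/ε)⌉, 1}), and ‖x_n − T_{n+N}⋯T_{n+1}x_n‖ ≤ ε for all n ≥ Φ(ε) := max{Φ̃(ε/2), α(ε/(4MN))}. -/
/-- Uniform rates of asymptotic regularity for the cyclic Halpern iteration
`x 0 = u`, `x (n+1) = λ_{n+1} • u + (1 - λ_{n+1}) • T_{n+1} (x n)` on a nonempty
bounded convex set of diameter at most `M`. -/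
theorem stmt_5 {X : Type*} [NormedAddCommGroup X] [NormedSpace ℝ X]
    (N : ℕ) (hN : 1 ≤ N) (C : Set X) (hCne : C.Nonempty) (hC : Convex ℝ C)
    (M : ℝ) (hM : 0 < M) (hdiam : ∀ x ∈ C, ∀ y ∈ C, ‖x - y‖ ≤ M)
    (T : ℕ → X → X)
    (hTmap : ∀ i, 1 ≤ i → i ≤ N → Set.MapsTo (T i) C C)
    (hTne : ∀ i, 1 ≤ i → i ≤ N → ∀ x ∈ C, ∀ y ∈ C, ‖T i x - T i y‖ ≤ ‖x - y‖)
    (hcyc : ∀ n, 1 ≤ n → T n = T ((n - 1) % N + 1))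
    (lam : ℕ → ℝ) (hlam : ∀ n, 1 ≤ n → lam n ∈ Set.Icc (0 : ℝ) 1)
    (u : X) (hu : u ∈ C) (x : ℕ → X) (hx0 : x 0 = u)
    (hx : ∀ n : ℕ, x (n + 1) = lam (n + 1) • u + (1 - lam (n + 1)) • T (n + 1) (x n))
    (θ : ℕ → ℕ)
    (hθ : ∀ m : ℕ, 1 ≤ m → (m : ℝ) ≤ ∑ n ∈ Finset.Icc 1 (θ m), lam n)
    (γ : ℝ → ℕ)
    (hγ : ∀ ε : ℝ, 0 < ε → ∀ m, 1 ≤ m →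
      ∑ n ∈ Finset.Icc (γ ε + 1) (γ ε + m), |lam (n + N) - lam n| ≤ ε)
    (α : ℝ → ℕ)
    (hα : ∀ ε : ℝ, 0 < ε → ∀ n : ℕ, α ε ≤ n → lam (n + 1) ≤ ε) :
    ∀ ε : ℝ, 0 < ε →
      (∀ n : ℕ, θ (γ (ε / (4 * M)) + max ⌈Real.log (4 * M / ε)⌉₊ 1) ≤ n →
        ‖x n - x (n + N)‖ ≤ ε) ∧
      (∀ n : ℕ,
        max (θ (γ (ε / 2 / (4 * M)) + max ⌈Real.log (4 * M / (ε / 2))⌉₊ 1))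
          (α (ε / (4 * M * N))) ≤ n →
        ‖x n - iterComp T n N (x n)‖ ≤ ε) := by
  -- Every `T n` with `n ≥ 1` maps `C` to `C` and is nonexpansive.
  have hT1 : ∀ n, 1 ≤ n → Set.MapsTo (T n) C C ∧
      (∀ a ∈ C, ∀ b ∈ C, ‖T n a - T n b‖ ≤ ‖a - b‖) := by
    intro n hn
    have h1 : 1 ≤ (n - 1) % N + 1 := Nat.le_add_left 1 _
    have h2 : (n - 1) % N + 1 ≤ N := Nat.succ_le_of_lt (Nat.mod_lt _ (by omega))
    rw [hcyc n hn]
    exact ⟨hTmap _ h1 h2, hTne _ h1 h2⟩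
  -- periodicity
  have hTper : ∀ n, 1 ≤ n → T (n + N) = T n := by
    intro n hn
    have e : n + N - 1 = (n - 1) + N := by omega
    rw [hcyc n hn, hcyc (n + N) (by omega), e, Nat.add_mod_right]
  -- all iterates are in C
  have hxC : ∀ n, x n ∈ C := by
    intro n
    induction n with
    | zero => rw [hx0]; exact hu
    | succ n ih =>
      rw [hx n]
      have hl := hlam (n + 1) (by omega)
      exact hC hu ((hT1 (n + 1) (by omega)).1 ih) hl.1 (by linarith [hl.2]) (by ring)
  -- diameter bound
  have hxM : ∀ n m : ℕ, ‖x n - x m‖ ≤ M := fun n m => hdiam _ (hxC n) _ (hxC m)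
  -- one-step recurrence for part 1
  have hrec : ∀ n : ℕ, ‖x (n + N + 1) - x (n + 1)‖ ≤
      (1 - lam (n + 1)) * ‖x (n + N) - x n‖ + 2 * M * |lam (n + N + 1) - lam (n + 1)| := by
    intro n
    have hT : T (n + N + 1) = T (n + 1) := by
      have := hTper (n + 1) (by omega)
      have e : n + N + 1 = (n + 1) + N := by omega
      rw [e, this]
    have e1 := hx (n + N)
    have e2 := hx n
    rw [hT] at e1
    have key : x (n + N + 1) - x (n + 1)
        = (lam (n + N + 1) - lam (n + 1)) • (u - T (n + 1) (x n))
          + (1 - lam (n + N + 1)) • (T (n + 1) (x (n + N)) - T (n + 1) (x n)) := by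
      rw [e1, e2]; module
    have hl1 := hlam (n + 1) (by omega)
    have hl2 := hlam (n + N + 1) (by omega)
    have hmem1 := (hT1 (n + 1) (by omega)).1 (hxC n)
    have hmem2 := (hT1 (n + 1) (by omega)).1 (hxC (n + N))
    have hd1 : ‖u - T (n + 1) (x n)‖ ≤ M := hdiam _ hu _ hmem1
    have hd2 : ‖T (n + 1) (x (n + N)) - T (n + 1) (x n)‖ ≤ ‖x (n + N) - x n‖ :=
      (hT1 (n + 1) (by omega)).2 _ (hxC (n + N)) _ (hxC n)
    have hxm := hxM (n + N) n
    calc ‖x (n + N + 1) - x (n + 1)‖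
        ≤ ‖(lam (n + N + 1) - lam (n + 1)) • (u - T (n + 1) (x n))‖
          + ‖(1 - lam (n + N + 1)) • (T (n + 1) (x (n + N)) - T (n + 1) (x n))‖ := by
          rw [key]; exact norm_add_le _ _
      _ = |lam (n + N + 1) - lam (n + 1)| * ‖u - T (n + 1) (x n)‖
          + |1 - lam (n + N + 1)| * ‖T (n + 1) (x (n + N)) - T (n + 1) (x n)‖ := by
          rw [norm_smul, norm_smul, Real.norm_eq_abs, Real.norm_eq_abs]
      _ ≤ (1 - lam (n + 1)) * ‖x (n + N) - x n‖ + 2 * M * |lam (n + N + 1) - lam (n + 1)| := by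
          have h1 : |1 - lam (n + N + 1)| = 1 - lam (n + N + 1) := by
            rw [abs_of_nonneg]; linarith [hl2.2]
          have h2 : 1 - lam (n + N + 1) ≤ (1 - lam (n + 1)) + |lam (n + N + 1) - lam (n + 1)| := by
            cases abs_cases (lam (n + N + 1) - lam (n + 1)) with
            | inl h => linarith [h.1, abs_nonneg (lam (n + N + 1) - lam (n + 1))]
            | inr h => linarith [h.1]
          have habs : 0 ≤ |lam (n + N + 1) - lam (n + 1)| := abs_nonneg _
          have hnn : (0:ℝ) ≤ ‖T (n + 1) (x (n + N)) - T (n + 1) (x n)‖ := norm_nonneg _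
          have hnn2 : (0:ℝ) ≤ ‖x (n + N) - x n‖ := norm_nonneg _
          rw [h1]
          nlinarith [mul_le_mul_of_nonneg_left hd2 (by linarith [hl2.2] : (0:ℝ) ≤ 1 - lam (n + N + 1)),
            mul_le_mul_of_nonneg_right h2 hnn2,
            mul_le_mul_of_nonneg_left hd1 habs]
  -- unrolled estimate
  have hunroll : ∀ n0 k : ℕ, ‖x (n0 + k + N) - x (n0 + k)‖ ≤
      M * ∏ j ∈ Finset.Icc (n0 + 1) (n0 + k), (1 - lam j)
      + 2 * M * ∑ j ∈ Finset.Icc (n0 + 1) (n0 + k), |lam (j + N) - lam j| := by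
    intro n0 k
    induction k with
    | zero => simpa using hxM (n0 + N) n0
    | succ k ih =>
      have hr := hrec (n0 + k)
      have e1 : n0 + (k + 1) + N = n0 + k + N + 1 := by omega
      have e2 : n0 + (k + 1) = n0 + k + 1 := by omega
      have e4 : n0 + k + 1 + N = n0 + k + N + 1 := by omega
      rw [e1, e2,
        Finset.prod_Icc_succ_top (by omega : n0 + 1 ≤ n0 + k + 1),
        Finset.sum_Icc_succ_top (by omega : n0 + 1 ≤ n0 + k + 1), e4]
      have hl := hlam (n0 + k + 1) (by omega)
      have hP : (0:ℝ) ≤ ∏ j ∈ Finset.Icc (n0 + 1) (n0 + k), (1 - lam j) := by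
        apply Finset.prod_nonneg
        intro j hj
        have := hlam j (by have := (Finset.mem_Icc.1 hj).1; omega)
        linarith [this.2]
      have hS : (0:ℝ) ≤ ∑ j ∈ Finset.Icc (n0 + 1) (n0 + k), |lam (j + N) - lam j| :=
        Finset.sum_nonneg fun j _ => abs_nonneg _
      have habs : (0:ℝ) ≤ |lam (n0 + k + N + 1) - lam (n0 + k + 1)| := abs_nonneg _
      nlinarith [hr, mul_le_mul_of_nonneg_left ih (by linarith [hl.2] : (0:ℝ) ≤ 1 - lam (n0 + k + 1)),
        norm_nonneg (x (n0 + k + N) - x (n0 + k)),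
        mul_nonneg hl.1 hS, mul_nonneg (mul_nonneg (by linarith : (0:ℝ) ≤ 2 * M) hl.1) hS,
        hl.1, hl.2, hM.le]
  -- Part 1, general
  have part1 : ∀ ε : ℝ, 0 < ε →
      ∀ n : ℕ, θ (γ (ε / (4 * M)) + max ⌈Real.log (4 * M / ε)⌉₊ 1) ≤ n →
        ‖x n - x (n + N)‖ ≤ ε := by
    intro ε hε n hn
    set n0 := γ (ε / (4 * M)) with hn0
    set K := max ⌈Real.log (4 * M / ε)⌉₊ 1 with hK
    -- θ m ≥ m
    have hθge : ∀ m, 1 ≤ m → m ≤ θ m := by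
      intro m hm
      have h1 := hθ m hm
      have h2 : ∑ j ∈ Finset.Icc 1 (θ m), lam j ≤ (θ m : ℝ) := by
        calc ∑ j ∈ Finset.Icc 1 (θ m), lam j ≤ ∑ j ∈ Finset.Icc 1 (θ m), 1 := by
              apply Finset.sum_le_sum
              intro j hj
              exact (hlam j (Finset.mem_Icc.1 hj).1).2
          _ = (θ m : ℝ) := by simp
      exact_mod_cast le_trans h1 h2
    have hnn0 : n0 + K ≤ n := le_trans (hθge _ (by omega)) hn
    obtain ⟨k, rfl⟩ : ∃ k, n = n0 + k := ⟨n - n0, by omega⟩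
    have hk : K ≤ k := by omega
    have hεM : 0 < ε / (4 * M) := by positivity
    -- sum of |lam (j+N) - lam j| bound
    have hS2 : ∑ j ∈ Finset.Icc (n0 + 1) (n0 + k), |lam (j + N) - lam j| ≤ ε / (4 * M) :=
      hγ _ hεM k (by omega)
    -- lower bound on sum of lam over Icc (n0+1) (n0+k)
    have hS1 : (K : ℝ) ≤ ∑ j ∈ Finset.Icc (n0 + 1) (n0 + k), lam j := by
      have hsplit : ∑ j ∈ Finset.Ioc 0 n0, lam j + ∑ j ∈ Finset.Ioc n0 (n0 + k), lam j
          = ∑ j ∈ Finset.Ioc 0 (n0 + k), lam j :=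
        Finset.sum_Ioc_consecutive _ (Nat.zero_le n0) (by omega)
      have hIcc : ∀ a b : ℕ, Finset.Icc (a + 1) b = Finset.Ioc a b := by
        intro a b; ext j; simp only [Finset.mem_Icc, Finset.mem_Ioc]; omega
      have hIcc0 : Finset.Icc 1 (n0 + k) = Finset.Ioc 0 (n0 + k) := hIcc 0 _
      have hbig : (n0 + K : ℝ) ≤ ∑ j ∈ Finset.Ioc 0 (n0 + k), lam j := by
        calc (n0 + K : ℝ) ≤ ∑ j ∈ Finset.Icc 1 (θ (n0 + K)), lam j := by
              have := hθ (n0 + K) (by omega)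
              push_cast at this ⊢
              exact this
          _ ≤ ∑ j ∈ Finset.Ioc 0 (n0 + k), lam j := by
              rw [← hIcc0]
              apply Finset.sum_le_sum_of_subset_of_nonneg
              · intro j hj
                simp only [Finset.mem_Icc] at hj ⊢
                omega
              · intro j hj _
                have := (Finset.mem_Icc.1 hj).1
                exact (hlam j this).1
      have hsmall : ∑ j ∈ Finset.Ioc 0 n0, lam j ≤ (n0 : ℝ) := by
        calc ∑ j ∈ Finset.Ioc 0 n0, lam j ≤ ∑ j ∈ Finset.Ioc 0 n0, 1 := by
              apply Finset.sum_le_sum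
              intro j hj
              exact (hlam j (Finset.mem_Ioc.1 hj).1).2
          _ = (n0 : ℝ) := by simp
      rw [hIcc n0 (n0 + k)]
      have := hsplit
      push_cast at hbig hsmall
      linarith
    -- product bound
    have hPexp : ∏ j ∈ Finset.Icc (n0 + 1) (n0 + k), (1 - lam j)
        ≤ Real.exp (-(∑ j ∈ Finset.Icc (n0 + 1) (n0 + k), lam j)) := by
      rw [← Finset.sum_neg_distrib, Real.exp_sum]
      apply Finset.prod_le_prod
      · intro j hj
        have := hlam j (by have := (Finset.mem_Icc.1 hj).1; omega)
        linarith [this.2]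
      · intro j hj
        have := Real.add_one_le_exp (-lam j)
        linarith
    have hKlog : Real.log (4 * M / ε) ≤ (K : ℝ) := by
      calc Real.log (4 * M / ε) ≤ (⌈Real.log (4 * M / ε)⌉₊ : ℝ) := Nat.le_ceil _
        _ ≤ (K : ℝ) := by exact_mod_cast Nat.cast_le.2 (le_max_left _ _)
    have hexp : Real.exp (-(∑ j ∈ Finset.Icc (n0 + 1) (n0 + k), lam j)) ≤ ε / (4 * M) := by
      have h4 : (0:ℝ) < 4 * M / ε := by positivity
      calc Real.exp (-(∑ j ∈ Finset.Icc (n0 + 1) (n0 + k), lam j))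
          ≤ Real.exp (-Real.log (4 * M / ε)) := by
            apply Real.exp_le_exp.2; linarith
        _ = ε / (4 * M) := by
            rw [Real.exp_neg, Real.exp_log h4]
            field_simp
    have hmain := hunroll n0 k
    have hfinal : ‖x (n0 + k + N) - x (n0 + k)‖ ≤ M * (ε / (4 * M)) + 2 * M * (ε / (4 * M)) := by
      have hPnn : (0:ℝ) ≤ ∏ j ∈ Finset.Icc (n0 + 1) (n0 + k), (1 - lam j) := by
        apply Finset.prod_nonneg
        intro j hj
        have := hlam j (by have := (Finset.mem_Icc.1 hj).1; omega)
        linarith [this.2]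
      have h1 : ∏ j ∈ Finset.Icc (n0 + 1) (n0 + k), (1 - lam j) ≤ ε / (4 * M) :=
        le_trans hPexp hexp
      nlinarith
    have heq : M * (ε / (4 * M)) + 2 * M * (ε / (4 * M)) = 3 * ε / 4 := by
      field_simp; ring
    rw [norm_sub_rev]
    calc ‖x (n0 + k + N) - x (n0 + k)‖ ≤ 3 * ε / 4 := by rw [← heq]; exact hfinal
      _ ≤ ε := by linarith
  -- the iterate composition stays in C
  have hiterC : ∀ n k, iterComp T n k (x n) ∈ C := by
    intro n k
    induction k with
    | zero => exact hxC n
    | succ k ih => exact (hT1 (n + k + 1) (by omega)).1 ih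
  -- Part 2 estimate: distance from x (n+k) to the composition
  have hiter : ∀ n k : ℕ, ‖x (n + k) - iterComp T n k (x n)‖
      ≤ M * ∑ j ∈ Finset.range k, lam (n + j + 1) := by
    intro n k
    induction k with
    | zero => simp [iterComp]
    | succ k ih =>
      have e : x (n + (k + 1)) = lam (n + k + 1) • u
          + (1 - lam (n + k + 1)) • T (n + k + 1) (x (n + k)) := hx (n + k)
      have hl := hlam (n + k + 1) (by omega)
      have hmem := (hT1 (n + k + 1) (by omega)).1 (hiterC n k)
      have hd1 : ‖u - T (n + k + 1) (iterComp T n k (x n))‖ ≤ M := hdiam _ hu _ hmem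
      have hd2 : ‖T (n + k + 1) (x (n + k)) - T (n + k + 1) (iterComp T n k (x n))‖
          ≤ ‖x (n + k) - iterComp T n k (x n)‖ :=
        (hT1 (n + k + 1) (by omega)).2 _ (hxC (n + k)) _ (hiterC n k)
      have key : x (n + (k + 1)) - iterComp T n (k + 1) (x n)
          = lam (n + k + 1) • (u - T (n + k + 1) (iterComp T n k (x n)))
            + (1 - lam (n + k + 1)) • (T (n + k + 1) (x (n + k))
              - T (n + k + 1) (iterComp T n k (x n))) := by
        rw [e, show iterComp T n (k + 1) (x n) = T (n + k + 1) (iterComp T n k (x n)) from rfl]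
        module
      rw [Finset.sum_range_succ]
      calc ‖x (n + (k + 1)) - iterComp T n (k + 1) (x n)‖
          ≤ |lam (n + k + 1)| * ‖u - T (n + k + 1) (iterComp T n k (x n))‖
            + |1 - lam (n + k + 1)| * ‖T (n + k + 1) (x (n + k))
              - T (n + k + 1) (iterComp T n k (x n))‖ := by
            rw [key]
            refine le_trans (norm_add_le _ _) ?_
            rw [norm_smul, norm_smul, Real.norm_eq_abs, Real.norm_eq_abs]
        _ ≤ M * ∑ j ∈ Finset.range k, lam (n + j + 1) + M * lam (n + k + 1) := by
            rw [abs_of_nonneg hl.1, abs_of_nonneg (by linarith [hl.2] : (0:ℝ) ≤ 1 - lam (n + k + 1))]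
            have hnn : (0:ℝ) ≤ ‖x (n + k) - iterComp T n k (x n)‖ := norm_nonneg _
            nlinarith [ih, mul_le_mul_of_nonneg_left hd1 hl.1,
              mul_le_mul_of_nonneg_left hd2 (by linarith [hl.2] : (0:ℝ) ≤ 1 - lam (n + k + 1)),
              mul_nonneg hl.1 hnn,
              norm_nonneg (u - T (n + k + 1) (iterComp T n k (x n))),
              norm_nonneg (T (n + k + 1) (x (n + k)) - T (n + k + 1) (iterComp T n k (x n)))]
        _ = M * (∑ j ∈ Finset.range k, lam (n + j + 1) + lam (n + k + 1)) := by ring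
  -- final assembly
  intro ε hε
  refine ⟨part1 ε hε, ?_⟩
  intro n hn
  have hn1 : θ (γ (ε / 2 / (4 * M)) + max ⌈Real.log (4 * M / (ε / 2))⌉₊ 1) ≤ n :=
    le_trans (le_max_left _ _) hn
  have hn2 : α (ε / (4 * M * N)) ≤ n := le_trans (le_max_right _ _) hn
  have h1 : ‖x n - x (n + N)‖ ≤ ε / 2 := part1 (ε / 2) (by linarith) n hn1
  have hNpos : (0:ℝ) < N := by exact_mod_cast hN
  have hε' : (0:ℝ) < ε / (4 * M * N) := by positivity
  have h2 : ‖x (n + N) - iterComp T n N (x n)‖ ≤ ε / 4 := by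
    have hsum : ∑ j ∈ Finset.range N, lam (n + j + 1) ≤ N * (ε / (4 * M * N)) := by
      calc ∑ j ∈ Finset.range N, lam (n + j + 1) ≤ ∑ j ∈ Finset.range N, (ε / (4 * M * N)) := by
            apply Finset.sum_le_sum
            intro j _
            exact hα _ hε' (n + j) (by omega)
        _ = N * (ε / (4 * M * N)) := by rw [Finset.sum_const, Finset.card_range]; ring
      -- done
    calc ‖x (n + N) - iterComp T n N (x n)‖ ≤ M * ∑ j ∈ Finset.range N, lam (n + j + 1) :=
          hiter n N
      _ ≤ M * (N * (ε / (4 * M * N))) := by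
          apply mul_le_mul_of_nonneg_left hsum (le_of_lt hM)
      _ = ε / 4 := by field_simp
  calc ‖x n - iterComp T n N (x n)‖
      ≤ ‖x n - x (n + N)‖ + ‖x (n + N) - iterComp T n N (x n)‖ := by
        have := norm_add_le (x n - x (n + N)) (x (n + N) - iterComp T n N (x n))
        simpa using this
    _ ≤ ε / 2 + ε / 4 := add_le_add h1 h2
    _ ≤ ε := by linarith
end

section
/- Let N ≥ 1, X a real normed space, C ⊆ X a nonempty bounded convex subset with diameter at most M for some M > 0, T_1,…,T_N : C → C nonexpansive mappings extended cyclically by T_n := T_{((n−1) mod N)+1}, (λ_n)_{n≥1} a sequence in [0,1], u ∈ C, and let (x_n) be the iteration x_0 = u, x_{n+1} = T_{n+1}(λ_{n+1}·u + (1 − λ_{n+1})·x_n). Assume θ : ℤ₊ → ℤ₊ is a rate of divergence for ∑_{n≥1} λ_n, γ : (0,∞) → ℤ₊ is a Cauchy modulus for ∑_{n≥1} |λ_{n+N} − λ_n|, and α : (0,∞) → ℤ₊ satisfies λ_{n+1} ≤ ε for all ε > 0 and all n ≥ α(ε). Then ‖x_n − x_{n+N}‖ ≤ ε for all n ≥ Φ̃(ε)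 := θ(γ(ε/(4M)) + max{⌈ln(4M/ε)⌉, 1}), and ‖x_n − T_{n+N}⋯T_{n+1}x_n‖ ≤ ε for all n ≥ Φ(ε) := max{Φ̃(ε/2), α(ε/(4MN))}. -/
/-- Uniform rates of asymptotic regularity for the cyclic iteration
`x 0 = u`, `x (n+1) = T_{n+1} (λ_{n+1} • u + (1 - λ_{n+1}) • x n)` on a nonempty
bounded convex set of diameter at most `M`. -/
theorem stmt_6 {X : Type*} [NormedAddCommGroup X] [NormedSpace ℝ X]
    (N : ℕ) (hN : 1 ≤ N) (C : Set X) (hCne : C.Nonempty) (hC : Convex ℝ C)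
    (M : ℝ) (hM : 0 < M) (hdiam : ∀ x ∈ C, ∀ y ∈ C, ‖x - y‖ ≤ M)
    (T : ℕ → X → X)
    (hTmap : ∀ i, 1 ≤ i → i ≤ N → Set.MapsTo (T i) C C)
    (hTne : ∀ i, 1 ≤ i → i ≤ N → ∀ x ∈ C, ∀ y ∈ C, ‖T i x - T i y‖ ≤ ‖x - y‖)
    (hcyc : ∀ n, 1 ≤ n → T n = T ((n - 1) % N + 1))
    (lam : ℕ → ℝ) (hlam : ∀ n, 1 ≤ n → lam n ∈ Set.Icc (0 : ℝ) 1)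
    (u : X) (hu : u ∈ C) (x : ℕ → X) (hx0 : x 0 = u)
    (hx : ∀ n : ℕ, x (n + 1) = T (n + 1) (lam (n + 1) • u + (1 - lam (n + 1)) • x n))
    (θ : ℕ → ℕ)
    (hθ : ∀ m : ℕ, 1 ≤ m → (m : ℝ) ≤ ∑ n ∈ Finset.Icc 1 (θ m), lam n)
    (γ : ℝ → ℕ)
    (hγ : ∀ ε : ℝ, 0 < ε → ∀ m, 1 ≤ m →
      ∑ n ∈ Finset.Icc (γ ε + 1) (γ ε + m), |lam (n + N) - lam n| ≤ ε)
    (α : ℝ → ℕ)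
    (hα : ∀ ε : ℝ, 0 < ε → ∀ n : ℕ, α ε ≤ n → lam (n + 1) ≤ ε) :
    ∀ ε : ℝ, 0 < ε →
      (∀ n : ℕ, θ (γ (ε / (4 * M)) + max ⌈Real.log (4 * M / ε)⌉₊ 1) ≤ n →
        ‖x n - x (n + N)‖ ≤ ε) ∧
      (∀ n : ℕ,
        max (θ (γ (ε / 2 / (4 * M)) + max ⌈Real.log (4 * M / (ε / 2))⌉₊ 1))
          (α (ε / (4 * M * N))) ≤ n →
        ‖x n - iterComp T n N (x n)‖ ≤ ε) := by
  have hN0 : (0:ℕ) < N := hN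
  have hTmap' : ∀ m, 1 ≤ m → Set.MapsTo (T m) C C := by
    intro m hm
    rw [hcyc m hm]
    exact hTmap _ (Nat.le_add_left 1 _) (Nat.succ_le_of_lt (Nat.mod_lt _ hN0))
  have hTne' : ∀ m, 1 ≤ m → ∀ a ∈ C, ∀ b ∈ C, ‖T m a - T m b‖ ≤ ‖a - b‖ := by
    intro m hm
    rw [hcyc m hm]
    exact hTne _ (Nat.le_add_left 1 _) (Nat.succ_le_of_lt (Nat.mod_lt _ hN0))
  have hlam0 : ∀ n, 1 ≤ n → 0 ≤ lam n := fun n hn => (hlam n hn).1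
  have hlam1 : ∀ n, 1 ≤ n → lam n ≤ 1 := fun n hn => (hlam n hn).2
  have hmem : ∀ n, x n ∈ C := by
    intro n
    induction n with
    | zero => rw [hx0]; exact hu
    | succ n ih =>
      rw [hx n]
      refine hTmap' (n+1) (by omega) ?_
      exact hC hu ih (hlam0 _ (by omega)) (by linarith [hlam1 (n+1) (by omega)]) (by ring)
  have hconv : ∀ n, lam (n+1) • u + (1 - lam (n+1)) • x n ∈ C := fun n =>
    hC hu (hmem n) (hlam0 _ (by omega)) (by linarith [hlam1 (n+1) (by omega)]) (by ring)
  have hper : ∀ n : ℕ, T (n + N + 1) = T (n + 1) := by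
    intro n
    rw [hcyc (n+N+1) (by omega), hcyc (n+1) (by omega)]
    have h1 : n + N + 1 - 1 = n + N := rfl
    have h2 : n + 1 - 1 = n := rfl
    rw [h1, h2, Nat.add_mod_right]
  have hrec : ∀ n, ‖x (n+N+1) - x (n+1)‖ ≤
      (1 - lam (n+1)) * ‖x (n+N) - x n‖ + M * |lam (n+N+1) - lam (n+1)| := by
    intro n
    have e1 : x (n+N+1) = T (n+1) (lam (n+N+1) • u + (1 - lam (n+N+1)) • x (n+N)) := by
      rw [hx (n+N), hper]
    have e2 : x (n+1) = T (n+1) (lam (n+1) • u + (1 - lam (n+1)) • x n) := hx n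
    rw [e1, e2]
    have h3 := hTne' (n+1) (by omega) _ (hconv (n+N)) _ (hconv n)
    refine h3.trans ?_
    have veq : (lam (n+N+1) • u + (1 - lam (n+N+1)) • x (n+N))
        - (lam (n+1) • u + (1 - lam (n+1)) • x n)
        = (lam (n+N+1) - lam (n+1)) • (u - x (n+N)) + (1 - lam (n+1)) • (x (n+N) - x n) := by
      module
    rw [veq]
    have h4 : ‖u - x (n+N)‖ ≤ M := hdiam u hu _ (hmem _)
    have h5 : |1 - lam (n+1)| = 1 - lam (n+1) :=
      abs_of_nonneg (by linarith [hlam1 (n+1) (by omega)])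
    calc ‖(lam (n+N+1) - lam (n+1)) • (u - x (n+N)) + (1 - lam (n+1)) • (x (n+N) - x n)‖
        ≤ ‖(lam (n+N+1) - lam (n+1)) • (u - x (n+N))‖
          + ‖(1 - lam (n+1)) • (x (n+N) - x n)‖ := norm_add_le _ _
      _ = |lam (n+N+1) - lam (n+1)| * ‖u - x (n+N)‖
          + (1 - lam (n+1)) * ‖x (n+N) - x n‖ := by
          rw [norm_smul, norm_smul, Real.norm_eq_abs, Real.norm_eq_abs, h5]
      _ ≤ (1 - lam (n+1)) * ‖x (n+N) - x n‖ + M * |lam (n+N+1) - lam (n+1)| := by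
          nlinarith [abs_nonneg (lam (n+N+1) - lam (n+1)), norm_nonneg (x (n+N) - x n), h4]
  -- key quantitative lemma (part 1, with bound ε/2)
  have key : ∀ ε : ℝ, 0 < ε → ∀ n : ℕ,
      θ (γ (ε / (4 * M)) + max ⌈Real.log (4 * M / ε)⌉₊ 1) ≤ n →
      ‖x n - x (n + N)‖ ≤ ε / 2 := by
    intro ε hε n hn
    have hε'pos : 0 < ε / (4 * M) := by positivity
    set n₀ := γ (ε / (4 * M)) with hn₀
    set L := max ⌈Real.log (4 * M / ε)⌉₊ 1 with hLdef
    set K := n₀ + L with hK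
    have hL1 : 1 ≤ L := le_max_right _ _
    have hsum_le : ∀ m : ℕ, ∑ k ∈ Finset.Icc 1 m, lam k ≤ (m:ℝ) := by
      intro m
      calc ∑ k ∈ Finset.Icc 1 m, lam k ≤ ∑ k ∈ Finset.Icc 1 m, (1:ℝ) :=
            Finset.sum_le_sum (fun k hk => hlam1 k (Finset.mem_Icc.mp hk).1)
        _ ≤ (m:ℝ) := by simp [Nat.card_Icc]
    have hθK := hθ K (by omega)
    have hθKge : K ≤ θ K := by
      have h := hθK.trans (hsum_le (θ K))
      exact_mod_cast h
    have hn₀n : n₀ ≤ n := by omega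
    have hbnd : ∀ m : ℕ, ‖x (n₀ + m + N) - x (n₀ + m)‖ ≤
        M * ∏ k ∈ Finset.Icc (n₀+1) (n₀+m), (1 - lam k)
        + M * ∑ k ∈ Finset.Icc (n₀+1) (n₀+m), |lam (k + N) - lam k| := by
      intro m
      induction m with
      | zero =>
        rw [Nat.add_zero, Finset.Icc_eq_empty (by omega)]
        simp only [Finset.prod_empty, Finset.sum_empty, mul_one, mul_zero, add_zero]
        exact hdiam _ (hmem _) _ (hmem _)
      | succ m ih =>
        have e1 : n₀ + (m+1) + N = n₀ + m + N + 1 := by omega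
        have e2 : n₀ + (m+1) = n₀ + m + 1 := by omega
        rw [e1, e2, Finset.prod_Icc_succ_top (by omega : n₀+1 ≤ n₀+m+1),
          Finset.sum_Icc_succ_top (by omega : n₀+1 ≤ n₀+m+1)]
        have hstep := hrec (n₀ + m)
        rw [show n₀+m+1+N = n₀+m+N+1 by omega]
        have hlz : 0 ≤ lam (n₀+m+1) := hlam0 _ (by omega)
        have hlo : lam (n₀+m+1) ≤ 1 := hlam1 _ (by omega)
        have hP0 : 0 ≤ ∏ k ∈ Finset.Icc (n₀+1) (n₀+m), (1 - lam k) :=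
          Finset.prod_nonneg (fun k hk => by
            have hk1 := (Finset.mem_Icc.mp hk).1
            have := hlam1 k (by omega)
            linarith)
        have hS0 : 0 ≤ ∑ k ∈ Finset.Icc (n₀+1) (n₀+m), |lam (k+N) - lam k| :=
          Finset.sum_nonneg (fun k _ => abs_nonneg _)
        have hmul := mul_le_mul_of_nonneg_left ih (by linarith : (0:ℝ) ≤ 1 - lam (n₀+m+1))
        nlinarith [abs_nonneg (lam (n₀+m+N+1) - lam (n₀+m+1)),
          mul_nonneg (mul_nonneg hM.le hS0) hlz]
    have hSb : ∑ k ∈ Finset.Icc (n₀+1) n, |lam (k+N) - lam k| ≤ ε / (4*M) := by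
      rcases Nat.eq_or_lt_of_le hn₀n with h | h
      · rw [← h, Finset.Icc_eq_empty (by omega)]
        simpa using hε'pos.le
      · have hh := hγ (ε / (4*M)) hε'pos (n - n₀) (by omega)
        have e : n₀ + (n - n₀) = n := by omega
        rwa [e] at hh
    have hsum_tail : Real.log (4*M/ε) ≤ ∑ k ∈ Finset.Icc (n₀+1) n, lam k := by
      have hun : Finset.Icc 1 n = Finset.Icc 1 n₀ ∪ Finset.Icc (n₀+1) n := by
        ext k; simp only [Finset.mem_Icc, Finset.mem_union]; omega
      have hdisj : Disjoint (Finset.Icc 1 n₀) (Finset.Icc (n₀+1) n) := by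
        rw [Finset.disjoint_left]
        intro a ha hb
        simp only [Finset.mem_Icc] at ha hb
        omega
      have h3 : ∑ k ∈ Finset.Icc 1 n, lam k
          = ∑ k ∈ Finset.Icc 1 n₀, lam k + ∑ k ∈ Finset.Icc (n₀+1) n, lam k := by
        rw [hun, Finset.sum_union hdisj]
      have h1 : (K:ℝ) ≤ ∑ k ∈ Finset.Icc 1 n, lam k := by
        refine hθK.trans (Finset.sum_le_sum_of_subset_of_nonneg ?_ ?_)
        · exact Finset.Icc_subset_Icc le_rfl hn
        · intro k hk _; exact hlam0 k (Finset.mem_Icc.mp hk).1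
      have h2 := hsum_le n₀
      have hLlog : Real.log (4*M/ε) ≤ (L:ℝ) := by
        calc Real.log (4*M/ε) ≤ (⌈Real.log (4*M/ε)⌉₊ : ℝ) := Nat.le_ceil _
          _ ≤ (L:ℝ) := by exact_mod_cast le_max_left _ _
      have hKr : (K:ℝ) = (n₀:ℝ) + (L:ℝ) := by rw [hK]; push_cast; ring
      linarith
    have hprod : ∏ k ∈ Finset.Icc (n₀+1) n, (1 - lam k)
        ≤ Real.exp (-(∑ k ∈ Finset.Icc (n₀+1) n, lam k)) := by
      have he : Real.exp (-(∑ k ∈ Finset.Icc (n₀+1) n, lam k))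
          = ∏ k ∈ Finset.Icc (n₀+1) n, Real.exp (-(lam k)) := by
        rw [← Real.exp_sum, ← Finset.sum_neg_distrib]
      rw [he]
      refine Finset.prod_le_prod ?_ ?_
      · intro k hk
        have hk1 := (Finset.mem_Icc.mp hk).1
        have := hlam1 k (by omega)
        linarith
      · intro k hk
        have := Real.add_one_le_exp (-(lam k))
        linarith
    have hexp : Real.exp (-(∑ k ∈ Finset.Icc (n₀+1) n, lam k)) ≤ ε / (4*M) := by
      have h1 : Real.exp (-(∑ k ∈ Finset.Icc (n₀+1) n, lam k))
          ≤ Real.exp (-(Real.log (4*M/ε))) := Real.exp_le_exp.mpr (by linarith)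
      have h2 : Real.exp (-(Real.log (4*M/ε))) = ε / (4*M) := by
        rw [Real.exp_neg, Real.exp_log (by positivity), inv_div]
      linarith [h2 ▸ h1]
    have hfin := hbnd (n - n₀)
    have e : n₀ + (n - n₀) = n := by omega
    rw [e] at hfin
    rw [norm_sub_rev]
    have hMε : M * (ε/(4*M)) = ε/4 := by field_simp
    calc ‖x (n+N) - x n‖
        ≤ M * ∏ k ∈ Finset.Icc (n₀+1) n, (1 - lam k)
          + M * ∑ k ∈ Finset.Icc (n₀+1) n, |lam (k+N) - lam k| := hfin
      _ ≤ M * (ε/(4*M)) + M * (ε/(4*M)) := by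
          gcongr
          exact hprod.trans hexp
      _ ≤ ε / 2 := by rw [hMε]; linarith
  intro ε hε
  refine ⟨fun n hn => (key ε hε n hn).trans (by linarith), ?_⟩
  intro n hn
  have hn1 : θ (γ (ε / 2 / (4 * M)) + max ⌈Real.log (4 * M / (ε / 2))⌉₊ 1) ≤ n :=
    le_trans (le_max_left _ _) hn
  have hn2 : α (ε / (4 * M * N)) ≤ n := le_trans (le_max_right _ _) hn
  have hhalf := key (ε/2) (by linarith) n hn1
  have hNR : (0:ℝ) < (N:ℝ) := by exact_mod_cast hN0
  have hε'' : 0 < ε / (4 * M * N) := by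
    apply div_pos hε
    nlinarith
  have hiter : ∀ k : ℕ, iterComp T n k (x n) ∈ C ∧
      ‖x (n + k) - iterComp T n k (x n)‖ ≤ (k:ℝ) * (ε/(4*M*N) * M) := by
    intro k
    induction k with
    | zero => simp [iterComp, hmem n]
    | succ k ih =>
      obtain ⟨ihC, ihb⟩ := ih
      constructor
      · show T (n + k + 1) (iterComp T n k (x n)) ∈ C
        exact hTmap' _ (by omega) ihC
      · have e1 : x (n + (k+1)) = T (n + k + 1)
            (lam (n+k+1) • u + (1 - lam (n+k+1)) • x (n+k)) := by
          have e : n + (k+1) = (n + k) + 1 := by omega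
          rw [e, hx (n+k)]
        show ‖x (n+(k+1)) - T (n + k + 1) (iterComp T n k (x n))‖ ≤ _
        rw [e1]
        have h2 := hTne' (n+k+1) (by omega) _ (hconv (n+k)) _ ihC
        refine h2.trans ?_
        have veq : (lam (n+k+1) • u + (1 - lam (n+k+1)) • x (n+k)) - iterComp T n k (x n)
            = lam (n+k+1) • (u - x (n+k)) + (x (n+k) - iterComp T n k (x n)) := by
          module
        rw [veq]
        have hl0 : 0 ≤ lam (n+k+1) := hlam0 _ (by omega)
        have hlε : lam (n+k+1) ≤ ε / (4*M*N) := hα _ hε'' (n+k) (by omega)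
        have h4 : ‖u - x (n+k)‖ ≤ M := hdiam u hu _ (hmem _)
        calc ‖lam (n+k+1) • (u - x (n+k)) + (x (n+k) - iterComp T n k (x n))‖
            ≤ ‖lam (n+k+1) • (u - x (n+k))‖ + ‖x (n+k) - iterComp T n k (x n)‖ :=
              norm_add_le _ _
          _ ≤ lam (n+k+1) * M + (k:ℝ) * (ε/(4*M*N) * M) := by
              rw [norm_smul, Real.norm_eq_abs, abs_of_nonneg hl0]
              have h5 : lam (n+k+1) * ‖u - x (n+k)‖ ≤ lam (n+k+1) * M :=
                mul_le_mul_of_nonneg_left h4 hl0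
              linarith
          _ ≤ ((k+1 : ℕ):ℝ) * (ε/(4*M*N) * M) := by
              push_cast
              have h6 : lam (n+k+1) * M ≤ ε/(4*M*N) * M :=
                mul_le_mul_of_nonneg_right hlε hM.le
              linarith
  obtain ⟨-, hb2⟩ := hiter N
  have hNM : (N:ℝ) * (ε/(4*M*N) * M) = ε/4 := by
    field_simp
  rw [hNM] at hb2
  have htri : ‖x n - iterComp T n N (x n)‖
      ≤ ‖x n - x (n+N)‖ + ‖x (n+N) - iterComp T n N (x n)‖ := by
    have e : x n - iterComp T n N (x n)
        = (x n - x (n+N)) + (x (n+N) - iterComp T n N (x n)) := by abel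
    rw [e]; exact norm_add_le _ _
  linarith
end

section
/- Let N ≥ 1, X a real normed space, C ⊆ X a nonempty bounded convex subset with diameter at most M for some M > 0, T_1,…,T_N : C → C nonexpansive mappings extended cyclically by T_n := T_{((n−1) mod N)+1}, λ_n = 1/(n+1) for n ≥ 1, u ∈ C, and let (x_n) be the cyclic Halpern iteration: x_0 = u, x_{n+1} = λ_{n+1}·u + (1 − λ_{n+1})·T_{n+1}x_n. Then for every ε > 0 and every n ≥ Ψ(ε) := 4^(⌈8M(N+1)/ε⌉+2), both ‖x_n − x_{n+N}‖ ≤ ε and ‖x_n − T_{n+N}⋯T_{n+1}x_n‖ ≤ ε. -/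
theorem aux_harmonic_log (n : ℕ) : ∑ k ∈ Finset.range n, (1:ℝ)/((k:ℝ)+2) ≤ Real.log ((n:ℝ)+1) := by
  induction n with
  | zero => simp
  | succ n ih =>
    rw [Finset.sum_range_succ]
    have h1 : Real.log (((n:ℝ)+1)/((n:ℝ)+2)) ≤ ((n:ℝ)+1)/((n:ℝ)+2) - 1 :=
      Real.log_le_sub_one_of_pos (by positivity)
    have h2 : Real.log (((n:ℝ)+1)/((n:ℝ)+2)) = Real.log ((n:ℝ)+1) - Real.log ((n:ℝ)+2) :=
      Real.log_div (by positivity) (by positivity)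
    have h3 : ((n:ℝ)+1)/((n:ℝ)+2) - 1 = -(1/((n:ℝ)+2)) := by field_simp; ring
    have h4 : ((n:ℕ):ℝ) + 1 + 1 = (n:ℝ) + 2 := by ring
    push_cast
    rw [h4]
    linarith

theorem aux_log_sqrt (t : ℝ) (ht : 1 ≤ t) : 1 + Real.log t ≤ 2 * Real.sqrt t := by
  have h0 : (0:ℝ) < Real.sqrt t := Real.sqrt_pos.mpr (by linarith)
  have h1 : Real.log (Real.sqrt t) ≤ Real.sqrt t - 1 := Real.log_le_sub_one_of_pos h0
  have h2 : Real.log (Real.sqrt t) = Real.log t / 2 := Real.log_sqrt (by linarith)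
  linarith


/-- Rate of asymptotic regularity `Ψ(ε) = 4^(⌈8M(N+1)/ε⌉+2)` for the cyclic Halpern
iteration with `λ_n = 1/(n+1)` on a nonempty bounded convex set of diameter at most `M`. -/
theorem stmt_7 {X : Type*} [NormedAddCommGroup X] [NormedSpace ℝ X]
    (N : ℕ) (hN : 1 ≤ N) (C : Set X) (hCne : C.Nonempty) (hC : Convex ℝ C)
    (M : ℝ) (hM : 0 < M) (hdiam : ∀ x ∈ C, ∀ y ∈ C, ‖x - y‖ ≤ M)
    (T : ℕ → X → X)
    (hTmap : ∀ i, 1 ≤ i → i ≤ N → Set.MapsTo (T i) C C)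
    (hTne : ∀ i, 1 ≤ i → i ≤ N → ∀ x ∈ C, ∀ y ∈ C, ‖T i x - T i y‖ ≤ ‖x - y‖)
    (hcyc : ∀ n, 1 ≤ n → T n = T ((n - 1) % N + 1))
    (lam : ℕ → ℝ) (hlam : ∀ n, 1 ≤ n → lam n = 1 / (n + 1))
    (u : X) (hu : u ∈ C) (x : ℕ → X) (hx0 : x 0 = u)
    (hx : ∀ n : ℕ, x (n + 1) = lam (n + 1) • u + (1 - lam (n + 1)) • T (n + 1) (x n)) :
    ∀ ε : ℝ, 0 < ε → ∀ n : ℕ, 4 ^ (⌈8 * M * (N + 1) / ε⌉₊ + 2) ≤ n →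
      ‖x n - x (n + N)‖ ≤ ε ∧ ‖x n - iterComp T n N (x n)‖ ≤ ε := by
  -- generalized mapsTo / nonexpansiveness
  have hTgen : ∀ m, 1 ≤ m → Set.MapsTo (T m) C C ∧
      (∀ p ∈ C, ∀ q ∈ C, ‖T m p - T m q‖ ≤ ‖p - q‖) := by
    intro m hm
    have hi1 : 1 ≤ (m-1) % N + 1 := Nat.le_add_left 1 _
    have hiN : (m-1) % N + 1 ≤ N := Nat.mod_lt _ (by omega)
    rw [hcyc m hm]
    exact ⟨hTmap _ hi1 hiN, hTne _ hi1 hiN⟩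
  -- lam values
  have hlamval : ∀ n : ℕ, lam (n+1) = 1/((n:ℝ)+2) := by
    intro n
    rw [hlam (n+1) (Nat.le_add_left 1 n)]
    congr 1
    push_cast
    ring
  -- x stays in C
  have hxC : ∀ n, x n ∈ C := by
    intro n
    induction n with
    | zero => rw [hx0]; exact hu
    | succ n ih =>
      rw [hx n, hlamval n]
      have h1 : (0:ℝ) ≤ 1/((n:ℝ)+2) := by positivity
      have h2 : (1:ℝ)/((n:ℝ)+2) ≤ 1 := by
        rw [div_le_one (by positivity)]; linarith
      exact hC hu ((hTgen (n+1) (Nat.le_add_left 1 n)).1 ih) h1 (by linarith) (by ring)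
  -- periodicity
  have hper : ∀ n : ℕ, T (n+N+1) = T (n+1) := by
    intro n
    rw [hcyc (n+N+1) (by omega), hcyc (n+1) (by omega)]
    congr 2
    simp [Nat.add_sub_cancel, Nat.add_mod_right]
  set a : ℕ → ℝ := fun n => ‖x (n+N) - x n‖ with ha_def
  have ha0 : a 0 ≤ M := by
    show ‖x (0+N) - x 0‖ ≤ M
    rw [Nat.zero_add]
    exact hdiam _ (hxC N) _ (hxC 0)
  -- recursion
  have hrec : ∀ n : ℕ, ((n:ℝ)+N+2) * a (n+1) ≤ ((n:ℝ)+N+1) * a n + N*M/((n:ℝ)+2) := by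
    intro n
    set l1 : ℝ := 1/((n:ℝ)+2) with hl1d
    set l2 : ℝ := 1/((n:ℝ)+N+2) with hl2d
    have hl1 : lam (n+1) = l1 := hlamval n
    have hl2 : lam (n+N+1) = l2 := by
      rw [hlamval (n+N)]; push_cast; rw [hl2d]
    have hx1 : x (n+1) = l1 • u + (1-l1) • T (n+1) (x n) := by
      rw [hx n, hl1]
    have hxN1 : x (n+N+1) = l2 • u + (1-l2) • T (n+1) (x (n+N)) := by
      rw [hx (n+N), hl2, hper n]
    have hdiff : x (n+N+1) - x (n+1) =
        (l1-l2) • (T (n+1) (x n) - u) + (1-l2) • (T (n+1) (x (n+N)) - T (n+1) (x n)) := by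
      rw [hxN1, hx1]; module
    have hTC := (hTgen (n+1) (Nat.le_add_left 1 n)).1
    have hb1 : ‖T (n+1) (x n) - u‖ ≤ M := hdiam _ (hTC (hxC n)) _ hu
    have hb2 : ‖T (n+1) (x (n+N)) - T (n+1) (x n)‖ ≤ a n :=
      (hTgen (n+1) (Nat.le_add_left 1 n)).2 _ (hxC (n+N)) _ (hxC n)
    have hl12 : 0 ≤ l1 - l2 := by
      rw [hl1d, hl2d, sub_nonneg]
      apply div_le_div_of_nonneg_left (by norm_num) (by positivity)
      have : (0:ℝ) ≤ (N:ℝ) := Nat.cast_nonneg N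
      linarith
    have hl2le : 0 ≤ 1 - l2 := by
      rw [hl2d, sub_nonneg, div_le_one (by positivity)]
      have : (0:ℝ) ≤ (N:ℝ) := Nat.cast_nonneg N
      linarith
    have han1 : a (n+1) ≤ (l1-l2)*M + (1-l2)*(a n) := by
      have hidx : n+1+N = n+N+1 := by omega
      have : a (n+1) = ‖x (n+N+1) - x (n+1)‖ := by
        simp only [ha_def, hidx]
      rw [this, hdiff]
      calc ‖(l1-l2) • (T (n+1) (x n) - u) + (1-l2) • (T (n+1) (x (n+N)) - T (n+1) (x n))‖
          ≤ ‖(l1-l2) • (T (n+1) (x n) - u)‖ + ‖(1-l2) • (T (n+1) (x (n+N)) - T (n+1) (x n))‖ :=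
            norm_add_le _ _
        _ = (l1-l2) * ‖T (n+1) (x n) - u‖ + (1-l2) * ‖T (n+1) (x (n+N)) - T (n+1) (x n)‖ := by
            rw [norm_smul, norm_smul, Real.norm_eq_abs, Real.norm_eq_abs,
              abs_of_nonneg hl12, abs_of_nonneg hl2le]
        _ ≤ (l1-l2)*M + (1-l2)*(a n) := by
            gcongr
    have he1 : ((n:ℝ)+N+2) * (1-l2) = (n:ℝ)+N+1 := by
      rw [hl2d]; field_simp; ring
    have he2 : ((n:ℝ)+N+2) * (l1-l2) = (N:ℝ)/((n:ℝ)+2) := by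
      rw [hl1d, hl2d]; field_simp; ring
    have hnn : (0:ℝ) ≤ (n:ℝ)+N+2 := by positivity
    calc ((n:ℝ)+N+2) * a (n+1) ≤ ((n:ℝ)+N+2) * ((l1-l2)*M + (1-l2)*(a n)) := by
          exact mul_le_mul_of_nonneg_left han1 hnn
      _ = ((n:ℝ)+N+2) * (l1-l2) * M + ((n:ℝ)+N+2) * (1-l2) * a n := by ring
      _ = (N:ℝ)/((n:ℝ)+2) * M + ((n:ℝ)+N+1) * a n := by rw [he1, he2]
      _ = ((n:ℝ)+N+1) * a n + N*M/((n:ℝ)+2) := by ring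
  -- key inductive bound
  have key : ∀ n : ℕ, ((n:ℝ)+N+1) * a n ≤ ((N:ℝ)+1)*M + N*M*(∑ k ∈ Finset.range n, 1/((k:ℝ)+2)) := by
    intro n
    induction n with
    | zero =>
      simp only [Nat.cast_zero, zero_add, Finset.range_zero, Finset.sum_empty, mul_zero, add_zero]
      have hanonneg : 0 ≤ a 0 := norm_nonneg _
      nlinarith
    | succ n ih =>
      have h1 := hrec n
      have hNM : 0 ≤ (N:ℝ)*M := by positivity
      have h2 : (N:ℝ)*M/((n:ℝ)+2) = N*M*(1/((n:ℝ)+2)) := by ring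
      rw [Finset.sum_range_succ]
      push_cast
      have h3 : ((n:ℝ)+1)+N+1 = (n:ℝ)+N+2 := by ring
      rw [h3]
      calc ((n:ℝ)+N+2) * a (n+1) ≤ ((n:ℝ)+N+1) * a n + N*M/((n:ℝ)+2) := h1
        _ ≤ ((N:ℝ)+1)*M + N*M*(∑ k ∈ Finset.range n, 1/((k:ℝ)+2)) + N*M*(1/((n:ℝ)+2)) := by
            rw [h2] at *; linarith
        _ = ((N:ℝ)+1)*M + N*M*((∑ k ∈ Finset.range n, 1/((k:ℝ)+2)) + 1/((n:ℝ)+2)) := by ring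
  -- log bound
  have hbound : ∀ n : ℕ, ((n:ℝ)+1) * a n ≤ M*((N:ℝ)+1)*(1+Real.log ((n:ℝ)+1)) := by
    intro n
    have h1 := key n
    have h2 := aux_harmonic_log n
    have hlog : 0 ≤ Real.log ((n:ℝ)+1) := Real.log_nonneg (by push_cast; linarith [Nat.cast_nonneg (α := ℝ) n])
    have hanonneg : 0 ≤ a n := norm_nonneg _
    have hNr : (0:ℝ) ≤ N := Nat.cast_nonneg N
    nlinarith [mul_le_mul_of_nonneg_left h2 (mul_nonneg hNr hM.le), mul_nonneg hM.le hlog,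
      mul_nonneg hNr hanonneg]
  -- iterate approximation
  have hiter : ∀ n k : ℕ, iterComp T n k (x n) ∈ C ∧
      ‖x (n+k) - iterComp T n k (x n)‖ ≤ (k:ℝ)*M/((n:ℝ)+2) := by
    intro n k
    induction k with
    | zero =>
      constructor
      · exact hxC n
      · simp [iterComp]
    | succ k ih =>
      have hstep : iterComp T n (k+1) (x n) = T (n+k+1) (iterComp T n k (x n)) := rfl
      have hmem : T (n+k+1) (iterComp T n k (x n)) ∈ C :=
        (hTgen (n+k+1) (Nat.le_add_left 1 _)).1 ih.1
      refine ⟨by rw [hstep]; exact hmem, ?_⟩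
      have hl : lam (n+k+1) = 1/((n:ℝ)+k+2) := by
        rw [hlamval (n+k)]; push_cast; ring_nf
      have hxe : x (n+k+1) = (1/((n:ℝ)+k+2)) • u + (1-1/((n:ℝ)+k+2)) • T (n+k+1) (x (n+k)) := by
        rw [hx (n+k), hl]
      set l : ℝ := 1/((n:ℝ)+k+2) with hld
      have hdiff : x (n+k+1) - T (n+k+1) (iterComp T n k (x n)) =
          l • (u - T (n+k+1) (iterComp T n k (x n))) +
          (1-l) • (T (n+k+1) (x (n+k)) - T (n+k+1) (iterComp T n k (x n))) := by
        rw [hxe]; module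
      have hl0 : (0:ℝ) ≤ l := by rw [hld]; positivity
      have hl1 : l ≤ 1 := by
        rw [hld, div_le_one (by positivity)]
        have : (0:ℝ) ≤ (k:ℝ) := Nat.cast_nonneg k
        linarith [Nat.cast_nonneg (α := ℝ) n]
      have hb1 : ‖u - T (n+k+1) (iterComp T n k (x n))‖ ≤ M := hdiam _ hu _ hmem
      have hb2 : ‖T (n+k+1) (x (n+k)) - T (n+k+1) (iterComp T n k (x n))‖ ≤
          ‖x (n+k) - iterComp T n k (x n)‖ :=
        (hTgen (n+k+1) (Nat.le_add_left 1 _)).2 _ (hxC (n+k)) _ ih.1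
      have hidx : n+(k+1) = (n+k)+1 := by omega
      have hml : l * M ≤ M/((n:ℝ)+2) := by
        rw [hld]
        rw [div_mul_eq_mul_div, one_mul]
        apply div_le_div_of_nonneg_left (le_of_lt hM) (by positivity) ?_ |>.trans_eq rfl
        linarith [Nat.cast_nonneg (α := ℝ) k]
      calc ‖x (n+(k+1)) - iterComp T n (k+1) (x n)‖
          = ‖x ((n+k)+1) - T (n+k+1) (iterComp T n k (x n))‖ := by rw [hidx, hstep]
        _ ≤ ‖l • (u - T (n+k+1) (iterComp T n k (x n)))‖ +
            ‖(1-l) • (T (n+k+1) (x (n+k)) - T (n+k+1) (iterComp T n k (x n)))‖ := by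
            rw [hdiff]; exact norm_add_le _ _
        _ = l * ‖u - T (n+k+1) (iterComp T n k (x n))‖ +
            (1-l) * ‖T (n+k+1) (x (n+k)) - T (n+k+1) (iterComp T n k (x n))‖ := by
            rw [norm_smul, norm_smul, Real.norm_eq_abs, Real.norm_eq_abs,
              abs_of_nonneg hl0, abs_of_nonneg (by linarith)]
        _ ≤ l * M + (1-l) * ‖x (n+k) - iterComp T n k (x n)‖ :=
            add_le_add (mul_le_mul_of_nonneg_left hb1 hl0)
              (mul_le_mul_of_nonneg_left hb2 (by linarith))
        _ ≤ M/((n:ℝ)+2) + (k:ℝ)*M/((n:ℝ)+2) := by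
            have h9 : (1-l) * ‖x (n+k) - iterComp T n k (x n)‖ ≤
                1 * ‖x (n+k) - iterComp T n k (x n)‖ :=
              mul_le_mul_of_nonneg_right (by linarith) (norm_nonneg _)
            rw [one_mul] at h9
            exact add_le_add hml (h9.trans ih.2)
        _ = ((k:ℝ)+1)*M/((n:ℝ)+2) := by ring
        _ = (((k+1:ℕ)):ℝ)*M/((n:ℝ)+2) := by push_cast; ring
  -- final
  intro ε hε n hn
  set K : ℕ := ⌈8 * M * ((N:ℝ) + 1) / ε⌉₊ with hKd
  have hK : 8 * M * ((N:ℝ)+1) ≤ K * ε := by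
    have h := Nat.le_ceil (8 * M * ((N:ℝ) + 1) / ε)
    rw [div_le_iff₀ hε] at h
    exact h
  have hnR : ((4:ℝ))^(K+2) ≤ (n:ℝ) := by exact_mod_cast hn
  set t : ℝ := (n:ℝ) + 1 with htd
  have ht1 : (1:ℝ) ≤ t := by rw [htd]; linarith [Nat.cast_nonneg (α := ℝ) n]
  have ht0 : (0:ℝ) < t := by linarith
  have h4eq : ((4:ℝ))^(K+2) = ((2:ℝ)^(K+2))^2 := by
    rw [← pow_mul, mul_comm]
    norm_num [pow_mul]
  have hsqrt : (2:ℝ)^(K+2) ≤ Real.sqrt t := by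
    have h1 : ((2:ℝ)^(K+2))^2 ≤ t := by rw [← h4eq]; linarith
    have h2 := Real.sqrt_le_sqrt h1
    rwa [Real.sqrt_sq (by positivity)] at h2
  have hKle : (K:ℝ) ≤ (2:ℝ)^(K+2) := by
    have h1 : K < 2^K := Nat.lt_two_pow_self
    have h2 : (2:ℕ)^K ≤ 2^(K+2) := Nat.pow_le_pow_right (by norm_num) (by omega)
    exact_mod_cast (h1.le.trans h2)
  have hsq : Real.sqrt t * Real.sqrt t = t := Real.mul_self_sqrt (le_of_lt ht0)
  have hs0 : (0:ℝ) < Real.sqrt t := Real.sqrt_pos.mpr ht0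
  have hKsq : (K:ℝ) ≤ Real.sqrt t := hKle.trans hsqrt
  -- a n ≤ ε/4
  have hAn : a n ≤ ε/4 := by
    have h1 := hbound n
    have h2 := aux_log_sqrt t ht1
    have h3 : t * a n ≤ M*((N:ℝ)+1)*(2*Real.sqrt t) := by
      rw [htd] at *
      calc ((n:ℝ)+1) * a n ≤ M*((N:ℝ)+1)*(1+Real.log ((n:ℝ)+1)) := h1
        _ ≤ M*((N:ℝ)+1)*(2*Real.sqrt ((n:ℝ)+1)) := by
            apply mul_le_mul_of_nonneg_left _ (by positivity)
            exact h2
    -- M(N+1) ≤ Kε/8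
    have h4 : M*((N:ℝ)+1) ≤ (K:ℝ)*ε/8 := by linarith
    have h5 : t * a n ≤ ((K:ℝ)*ε/8) * (2*Real.sqrt t) := by
      have := mul_le_mul_of_nonneg_right h4 (by positivity : (0:ℝ) ≤ 2*Real.sqrt t)
      exact h3.trans this
    -- K ≤ √t : so (Kε/8)(2√t) ≤ (√t ε/8)(2√t) = εt/4
    have h6 : ((K:ℝ)*ε/8) * (2*Real.sqrt t) ≤ t * (ε/4) := by
      have := mul_le_mul_of_nonneg_right hKsq (by positivity : (0:ℝ) ≤ ε/4*Real.sqrt t)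
      nlinarith
    have h7 : t * a n ≤ t * (ε/4) := le_trans h5 h6
    exact le_of_mul_le_mul_left (by linarith) ht0
  have hfirst : ‖x n - x (n+N)‖ ≤ ε/4 := by
    rw [norm_sub_rev]; exact hAn
  -- N*M/(n+2) ≤ ε/8
  have hNM : (N:ℝ)*M/((n:ℝ)+2) ≤ ε/8 := by
    have h1 : (N:ℝ)*M ≤ (K:ℝ)*ε/8 := by linarith
    have h2 : (K:ℝ) ≤ (n:ℝ)+2 := by
      have : (2:ℝ)^(K+2) ≤ (4:ℝ)^(K+2) := by
        apply pow_le_pow_left₀ (by norm_num) (by norm_num)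
      linarith
    rw [div_le_iff₀ (by positivity)]
    calc (N:ℝ)*M ≤ (K:ℝ)*ε/8 := h1
      _ ≤ ((n:ℝ)+2)*ε/8 := by
          apply div_le_div_of_nonneg_right _ (by norm_num)
          exact mul_le_mul_of_nonneg_right h2 (le_of_lt hε)
      _ = ε/8*((n:ℝ)+2) := by ring
  constructor
  · linarith
  · have h1 : ‖x n - iterComp T n N (x n)‖ ≤ ‖x n - x (n+N)‖ + ‖x (n+N) - iterComp T n N (x n)‖ := by
      have := norm_sub_le_norm_sub_add_norm_sub (x n) (x (n+N)) (iterComp T n N (x n))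
      exact this
    have h2 := (hiter n N).2
    linarith
end

section
/- Let N ≥ 1, X a real normed space, C ⊆ X a nonempty bounded convex subset with diameter at most M for some M > 0, T_1,…,T_N : C → C nonexpansive mappings extended cyclically by T_n := T_{((n−1) mod N)+1}, λ_n = 1/(n+1) for n ≥ 1, u ∈ C, and let (x_n) be the iteration x_0 = u, x_{n+1} = T_{n+1}(λ_{n+1}·u + (1 − λ_{n+1})·x_n). Then for every ε > 0 and every n ≥ Ψ(ε) := 4^(⌈8M(N+1)/ε⌉+2), both ‖x_n − x_{n+N}‖ ≤ ε and ‖x_n − T_{n+N}⋯T_{n+1}x_n‖ ≤ ε. -/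
set_option maxHeartbeats 1000000 in
/-- Rate of asymptotic regularity `Ψ(ε) = 4^(⌈8M(N+1)/ε⌉+2)` for the cyclic
iteration with `λ_n = 1/(n+1)` on a nonempty bounded convex set of diameter at most `M`. -/
theorem stmt_8 {X : Type*} [NormedAddCommGroup X] [NormedSpace ℝ X]
    (N : ℕ) (hN : 1 ≤ N) (C : Set X) (hCne : C.Nonempty) (hC : Convex ℝ C)
    (M : ℝ) (hM : 0 < M) (hdiam : ∀ x ∈ C, ∀ y ∈ C, ‖x - y‖ ≤ M)
    (T : ℕ → X → X)
    (hTmap : ∀ i, 1 ≤ i → i ≤ N → Set.MapsTo (T i) C C)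
    (hTne : ∀ i, 1 ≤ i → i ≤ N → ∀ x ∈ C, ∀ y ∈ C, ‖T i x - T i y‖ ≤ ‖x - y‖)
    (hcyc : ∀ n, 1 ≤ n → T n = T ((n - 1) % N + 1))
    (lam : ℕ → ℝ) (hlam : ∀ n, 1 ≤ n → lam n = 1 / (n + 1))
    (u : X) (hu : u ∈ C) (x : ℕ → X) (hx0 : x 0 = u)
    (hx : ∀ n : ℕ, x (n + 1) = T (n + 1) (lam (n + 1) • u + (1 - lam (n + 1)) • x n)) :
    ∀ ε : ℝ, 0 < ε → ∀ n : ℕ, 4 ^ (⌈8 * M * (N + 1) / ε⌉₊ + 2) ≤ n →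
      ‖x n - x (n + N)‖ ≤ ε ∧ ‖x n - iterComp T n N (x n)‖ ≤ ε := by
  -- basic properties of T (m+1) for every m
  have hT1 : ∀ m : ℕ, Set.MapsTo (T (m+1)) C C ∧
      ∀ a ∈ C, ∀ b ∈ C, ‖T (m+1) a - T (m+1) b‖ ≤ ‖a - b‖ := by
    intro m
    have h1 : (1:ℕ) ≤ m % N + 1 := by omega
    have h2 : m % N + 1 ≤ N := by
      have := Nat.mod_lt m (show 0 < N by omega); omega
    have hc := hcyc (m+1) (by omega)
    simp only [Nat.add_sub_cancel] at hc
    rw [hc]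
    exact ⟨hTmap _ h1 h2, hTne _ h1 h2⟩
  -- cyclicity
  have hTcyc : ∀ m : ℕ, T (m+N+1) = T (m+1) := by
    intro m
    have hc1 := hcyc (m+N+1) (by omega)
    have hc2 := hcyc (m+1) (by omega)
    simp only [Nat.add_sub_cancel] at hc1 hc2
    rw [hc1, hc2, Nat.add_mod_right]
  -- lambda values
  have hlam' : ∀ m : ℕ, lam (m+1) = 1/((m:ℝ)+2) := by
    intro m
    rw [hlam (m+1) (by omega)]
    push_cast; ring
  have hlam0 : ∀ m : ℕ, 0 ≤ lam (m+1) := by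
    intro m; rw [hlam' m]; positivity
  have hlam1 : ∀ m : ℕ, lam (m+1) ≤ 1 := by
    intro m; rw [hlam' m]
    rw [div_le_one (by positivity)]; linarith [Nat.cast_nonneg (α := ℝ) m]
  have hcomb : ∀ (a : ℝ) (p q : X), p ∈ C → q ∈ C → 0 ≤ a → a ≤ 1 →
      a • p + (1-a) • q ∈ C := fun a p q hp hq h0 h1 =>
    hC hp hq h0 (by linarith) (by ring)
  -- the iterates stay in C
  have hxC : ∀ k : ℕ, x k ∈ C := by
    intro k; induction k with
    | zero => rw [hx0]; exact hu
    | succ k ih =>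
      rw [hx k]
      exact (hT1 k).1 (hcomb _ _ _ hu ih (hlam0 k) (hlam1 k))
  -- one-step inequality for d_n = ‖x (n+N) - x n‖
  have hstep0 : ∀ m : ℕ, ‖x (m+N+1) - x (m+1)‖ ≤
      (1 - 1/((m:ℝ)+(N:ℝ)+2)) * ‖x (m+N) - x m‖ + (1/((m:ℝ)+2) - 1/((m:ℝ)+(N:ℝ)+2)) * M := by
    intro m
    have e1 : x (m+N+1) = T (m+1) (lam (m+N+1) • u + (1 - lam (m+N+1)) • x (m+N)) := by
      rw [hx (m+N), hTcyc m]
    have e2 : x (m+1) = T (m+1) (lam (m+1) • u + (1 - lam (m+1)) • x m) := hx m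
    have hp : lam (m+N+1) • u + (1 - lam (m+N+1)) • x (m+N) ∈ C :=
      hcomb _ _ _ hu (hxC (m+N)) (hlam0 (m+N)) (hlam1 (m+N))
    have hq : lam (m+1) • u + (1 - lam (m+1)) • x m ∈ C :=
      hcomb _ _ _ hu (hxC m) (hlam0 m) (hlam1 m)
    have hne := (hT1 m).2 _ hp _ hq
    rw [e1, e2]
    refine le_trans hne ?_
    have hdiff : (lam (m+N+1) • u + (1 - lam (m+N+1)) • x (m+N))
        - (lam (m+1) • u + (1 - lam (m+1)) • x m)
        = (1 - lam (m+N+1)) • (x (m+N) - x m) + (lam (m+1) - lam (m+N+1)) • (x m - u) := by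
      module
    rw [hdiff]
    have hl2 : lam (m+N+1) = 1/((m:ℝ)+(N:ℝ)+2) := by
      have := hlam' (m+N); rw [this]; push_cast; ring_nf
    have hl1 : lam (m+1) = 1/((m:ℝ)+2) := hlam' m
    have h1 : ‖(1 - lam (m+N+1)) • (x (m+N) - x m) + (lam (m+1) - lam (m+N+1)) • (x m - u)‖
        ≤ ‖(1 - lam (m+N+1)) • (x (m+N) - x m)‖ + ‖(lam (m+1) - lam (m+N+1)) • (x m - u)‖ :=
      norm_add_le _ _
    refine le_trans h1 ?_
    rw [norm_smul, norm_smul]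
    have hN0 : (0:ℝ) ≤ N := Nat.cast_nonneg N
    have hm0 : (0:ℝ) ≤ m := Nat.cast_nonneg m
    have ha : 0 ≤ 1 - lam (m+N+1) := by
      rw [hl2]; rw [sub_nonneg, div_le_one (by linarith)]; linarith
    have hb : 0 ≤ lam (m+1) - lam (m+N+1) := by
      rw [hl1, hl2, sub_nonneg]
      apply div_le_div_of_nonneg_left (by norm_num) (by linarith) (by linarith)
    rw [Real.norm_of_nonneg ha, Real.norm_of_nonneg hb, hl1, hl2]
    have hxu : ‖x m - u‖ ≤ M := hdiam _ (hxC m) _ hu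
    have hbb : (0:ℝ) ≤ 1/((m:ℝ)+2) - 1/((m:ℝ)+(N:ℝ)+2) := by
      rw [hl1, hl2] at hb; exact hb
    nlinarith [norm_nonneg (x (m+N) - x m)]
  -- multiplied form
  have hstep : ∀ m : ℕ, ((m:ℝ)+(N:ℝ)+2) * ‖x (m+N+1) - x (m+1)‖ ≤
      ((m:ℝ)+(N:ℝ)+1) * ‖x (m+N) - x m‖ + (N:ℝ)*M/((m:ℝ)+2) := by
    intro m
    have hN0 : (0:ℝ) ≤ N := Nat.cast_nonneg N
    have hm0 : (0:ℝ) ≤ m := Nat.cast_nonneg m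
    have h0 := hstep0 m
    have hpos : (0:ℝ) < (m:ℝ)+(N:ℝ)+2 := by linarith
    have h1 : ((m:ℝ)+(N:ℝ)+2) * ‖x (m+N+1) - x (m+1)‖ ≤
        ((m:ℝ)+(N:ℝ)+2) * ((1 - 1/((m:ℝ)+(N:ℝ)+2)) * ‖x (m+N) - x m‖
          + (1/((m:ℝ)+2) - 1/((m:ℝ)+(N:ℝ)+2)) * M) :=
      mul_le_mul_of_nonneg_left h0 (le_of_lt hpos)
    refine le_trans h1 (le_of_eq ?_)
    field_simp
    ring
  -- main estimate by induction
  have hmain : ∀ m : ℕ, ((m:ℝ)+(N:ℝ)+1) * ‖x (m+N) - x m‖ ≤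
      M*((N:ℝ)+1)*(1 + Real.log ((m:ℝ)+1)) := by
    intro m
    induction m with
    | zero =>
      simp only [Nat.cast_zero, zero_add, Real.log_one, add_zero]
      have := hdiam _ (hxC (0+N)) _ (hxC 0)
      simp only [Nat.zero_add] at this
      have hN0 : (0:ℝ) ≤ N := Nat.cast_nonneg N
      have h0 : (0:ℝ) ≤ ‖x (0+N) - x 0‖ := norm_nonneg _
      nlinarith
    | succ m ih =>
      have hN0 : (0:ℝ) ≤ N := Nat.cast_nonneg N
      have hm0 : (0:ℝ) ≤ m := Nat.cast_nonneg m
      have hs := hstep m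
      have hlog : 1/((m:ℝ)+2) ≤ Real.log ((m:ℝ)+2) - Real.log ((m:ℝ)+1) := by
        have h := Real.log_le_sub_one_of_pos
          (show (0:ℝ) < ((m:ℝ)+1)/((m:ℝ)+2) by positivity)
        rw [Real.log_div (by positivity) (by positivity)] at h
        have heq : ((m:ℝ)+1)/((m:ℝ)+2) - 1 = -(1/((m:ℝ)+2)) := by
          field_simp
          ring
        rw [heq] at h
        linarith
      have hcast1 : ((m+1:ℕ):ℝ) = (m:ℝ)+1 := by push_cast; ring
      have hidx : m+1+N = m+N+1 := by omega
      rw [hcast1, hidx]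
      have hgoal : ((m:ℝ)+1+(N:ℝ)+1) * ‖x (m+N+1) - x (m+1)‖
          = ((m:ℝ)+(N:ℝ)+2) * ‖x (m+N+1) - x (m+1)‖ := by ring_nf
      rw [hgoal]
      refine le_trans hs ?_
      have hlog1 : 0 ≤ Real.log ((m:ℝ)+1) := Real.log_nonneg (by linarith)
      have key : (N:ℝ)*M/((m:ℝ)+2) ≤ M*((N:ℝ)+1)*(Real.log ((m:ℝ)+2) - Real.log ((m:ℝ)+1)) := by
        have h1 : (N:ℝ)*M/((m:ℝ)+2) ≤ M*((N:ℝ)+1)*(1/((m:ℝ)+2)) := by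
          rw [div_le_iff₀ (by linarith)]
          have : M*((N:ℝ)+1)*(1/((m:ℝ)+2))*((m:ℝ)+2) = M*((N:ℝ)+1) := by
            field_simp
          rw [this]
          nlinarith
        refine le_trans h1 ?_
        have hMN1 : 0 ≤ M*((N:ℝ)+1) := by positivity
        exact mul_le_mul_of_nonneg_left hlog hMN1
      have : ((m:ℝ)+(N:ℝ)+1) * ‖x (m+N) - x m‖ + (N:ℝ)*M/((m:ℝ)+2)
          ≤ M*((N:ℝ)+1)*(1 + Real.log ((m:ℝ)+1)) +
            M*((N:ℝ)+1)*(Real.log ((m:ℝ)+2) - Real.log ((m:ℝ)+1)) := by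
        linarith
      refine le_trans this (le_of_eq ?_)
      have : (m:ℝ)+1+1 = (m:ℝ)+2 := by ring
      rw [this]; ring
  -- iterComp stays in C
  have hiterC : ∀ (m k : ℕ) (z : X), z ∈ C → iterComp T m k z ∈ C := by
    intro m k
    induction k with
    | zero => intro z hz; exact hz
    | succ k ih =>
      intro z hz
      show T (m+k+1) (iterComp T m k z) ∈ C
      exact (hT1 (m+k)).1 (ih z hz)
  -- approximation of the iteration by the pure composition
  have happrox : ∀ m k : ℕ, ‖x (m+k) - iterComp T m k (x m)‖ ≤ M * (k:ℝ) / ((m:ℝ)+2) := by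
    intro m k
    induction k with
    | zero => simp [iterComp]
    | succ k ih =>
      have hm0 : (0:ℝ) ≤ m := Nat.cast_nonneg m
      have hk0 : (0:ℝ) ≤ k := Nat.cast_nonneg k
      show ‖x (m+k+1) - T (m+k+1) (iterComp T m k (x m))‖ ≤ _
      rw [hx (m+k)]
      have hp : lam (m+k+1) • u + (1 - lam (m+k+1)) • x (m+k) ∈ C :=
        hcomb _ _ _ hu (hxC (m+k)) (hlam0 (m+k)) (hlam1 (m+k))
      have hq : iterComp T m k (x m) ∈ C := hiterC m k _ (hxC m)
      have hne := (hT1 (m+k)).2 _ hp _ hq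
      refine le_trans hne ?_
      have hdiff : (lam (m+k+1) • u + (1 - lam (m+k+1)) • x (m+k)) - iterComp T m k (x m)
          = lam (m+k+1) • (u - x (m+k)) + (x (m+k) - iterComp T m k (x m)) := by
        module
      rw [hdiff]
      refine le_trans (norm_add_le _ _) ?_
      rw [norm_smul, Real.norm_of_nonneg (hlam0 (m+k))]
      have hl : lam (m+k+1) = 1/((m:ℝ)+(k:ℝ)+2) := by
        have := hlam' (m+k); rw [this]; push_cast; ring_nf
      have hux : ‖u - x (m+k)‖ ≤ M := hdiam _ hu _ (hxC (m+k))
      have h1 : lam (m+k+1) * ‖u - x (m+k)‖ ≤ M / ((m:ℝ)+2) := by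
        rw [hl]
        have h2 : (1:ℝ)/((m:ℝ)+(k:ℝ)+2) ≤ 1/((m:ℝ)+2) :=
          div_le_div_of_nonneg_left (by norm_num) (by linarith) (by linarith)
        calc 1/((m:ℝ)+(k:ℝ)+2) * ‖u - x (m+k)‖ ≤ 1/((m:ℝ)+2) * M := by
              apply mul_le_mul h2 hux (norm_nonneg _) (by positivity)
          _ = M / ((m:ℝ)+2) := by ring
      have hcast : ((k+1:ℕ):ℝ) = (k:ℝ)+1 := by push_cast; ring
      rw [hcast]
      have : M * ((k:ℝ)+1) / ((m:ℝ)+2) = M / ((m:ℝ)+2) + M * (k:ℝ) / ((m:ℝ)+2) := by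
        ring
      rw [this]
      linarith
  -- final epsilon chase
  intro ε hε n hn
  set K := ⌈8 * M * ((N:ℝ) + 1) / ε⌉₊ with hK
  have hMN : (0:ℝ) < M*((N:ℝ)+1) := by positivity
  have hN0 : (0:ℝ) ≤ N := Nat.cast_nonneg N
  have ht4 : (4:ℝ)^(K+2) ≤ (n:ℝ) := by
    calc (4:ℝ)^(K+2) = ((4^(K+2) : ℕ) : ℝ) := by push_cast; ring
      _ ≤ (n:ℝ) := by exact_mod_cast hn
  have ht1 : (1:ℝ) ≤ (n:ℝ) := by
    refine le_trans ?_ ht4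
    exact one_le_pow₀ (by norm_num)
  set t : ℝ := (n:ℝ) + 1 with htdef
  have htpos : (0:ℝ) < t := by simp only [htdef]; linarith
  have ht4' : (4:ℝ)^(K+2) ≤ t := by simp only [htdef]; linarith
  have ht1' : (1:ℝ) ≤ t := by simp only [htdef]; linarith
  have hlogt : 0 ≤ Real.log t := Real.log_nonneg ht1'
  -- sqrt bound
  have hsq : ((2:ℝ)^(K+2))^2 = (4:ℝ)^(K+2) := by
    rw [← pow_mul, pow_mul']
    norm_num
  have hsqrt : (2:ℝ)^(K+2) ≤ Real.sqrt t := by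
    have := Real.sqrt_le_sqrt ht4'
    calc (2:ℝ)^(K+2) = Real.sqrt (((2:ℝ)^(K+2))^2) := (Real.sqrt_sq (by positivity)).symm
      _ = Real.sqrt ((4:ℝ)^(K+2)) := by rw [hsq]
      _ ≤ Real.sqrt t := this
  have hsp : (0:ℝ) < Real.sqrt t := lt_of_lt_of_le (by positivity) hsqrt
  have htt : Real.sqrt t * Real.sqrt t = t := Real.mul_self_sqrt (le_of_lt htpos)
  -- log t ≤ 2 sqrt t - 2
  have hlogle : Real.log t ≤ 2 * Real.sqrt t - 2 := by
    have h := Real.log_le_sub_one_of_pos hsp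
    rw [Real.log_sqrt (le_of_lt htpos)] at h
    linarith
  -- main numeric bound
  have hbound : M*((N:ℝ)+1)*(2 + Real.log t)/t ≤ ε := by
    have h1 : 2 + Real.log t ≤ 2 * Real.sqrt t := by linarith
    have h2 : M*((N:ℝ)+1)*(2 + Real.log t)/t ≤ 2*(M*((N:ℝ)+1))/Real.sqrt t := by
      rw [div_le_div_iff₀ htpos hsp]
      nlinarith [mul_le_mul_of_nonneg_left h1 (le_of_lt hMN)]
    have h3 : 2*(M*((N:ℝ)+1))/Real.sqrt t ≤ 2*(M*((N:ℝ)+1))/(2:ℝ)^(K+2) := by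
      gcongr
    have h4 : 2*(M*((N:ℝ)+1))/(2:ℝ)^(K+2) ≤ ε := by
      rw [div_le_iff₀ (by positivity)]
      have hK1 : 8 * M * ((N:ℝ) + 1) / ε ≤ (K:ℝ) := Nat.le_ceil _
      have hK2 : 8 * M * ((N:ℝ) + 1) ≤ ε * (K:ℝ) := by
        rw [div_le_iff₀ hε] at hK1; linarith
      have hK3 : (K:ℝ) + 1 ≤ (2:ℝ)^(K+1) := by
        have := Nat.lt_two_pow_self (n := K+1)
        calc (K:ℝ) + 1 = ((K+1:ℕ):ℝ) := by push_cast; ring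
          _ ≤ ((2^(K+1) : ℕ):ℝ) := by exact_mod_cast le_of_lt this
          _ = (2:ℝ)^(K+1) := by push_cast; ring
      have hK4 : ε * ((K:ℝ)+1) ≤ ε * (2:ℝ)^(K+1) := by
        exact mul_le_mul_of_nonneg_left hK3 (le_of_lt hε)
      have h5 : (2:ℝ)^(K+2) = 2 * (2:ℝ)^(K+1) := by ring
      have hK5 : ε*(K:ℝ) ≤ ε*((K:ℝ)+1) := by
        have := Nat.cast_nonneg (α := ℝ) K
        nlinarith
      have hp0 : (0:ℝ) ≤ ε * (2:ℝ)^(K+1) := by positivity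
      rw [h5]
      linarith
    linarith
  -- bound for the first quantity
  have hd : ‖x n - x (n+N)‖ ≤ M*((N:ℝ)+1)*(1 + Real.log t)/t := by
    rw [norm_sub_rev]
    have hm := hmain n
    have hden : (0:ℝ) < (n:ℝ)+(N:ℝ)+1 := by linarith
    have hd1 : ‖x (n+N) - x n‖ ≤ M*((N:ℝ)+1)*(1 + Real.log ((n:ℝ)+1))/((n:ℝ)+(N:ℝ)+1) := by
      rw [le_div_iff₀ hden]
      linarith [hm]
    refine le_trans hd1 ?_
    apply div_le_div_of_nonneg_left ?_ htpos ?_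
    · positivity
    · simp only [htdef]; linarith
  have hd' : ‖x n - x (n+N)‖ ≤ M*((N:ℝ)+1)*(2 + Real.log t)/t := by
    refine le_trans hd ?_
    apply div_le_div_of_nonneg_right ?_ htpos.le
    nlinarith
  constructor
  · exact le_trans hd' hbound
  · have htri : ‖x n - iterComp T n N (x n)‖ ≤
        ‖x n - x (n+N)‖ + ‖x (n+N) - iterComp T n N (x n)‖ := by
      have := norm_add_le (x n - x (n+N)) (x (n+N) - iterComp T n N (x n))
      simpa using this
    have hap := happrox n N
    have hap' : M * (N:ℝ) / ((n:ℝ)+2) ≤ M*((N:ℝ)+1)*1/t := by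
      rw [div_le_div_iff₀ (by linarith) htpos]
      simp only [htdef]
      nlinarith
    have hsum : ‖x n - iterComp T n N (x n)‖ ≤
        M*((N:ℝ)+1)*(1 + Real.log t)/t + M*((N:ℝ)+1)*1/t := by
      linarith
    refine le_trans hsum (le_trans (le_of_eq ?_) hbound)
    field_simp
    ring
end

section
/- Let N ≥ 1, X a real normed space, C ⊆ X a convex subset, T_1,…,T_N : C → C nonexpansive mappings extended cyclically by T_n := T_{((n−1) mod N)+1}, (λ_n)_{n≥1} a sequence in [0,1], u ∈ C, and let (x_n) be the cyclic Halpern iteration: x_0 = u, x_{n+1} = λ_{n+1}·u + (1 − λ_{n+1})·T_{n+1}x_n. Let M > 0 with ‖u − T_i u‖ ≤ M for each i = 1,…,N and ‖x_n − u‖ ≤ M for all n ∈ ℕ. Then for all n ≥ 1, ‖x_n − x_{n+N}‖ ≤ (1 − λ_n)·‖x_{n−1} − x_{n+N−1}‖ + 2M·|λ_{n+N} − λ_n|. -/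
/-- For the cyclic Halpern iteration,
`‖x n - x (n+N)‖ ≤ (1 - λ n)·‖x (n-1) - x (n+N-1)‖ + 2M·|λ (n+N) - λ n|`. -/
theorem stmt_10 {X : Type*} [NormedAddCommGroup X] [NormedSpace ℝ X]
    (N : ℕ) (hN : 1 ≤ N) (C : Set X) (hC : Convex ℝ C)
    (T : ℕ → X → X)
    (hTmap : ∀ i, 1 ≤ i → i ≤ N → Set.MapsTo (T i) C C)
    (hTne : ∀ i, 1 ≤ i → i ≤ N → ∀ x ∈ C, ∀ y ∈ C, ‖T i x - T i y‖ ≤ ‖x - y‖)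
    (hcyc : ∀ n, 1 ≤ n → T n = T ((n - 1) % N + 1))
    (lam : ℕ → ℝ) (hlam : ∀ n, 1 ≤ n → lam n ∈ Set.Icc (0 : ℝ) 1)
    (u : X) (hu : u ∈ C) (x : ℕ → X) (hx0 : x 0 = u)
    (hx : ∀ n : ℕ, x (n + 1) = lam (n + 1) • u + (1 - lam (n + 1)) • T (n + 1) (x n))
    (M : ℝ) (hM : 0 < M)
    (hTu : ∀ i, 1 ≤ i → i ≤ N → ‖u - T i u‖ ≤ M)
    (hxb : ∀ n : ℕ, ‖x n - u‖ ≤ M) :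
    ∀ n : ℕ, 1 ≤ n →
      ‖x n - x (n + N)‖ ≤
        (1 - lam n) * ‖x (n - 1) - x (n + N - 1)‖ + 2 * M * |lam (n + N) - lam n| := by

  have hNpos : 0 < N := hN
  have hTC : ∀ m, 1 ≤ m → Set.MapsTo (T m) C C := by
    intro m hm
    rw [hcyc m hm]
    exact hTmap _ (Nat.le_add_left 1 _) (Nat.succ_le_of_lt (Nat.mod_lt _ hNpos))
  have hne : ∀ m, 1 ≤ m → ∀ a ∈ C, ∀ b ∈ C, ‖T m a - T m b‖ ≤ ‖a - b‖ := by
    intro m hm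
    rw [hcyc m hm]
    exact hTne _ (Nat.le_add_left 1 _) (Nat.succ_le_of_lt (Nat.mod_lt _ hNpos))
  have hTub : ∀ m, 1 ≤ m → ‖u - T m u‖ ≤ M := by
    intro m hm
    rw [hcyc m hm]
    exact hTu _ (Nat.le_add_left 1 _) (Nat.succ_le_of_lt (Nat.mod_lt _ hNpos))
  have hmem : ∀ n, x n ∈ C := by
    intro n
    induction n with
    | zero => rw [hx0]; exact hu
    | succ k ih =>
      rw [hx k]
      have hl := hlam (k + 1) (Nat.le_add_left 1 k)
      exact hC hu (hTC (k + 1) (Nat.le_add_left 1 k) ih) hl.1 (by linarith [hl.2]) (by ring)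
  intro n hn
  obtain ⟨k, rfl⟩ : ∃ k, n = k + 1 := ⟨n - 1, by omega⟩
  have hTeq : T (k + N + 1) = T (k + 1) := by
    rw [hcyc (k + N + 1) (by omega), hcyc (k + 1) (by omega)]
    have h1 : k + N + 1 - 1 = (k + 1 - 1) + N := by omega
    rw [h1, Nat.add_mod_right]
  have hEN : k + 1 + N = k + N + 1 := by ring
  have hE1 : k + 1 - 1 = k := by omega
  have hE2 : k + N + 1 - 1 = k + N := by omega
  set l1 := lam (k + 1) with hl1def
  set l2 := lam (k + N + 1) with hl2def
  have key : x (k + 1) - x (k + N + 1) =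
      (l1 - l2) • (u - T (k + 1) (x (k + N))) +
      (1 - l1) • (T (k + 1) (x k) - T (k + 1) (x (k + N))) := by
    rw [hx k, hx (k + N), hTeq]
    module
  have hl1 := hlam (k + 1) (by omega)
  have hl2 := hlam (k + N + 1) (by omega)
  have hb1 : ‖u - T (k + 1) (x (k + N))‖ ≤ 2 * M := by
    calc ‖u - T (k + 1) (x (k + N))‖
        ≤ ‖u - T (k + 1) u‖ + ‖T (k + 1) u - T (k + 1) (x (k + N))‖ := by
          simpa using norm_sub_le_norm_sub_add_norm_sub u (T (k + 1) u) (T (k + 1) (x (k + N)))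
      _ ≤ M + ‖u - x (k + N)‖ := by
          gcongr
          · exact hTub (k + 1) (by omega)
          · exact hne (k + 1) (by omega) u hu (x (k + N)) (hmem (k + N))
      _ ≤ M + M := by
          gcongr
          rw [norm_sub_rev]; exact hxb (k + N)
      _ = 2 * M := by ring
  have hb2 : ‖T (k + 1) (x k) - T (k + 1) (x (k + N))‖ ≤ ‖x k - x (k + N)‖ :=
    hne (k + 1) (by omega) (x k) (hmem k) (x (k + N)) (hmem (k + N))
  rw [hEN, hE1, hE2, key]
  calc ‖(l1 - l2) • (u - T (k + 1) (x (k + N))) +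
        (1 - l1) • (T (k + 1) (x k) - T (k + 1) (x (k + N)))‖
      ≤ ‖(l1 - l2) • (u - T (k + 1) (x (k + N)))‖ +
        ‖(1 - l1) • (T (k + 1) (x k) - T (k + 1) (x (k + N)))‖ := norm_add_le _ _
    _ = |l1 - l2| * ‖u - T (k + 1) (x (k + N))‖ +
        |1 - l1| * ‖T (k + 1) (x k) - T (k + 1) (x (k + N))‖ := by
        rw [norm_smul, norm_smul, Real.norm_eq_abs, Real.norm_eq_abs]
    _ ≤ |l1 - l2| * (2 * M) + (1 - l1) * ‖x k - x (k + N)‖ := by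
        rw [abs_of_nonneg (show (0:ℝ) ≤ 1 - l1 by linarith [hl1.2])]
        exact add_le_add (mul_le_mul_of_nonneg_left hb1 (abs_nonneg _))
          (mul_le_mul_of_nonneg_left hb2 (by linarith [hl1.2]))
    _ ≤ (1 - l1) * ‖x k - x (k + N)‖ + 2 * M * |l2 - l1| := by
        rw [abs_sub_comm]; nlinarith [abs_nonneg (l2 - l1), hM.le]
end

section
/- Let N ≥ 1, X a real normed space, C ⊆ X a convex subset, T_1,…,T_N : C → C nonexpansive mappings extended cyclically by T_n := T_{((n−1) mod N)+1}, (λ_n)_{n≥1} a sequence in [0,1], u ∈ C, and let (x_n) be the iteration x_0 = u, x_{n+1} = T_{n+1}(λ_{n+1}·u + (1 − λ_{n+1})·x_n). Let M > 0 with ‖x_n − u‖ ≤ M for all n ∈ ℕ. Then for all n ≥ 1, ‖x_n − x_{n+N}‖ ≤ (1 − λ_n)·‖x_{n−1} − x_{n+N−1}‖ + M·|λ_{n+N} − λ_n|. -/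
/-- For the cyclic iteration `x (n+1) = T (n+1) (λ_{n+1} • u + (1 - λ_{n+1}) • x n)`,
`‖x n - x (n+N)‖ ≤ (1 - λ n)·‖x (n-1) - x (n+N-1)‖ + M·|λ (n+N) - λ n|`. -/
theorem stmt_12 {X : Type*} [NormedAddCommGroup X] [NormedSpace ℝ X]
    (N : ℕ) (hN : 1 ≤ N) (C : Set X) (hC : Convex ℝ C)
    (T : ℕ → X → X)
    (hTmap : ∀ i, 1 ≤ i → i ≤ N → Set.MapsTo (T i) C C)
    (hTne : ∀ i, 1 ≤ i → i ≤ N → ∀ x ∈ C, ∀ y ∈ C, ‖T i x - T i y‖ ≤ ‖x - y‖)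
    (hcyc : ∀ n, 1 ≤ n → T n = T ((n - 1) % N + 1))
    (lam : ℕ → ℝ) (hlam : ∀ n, 1 ≤ n → lam n ∈ Set.Icc (0 : ℝ) 1)
    (u : X) (hu : u ∈ C) (x : ℕ → X) (hx0 : x 0 = u)
    (hx : ∀ n : ℕ, x (n + 1) = T (n + 1) (lam (n + 1) • u + (1 - lam (n + 1)) • x n))
    (M : ℝ) (hM : 0 < M)
    (hxb : ∀ n : ℕ, ‖x n - u‖ ≤ M) :
    ∀ n : ℕ, 1 ≤ n →
      ‖x n - x (n + N)‖ ≤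
        (1 - lam n) * ‖x (n - 1) - x (n + N - 1)‖ + M * |lam (n + N) - lam n| := by
  -- general-index versions of hTmap and hTne
  have hidx : ∀ k : ℕ, 1 ≤ (k % N + 1) ∧ (k % N + 1) ≤ N := fun k =>
    ⟨Nat.le_add_left 1 _, Nat.succ_le_of_lt (Nat.mod_lt k (by omega))⟩
  have hTmap' : ∀ k : ℕ, Set.MapsTo (T (k + 1)) C C := by
    intro k
    rw [hcyc (k + 1) (by omega)]
    simpa using hTmap (k % N + 1) (hidx k).1 (hidx k).2
  have hTne' : ∀ k : ℕ, ∀ a ∈ C, ∀ b ∈ C, ‖T (k + 1) a - T (k + 1) b‖ ≤ ‖a - b‖ := by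
    intro k
    rw [hcyc (k + 1) (by omega)]
    simpa using hTne (k % N + 1) (hidx k).1 (hidx k).2
  -- membership in C
  have hmem : ∀ k, x k ∈ C := by
    intro k
    induction k with
    | zero => rw [hx0]; exact hu
    | succ m ih =>
        rw [hx m]
        refine hTmap' m ?_
        have := hlam (m + 1) (by omega)
        exact hC hu ih (this.1) (by linarith [this.2]) (by ring)
  intro n hn
  obtain ⟨m, rfl⟩ : ∃ m, n = m + 1 := ⟨n - 1, by omega⟩
  have key : x (m + 1 + N) = T (m + 1)
      (lam (m + N + 1) • u + (1 - lam (m + N + 1)) • x (m + N)) := by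
    have h1 : m + 1 + N = m + N + 1 := by omega
    rw [h1, hx (m + N)]
    have : T (m + N + 1) = T (m + 1) := by
      rw [hcyc (m + N + 1) (by omega), hcyc (m + 1) (by omega)]
      congr 1
      simp [Nat.add_mod_right]
    rw [this]
  set a := lam (m + 1) • u + (1 - lam (m + 1)) • x m with ha
  set b := lam (m + N + 1) • u + (1 - lam (m + N + 1)) • x (m + N) with hb
  have haC : a ∈ C := by
    have := hlam (m + 1) (by omega)
    exact hC hu (hmem m) this.1 (by linarith [this.2]) (by ring)
  have hbC : b ∈ C := by
    have := hlam (m + N + 1) (by omega)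
    exact hC hu (hmem (m + N)) this.1 (by linarith [this.2]) (by ring)
  have step1 : ‖x (m + 1) - x (m + 1 + N)‖ ≤ ‖a - b‖ := by
    rw [hx m, key]
    exact hTne' m a haC b hbC
  have hab : a - b = (1 - lam (m + 1)) • (x m - x (m + N))
      + (lam (m + 1) - lam (m + N + 1)) • (u - x (m + N)) := by
    rw [ha, hb]; module
  have hl1 := hlam (m + 1) (by omega : 1 ≤ m + 1)
  have step2 : ‖a - b‖ ≤ (1 - lam (m + 1)) * ‖x m - x (m + N)‖
      + M * |lam (m + N + 1) - lam (m + 1)| := by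
    rw [hab]
    calc _ ≤ ‖(1 - lam (m + 1)) • (x m - x (m + N))‖
            + ‖(lam (m + 1) - lam (m + N + 1)) • (u - x (m + N))‖ := norm_add_le _ _
      _ = |1 - lam (m + 1)| * ‖x m - x (m + N)‖
            + |lam (m + 1) - lam (m + N + 1)| * ‖u - x (m + N)‖ := by
            rw [norm_smul, norm_smul, Real.norm_eq_abs, Real.norm_eq_abs]
      _ ≤ (1 - lam (m + 1)) * ‖x m - x (m + N)‖
            + M * |lam (m + N + 1) - lam (m + 1)| := by
            rw [abs_of_nonneg (by linarith [hl1.2]), abs_sub_comm]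
            have : ‖u - x (m + N)‖ ≤ M := by
              rw [norm_sub_rev]; exact hxb (m + N)
            have habs : (0:ℝ) ≤ |lam (m + N + 1) - lam (m + 1)| := abs_nonneg _
            nlinarith
  have := step1.trans step2
  simpa [show m + 1 - 1 = m from rfl, show m + 1 + N - 1 = m + N by omega,
    show m + 1 + N = m + N + 1 by omega] using this
end

section
/- Let N ≥ 1, X a real Hilbert space, C ⊆ X a convex subset, T_1,…,T_N : C → C nonexpansive mappings extended cyclically by T_n := T_{((n−1) mod N)+1}, and (λ_n)_{n≥1} a sequence in [0,1] satisfying lim_{n→∞} λ_n = 0, ∑_{n=1}^∞ |λ_{n+N} − λ_n| < ∞ and ∑_{n=1}^∞ λ_n = ∞. Let u ∈ C and (x_n) be the cyclic Halpern iteration x_0 = u, x_{n+1} = λ_{n+1}·u + (1 − λ_{n+1})·T_{n+1}x_n, and assume (x_n) is bounded. Then lim_{n→∞} ‖x_n − T_{n+N}T_{n+N−1}⋯T_{n+1}x_n‖ = 0. -/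
open Filter Finset


open Filter Finset

lemma xu_lemma (a α c : ℕ → ℝ) (ha : ∀ n, 0 ≤ a n)
    (hα0 : ∀ n, 0 ≤ α n) (hα1 : ∀ n, α n ≤ 1)
    (hc : ∀ n, 0 ≤ c n)
    (hrec : ∀ n, a (n + 1) ≤ (1 - α n) * a n + c n)
    (hcs : Summable c)
    (hαd : Tendsto (fun m => ∑ k ∈ range m, α k) atTop atTop) :
    Tendsto a atTop (nhds 0) := by
  -- key inequality
  have hkey : ∀ m n, a (m + n) ≤
      Real.exp (-(∑ k ∈ range n, α (m + k))) * a m + ∑ k ∈ range n, c (m + k) := by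
    intro m n
    induction n with
    | zero => simp
    | succ n ih =>
        have h1 : a (m + n + 1) ≤ (1 - α (m + n)) * a (m + n) + c (m + n) := hrec (m + n)
        have h2 : (1 - α (m + n)) * a (m + n) ≤
            (1 - α (m + n)) * (Real.exp (-(∑ k ∈ range n, α (m + k))) * a m
              + ∑ k ∈ range n, c (m + k)) := by
          apply mul_le_mul_of_nonneg_left ih
          linarith [hα1 (m + n)]
        have h3 : (1 - α (m + n)) ≤ Real.exp (-(α (m + n))) := by
          have := Real.add_one_le_exp (-(α (m + n)))
          linarith
        have hE : (0:ℝ) ≤ Real.exp (-(∑ k ∈ range n, α (m + k))) * a m :=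
          mul_nonneg (Real.exp_pos _).le (ha m)
        have hCsum : (0:ℝ) ≤ ∑ k ∈ range n, c (m + k) :=
          Finset.sum_nonneg fun k _ => hc _
        have h4 : (1 - α (m + n)) * (Real.exp (-(∑ k ∈ range n, α (m + k))) * a m
              + ∑ k ∈ range n, c (m + k)) ≤
            Real.exp (-(α (m + n))) * (Real.exp (-(∑ k ∈ range n, α (m + k))) * a m)
              + ∑ k ∈ range n, c (m + k) := by
          have hl : (1 - α (m + n)) * (Real.exp (-(∑ k ∈ range n, α (m + k))) * a m) ≤
              Real.exp (-(α (m + n))) * (Real.exp (-(∑ k ∈ range n, α (m + k))) * a m) :=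
            mul_le_mul_of_nonneg_right h3 hE
          have hr : (1 - α (m + n)) * (∑ k ∈ range n, c (m + k)) ≤ ∑ k ∈ range n, c (m + k) := by
            nlinarith [hα0 (m + n)]
          nlinarith
        have heq : Real.exp (-(α (m + n))) * Real.exp (-(∑ k ∈ range n, α (m + k))) =
            Real.exp (-(∑ k ∈ range (n+1), α (m + k))) := by
          rw [← Real.exp_add, Finset.sum_range_succ]
          congr 1; ring
        calc a (m + (n + 1)) = a (m + n + 1) := by ring_nf
          _ ≤ (1 - α (m + n)) * a (m + n) + c (m + n) := h1
          _ ≤ (1 - α (m + n)) * (Real.exp (-(∑ k ∈ range n, α (m + k))) * a m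
              + ∑ k ∈ range n, c (m + k)) + c (m + n) := by linarith
          _ ≤ Real.exp (-(∑ k ∈ range (n+1), α (m + k))) * a m
              + ∑ k ∈ range (n+1), c (m + k) := by
            rw [Finset.sum_range_succ (f := fun k => c (m + k))]
            calc (1 - α (m + n)) * (Real.exp (-(∑ k ∈ range n, α (m + k))) * a m
              + ∑ k ∈ range n, c (m + k)) + c (m + n)
                ≤ Real.exp (-(α (m + n))) * (Real.exp (-(∑ k ∈ range n, α (m + k))) * a m)
                  + ∑ k ∈ range n, c (m + k) + c (m + n) := by linarith
              _ = Real.exp (-(∑ k ∈ range (n+1), α (m + k))) * a m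
                  + (∑ k ∈ range n, c (m + k) + c (m + n)) := by rw [← heq]; ring
  -- tails of c
  set t : ℕ → ℝ := fun m => ∑' i, c (i + m) with ht
  have hcs' : ∀ m, Summable (fun i => c (i + m)) := fun m => (summable_nat_add_iff m).2 hcs
  have httail : ∀ m n, ∑ k ∈ range n, c (m + k) ≤ t m := by
    intro m n
    have : ∑ k ∈ range n, c (m + k) = ∑ k ∈ range n, c (k + m) := by
      apply Finset.sum_congr rfl; intro k _; rw [Nat.add_comm]
    rw [this]
    exact Summable.sum_le_tsum (range n) (fun i _ => hc _) (hcs' m)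
  have ht0 : ∀ m, 0 ≤ t m := fun m => tsum_nonneg fun i => hc _
  have httend : Tendsto t atTop (nhds 0) := tendsto_sum_nat_add c
  -- divergence of shifted sums
  have hshift : ∀ m, Tendsto (fun n => ∑ k ∈ range n, α (m + k)) atTop atTop := by
    intro m
    have heq : ∀ n, ∑ k ∈ range n, α (m + k) = (∑ k ∈ range (m + n), α k) - ∑ k ∈ range m, α k := by
      intro n
      rw [Finset.sum_range_add]
      ring
    have h2 : Tendsto (fun n => ∑ k ∈ range (m + n), α k) atTop atTop := by
      have := hαd.comp (tendsto_add_atTop_nat m)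
      exact this.congr fun n => by rw [Function.comp_apply, Nat.add_comm]
    have h3 := tendsto_atTop_add_const_right atTop (-(∑ k ∈ range m, α k)) h2
    exact (tendsto_congr fun n => by rw [heq n, sub_eq_add_neg]).2 h3
  -- epsilon argument
  rw [Metric.tendsto_atTop]
  intro ε hε
  obtain ⟨m, hm⟩ : ∃ m, t m < ε / 2 := by
    have := httend.eventually (eventually_lt_nhds (by linarith : (0:ℝ) < ε / 2))
    exact this.exists
  have hexp : Tendsto (fun n => Real.exp (-(∑ k ∈ range n, α (m + k))) * a m) atTop (nhds 0) := by
    have h1 : Tendsto (fun n => -(∑ k ∈ range n, α (m + k))) atTop atBot :=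
      tendsto_neg_atTop_atBot.comp (hshift m)
    have h2 := (Real.tendsto_exp_atBot.comp h1).mul_const (a m)
    simpa using h2
  obtain ⟨n1, hn1⟩ : ∃ n1, ∀ n ≥ n1, Real.exp (-(∑ k ∈ range n, α (m + k))) * a m < ε / 2 := by
    have h := hexp.eventually (eventually_lt_nhds (by linarith : (0:ℝ) < ε / 2))
    exact eventually_atTop.1 h
  refine ⟨m + n1, fun n hn => ?_⟩
  have hrep : n = m + (n - m) := by omega
  have hge : n - m ≥ n1 := by omega
  have hb := hkey m (n - m)
  have := httail m (n - m)
  have := hn1 (n - m) hge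
  rw [Real.dist_eq, sub_zero, abs_of_nonneg (ha n)]
  calc a n = a (m + (n - m)) := by rw [← hrep]
    _ ≤ Real.exp (-(∑ k ∈ range (n-m), α (m + k))) * a m + ∑ k ∈ range (n-m), c (m + k) := hb
    _ < ε / 2 + ε / 2 := by linarith
    _ = ε := by ring

/-- Asymptotic regularity of the cyclic Halpern iteration in a real Hilbert space
(Bauschke): if `λ_n → 0`, `∑ |λ_{n+N} - λ_n| < ∞`, `∑ λ_n = ∞` and `(x_n)` is bounded,
then `‖x n - T_{n+N}⋯T_{n+1} (x n)‖ → 0`. -/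
theorem stmt_13 {X : Type*} [NormedAddCommGroup X] [InnerProductSpace ℝ X]
    [CompleteSpace X]
    (N : ℕ) (hN : 1 ≤ N) (C : Set X) (hC : Convex ℝ C)
    (T : ℕ → X → X)
    (hTmap : ∀ i, 1 ≤ i → i ≤ N → Set.MapsTo (T i) C C)
    (hTne : ∀ i, 1 ≤ i → i ≤ N → ∀ x ∈ C, ∀ y ∈ C, ‖T i x - T i y‖ ≤ ‖x - y‖)
    (hcyc : ∀ n, 1 ≤ n → T n = T ((n - 1) % N + 1))
    (lam : ℕ → ℝ) (hlam : ∀ n, 1 ≤ n → lam n ∈ Set.Icc (0 : ℝ) 1)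
    (hlam0 : Filter.Tendsto lam Filter.atTop (nhds 0))
    (hsum : Summable (fun n : ℕ => |lam (n + 1 + N) - lam (n + 1)|))
    (hdiv : Filter.Tendsto (fun m : ℕ => ∑ n ∈ Finset.Icc 1 m, lam n)
      Filter.atTop Filter.atTop)
    (u : X) (hu : u ∈ C) (x : ℕ → X) (hx0 : x 0 = u)
    (hx : ∀ n : ℕ, x (n + 1) = lam (n + 1) • u + (1 - lam (n + 1)) • T (n + 1) (x n))
    (hbdd : Bornology.IsBounded (Set.range x)) :
    Filter.Tendsto (fun n : ℕ => ‖x n - iterComp T n N (x n)‖)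
      Filter.atTop (nhds 0) := by
  -- extended mapsTo and nonexpansiveness
  have hTmap' : ∀ i, 1 ≤ i → Set.MapsTo (T i) C C := by
    intro i hi
    rw [hcyc i hi]
    exact hTmap _ (Nat.le_add_left 1 _) (by have := Nat.mod_lt (i - 1) (show 0 < N by omega); omega)
  have hTne' : ∀ i, 1 ≤ i → ∀ y ∈ C, ∀ z ∈ C, ‖T i y - T i z‖ ≤ ‖y - z‖ := by
    intro i hi
    rw [hcyc i hi]
    exact hTne _ (Nat.le_add_left 1 _) (by have := Nat.mod_lt (i - 1) (show 0 < N by omega); omega)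
  -- cyclicity in shifted form
  have hcycN : ∀ n : ℕ, T (n + 1 + N) = T (n + 1) := by
    intro n
    have e1 := hcyc (n + 1 + N) (by omega)
    have e2 := hcyc (n + 1) (by omega)
    have e3 : (n + 1 + N - 1) % N = (n + 1 - 1) % N := by
      have : n + 1 + N - 1 = (n + 1 - 1) + N := by omega
      rw [this, Nat.add_mod_right]
    rw [e1, e2, e3]
  -- lam bounds
  have hlam0' : ∀ n : ℕ, 0 ≤ lam (n + 1) := fun n => (hlam (n + 1) (by omega)).1
  have hlam1' : ∀ n : ℕ, lam (n + 1) ≤ 1 := fun n => (hlam (n + 1) (by omega)).2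
  -- membership of the iterates
  have hmemx : ∀ n, x n ∈ C := by
    intro n
    induction n with
    | zero => rw [hx0]; exact hu
    | succ n ih =>
        rw [hx n]
        exact hC hu (hTmap' (n + 1) (by omega) ih) (hlam0' n)
          (by linarith [hlam1' n]) (by ring)
  -- bound on iterates
  obtain ⟨r, hr⟩ := hbdd.exists_norm_le
  have hxr : ∀ n, ‖x n‖ ≤ r := fun n => hr _ (Set.mem_range_self n)
  -- bound M on ‖u - T (n+1) (x n)‖
  set K : ℝ := ∑ i ∈ Finset.Icc 1 N, ‖u - T i u‖ with hK
  set M : ℝ := K + (‖u‖ + r) with hMdef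
  have hKbound : ∀ n : ℕ, ‖u - T (n + 1) u‖ ≤ K := by
    intro n
    have e := hcyc (n + 1) (by omega)
    have e' : T (n + 1) = T (n % N + 1) := by
      rw [e]; simp
    rw [e']
    refine Finset.single_le_sum (f := fun i => ‖u - T i u‖) (fun i _ => norm_nonneg _) ?_
    simp only [Finset.mem_Icc]
    constructor
    · omega
    · have := Nat.mod_lt n (show 0 < N by omega); omega
  have hM : ∀ n : ℕ, ‖u - T (n + 1) (x n)‖ ≤ M := by
    intro n
    have t1 : ‖u - T (n + 1) (x n)‖ ≤ ‖u - T (n + 1) u‖ + ‖T (n + 1) u - T (n + 1) (x n)‖ := by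
      have := dist_triangle u (T (n + 1) u) (T (n + 1) (x n))
      simpa [dist_eq_norm] using this
    have t2 : ‖T (n + 1) u - T (n + 1) (x n)‖ ≤ ‖u - x n‖ :=
      hTne' (n + 1) (by omega) u hu (x n) (hmemx n)
    have t3 : ‖u - x n‖ ≤ ‖u‖ + ‖x n‖ := norm_sub_le _ _
    have := hKbound n
    have := hxr n
    rw [hMdef]
    linarith
  have hM0 : (0 : ℝ) ≤ M := le_trans (norm_nonneg _) (hM 0)
  -- Step 1: a n := ‖x (n + N) - x n‖ → 0
  set a : ℕ → ℝ := fun n => ‖x (n + N) - x n‖ with hadef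
  have hrec : ∀ n : ℕ, a (n + 1) ≤ (1 - lam (n + 1 + N)) * a n
      + M * |lam (n + 1 + N) - lam (n + 1)| := by
    intro n
    have e1 : n + 1 + N = (n + N) + 1 := by omega
    have hv : x (n + 1 + N) - x (n + 1)
        = (lam (n + 1 + N) - lam (n + 1)) • (u - T (n + 1) (x n))
          + (1 - lam (n + 1 + N)) • (T (n + 1) (x (n + N)) - T (n + 1) (x n)) := by
      rw [e1, hx (n + N), hx n]
      have e2 : T (n + N + 1) = T (n + 1) := by
        rw [show n + N + 1 = n + 1 + N from by omega]; exact hcycN n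
      rw [e2]
      have e3 : lam (n + N + 1) = lam (n + 1 + N) := by
        rw [show n + N + 1 = n + 1 + N from by omega]
      rw [e3]
      module
    have hnorm : a (n + 1) ≤ |lam (n + 1 + N) - lam (n + 1)| * ‖u - T (n + 1) (x n)‖
        + |1 - lam (n + 1 + N)| * ‖T (n + 1) (x (n + N)) - T (n + 1) (x n)‖ := by
      have e4 : a (n + 1) = ‖x (n + 1 + N) - x (n + 1)‖ := rfl
      rw [e4, hv]
      calc ‖(lam (n + 1 + N) - lam (n + 1)) • (u - T (n + 1) (x n))
            + (1 - lam (n + 1 + N)) • (T (n + 1) (x (n + N)) - T (n + 1) (x n))‖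
          ≤ ‖(lam (n + 1 + N) - lam (n + 1)) • (u - T (n + 1) (x n))‖
            + ‖(1 - lam (n + 1 + N)) • (T (n + 1) (x (n + N)) - T (n + 1) (x n))‖ :=
            norm_add_le _ _
        _ = _ := by rw [norm_smul, norm_smul, Real.norm_eq_abs, Real.norm_eq_abs]
    have habs : |1 - lam (n + 1 + N)| = 1 - lam (n + 1 + N) := by
      have h1 := hlam1' (n + N)
      have e : lam (n + N + 1) = lam (n + 1 + N) := by
        rw [show n + N + 1 = n + 1 + N from by omega]
      rw [abs_of_nonneg]; linarith [e ▸ h1]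
    have hne : ‖T (n + 1) (x (n + N)) - T (n + 1) (x n)‖ ≤ a n :=
      hTne' (n + 1) (by omega) (x (n + N)) (hmemx _) (x n) (hmemx n)
    have hMn := hM n
    have habs0 : (0 : ℝ) ≤ |lam (n + 1 + N) - lam (n + 1)| := abs_nonneg _
    have hcoef : 0 ≤ 1 - lam (n + 1 + N) := by
      have h1 := hlam1' (n + N)
      have e : lam (n + N + 1) = lam (n + 1 + N) := by
        rw [show n + N + 1 = n + 1 + N from by omega]
      linarith [e ▸ h1]
    calc a (n + 1) ≤ |lam (n + 1 + N) - lam (n + 1)| * ‖u - T (n + 1) (x n)‖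
          + |1 - lam (n + 1 + N)| * ‖T (n + 1) (x (n + N)) - T (n + 1) (x n)‖ := hnorm
      _ ≤ |lam (n + 1 + N) - lam (n + 1)| * M + (1 - lam (n + 1 + N)) * a n := by
          rw [habs]
          gcongr
      _ = (1 - lam (n + 1 + N)) * a n + M * |lam (n + 1 + N) - lam (n + 1)| := by ring
  -- divergence of the shifted lam series
  have hdiv' : Tendsto (fun m : ℕ => ∑ k ∈ range m, lam (k + 1 + N)) atTop atTop := by
    have hIcc : ∀ m : ℕ, ∑ n ∈ Finset.Icc 1 m, lam n = ∑ k ∈ range m, lam (k + 1) := by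
      intro m
      have : Finset.Icc 1 m = Finset.Ico 1 (m + 1) := by
        rw [Finset.Ico_add_one_right_eq_Icc]
      rw [this, Finset.sum_Ico_eq_sum_range]
      simp only [Nat.add_sub_cancel]
      exact Finset.sum_congr rfl fun k _ => by rw [Nat.add_comm]
    have hS : Tendsto (fun m : ℕ => ∑ k ∈ range m, lam (k + 1)) atTop atTop :=
      hdiv.congr fun m => hIcc m
    have heq : ∀ m : ℕ, ∑ k ∈ range m, lam (k + 1 + N)
        = (∑ k ∈ range (N + m), lam (k + 1)) - ∑ k ∈ range N, lam (k + 1) := by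
      intro m
      rw [Finset.sum_range_add]
      have : ∑ k ∈ range m, lam (N + k + 1) = ∑ k ∈ range m, lam (k + 1 + N) :=
        Finset.sum_congr rfl fun k _ => by rw [show N + k + 1 = k + 1 + N from by omega]
      rw [this]; ring
    have h2 : Tendsto (fun m : ℕ => ∑ k ∈ range (N + m), lam (k + 1)) atTop atTop := by
      have := hS.comp (tendsto_add_atTop_nat N)
      exact this.congr fun m => by rw [Function.comp_apply, Nat.add_comm]
    have h3 := tendsto_atTop_add_const_right atTop (-(∑ k ∈ range N, lam (k + 1))) h2
    exact (tendsto_congr fun m => by rw [heq m, sub_eq_add_neg]).2 h3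
  -- apply the xu lemma
  have ha0 : Tendsto a atTop (nhds 0) := by
    refine xu_lemma a (fun n => lam (n + 1 + N)) (fun n => M * |lam (n + 1 + N) - lam (n + 1)|)
      (fun n => norm_nonneg _) ?_ ?_ (fun n => mul_nonneg hM0 (abs_nonneg _)) hrec
      (hsum.mul_left M) hdiv'
    · intro n
      have h1 := hlam0' (n + N)
      have e : lam (n + N + 1) = lam (n + 1 + N) := by
        rw [show n + N + 1 = n + 1 + N from by omega]
      linarith [e ▸ h1]
    · intro n
      have h1 := hlam1' (n + N)
      have e : lam (n + N + 1) = lam (n + 1 + N) := by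
        rw [show n + N + 1 = n + 1 + N from by omega]
      linarith [e ▸ h1]
  -- membership of iterated compositions
  have hmemIter : ∀ n k, iterComp T n k (x n) ∈ C := by
    intro n k
    induction k with
    | zero => exact hmemx n
    | succ k ih => exact hTmap' (n + k + 1) (by omega) ih
  -- Step 2: the distance from x (n + k) to the iterated composition
  have hclaim : ∀ k n, ‖x (n + k) - iterComp T n k (x n)‖ ≤ M * ∑ j ∈ range k, lam (n + j + 1) := by
    intro k
    induction k with
    | zero => intro n; simp [iterComp]
    | succ k ih =>
        intro n
        have hxe : x (n + (k + 1)) = lam (n + k + 1) • u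
            + (1 - lam (n + k + 1)) • T (n + k + 1) (x (n + k)) := by
          have : n + (k + 1) = (n + k) + 1 := by omega
          rw [this, hx (n + k)]
        have hie : iterComp T n (k + 1) (x n) = T (n + k + 1) (iterComp T n k (x n)) := rfl
        have hv : x (n + (k + 1)) - iterComp T n (k + 1) (x n)
            = lam (n + k + 1) • (u - T (n + k + 1) (x (n + k)))
              + (T (n + k + 1) (x (n + k)) - T (n + k + 1) (iterComp T n k (x n))) := by
          rw [hxe, hie]; module
        have h1 : ‖u - T (n + k + 1) (x (n + k))‖ ≤ M := by
          have := hM (n + k)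
          have e : T (n + k + 1) = T ((n + k) + 1) := rfl
          simpa [e] using this
        have h2 : ‖T (n + k + 1) (x (n + k)) - T (n + k + 1) (iterComp T n k (x n))‖
            ≤ ‖x (n + k) - iterComp T n k (x n)‖ :=
          hTne' (n + k + 1) (by omega) (x (n + k)) (hmemx _) (iterComp T n k (x n)) (hmemIter n k)
        have h3 := ih n
        have hl0 : 0 ≤ lam (n + k + 1) := hlam0' (n + k)
        calc ‖x (n + (k + 1)) - iterComp T n (k + 1) (x n)‖
            ≤ ‖lam (n + k + 1) • (u - T (n + k + 1) (x (n + k)))‖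
              + ‖T (n + k + 1) (x (n + k)) - T (n + k + 1) (iterComp T n k (x n))‖ := by
                rw [hv]; exact norm_add_le _ _
          _ ≤ lam (n + k + 1) * M + ‖x (n + k) - iterComp T n k (x n)‖ := by
              rw [norm_smul, Real.norm_eq_abs, abs_of_nonneg hl0]
              gcongr
          _ ≤ lam (n + k + 1) * M + M * ∑ j ∈ range k, lam (n + j + 1) := by linarith
          _ = M * ∑ j ∈ range (k + 1), lam (n + j + 1) := by
              rw [Finset.sum_range_succ]; ring
  -- the final squeeze
  have hsumlam : Tendsto (fun n : ℕ => M * ∑ j ∈ range N, lam (n + j + 1)) atTop (nhds 0) := by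
    have h1 : Tendsto (fun n : ℕ => ∑ j ∈ range N, lam (n + j + 1)) atTop (nhds 0) := by
      have := tendsto_finset_sum (range N)
        (fun j _ => hlam0.comp (tendsto_add_atTop_nat (j + 1)))
      simpa [add_assoc] using this
    simpa using h1.const_mul M
  have hbound : ∀ n : ℕ, ‖x n - iterComp T n N (x n)‖ ≤ a n + M * ∑ j ∈ range N, lam (n + j + 1) := by
    intro n
    have t1 : ‖x n - iterComp T n N (x n)‖
        ≤ ‖x n - x (n + N)‖ + ‖x (n + N) - iterComp T n N (x n)‖ := by
      have := dist_triangle (x n) (x (n + N)) (iterComp T n N (x n))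
      simpa [dist_eq_norm] using this
    have t2 : ‖x n - x (n + N)‖ = a n := by rw [hadef, norm_sub_rev]
    have t3 := hclaim N n
    linarith [t1, t2 ▸ t1]
  refine squeeze_zero (fun n => norm_nonneg _) hbound ?_
  simpa using ha0.add hsumlam
end

section
/- Let N ≥ 1, X a real normed space, C ⊆ X a convex subset, T_1,…,T_N : C → C nonexpansive mappings extended cyclically by T_n := T_{((n−1) mod N)+1}, and (λ_n)_{n≥1} a sequence in [0,1] satisfying lim_{n→∞} λ_n = 0, ∑_{n=1}^∞ |λ_{n+N} − λ_n| < ∞ and ∑_{n=1}^∞ λ_n = ∞. Let u ∈ C and (x_n) be the iteration x_0 = u, x_{n+1} = T_{n+1}(λ_{n+1}·u + (1 − λ_{n+1})·x_n), and assume (x_n) is bounded. Then lim_{n→∞} ‖x_n − T_{n+N}T_{n+N−1}⋯T_{n+1}x_n‖ = 0. -/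
open Filter Finset

lemma xu_lemma_s14 (a t b : ℕ → ℝ) (ha : ∀ n, 0 ≤ a n)
    (ht : ∀ n, t n ∈ Set.Icc (0:ℝ) 1)
    (hb : Summable b) (hb0 : ∀ n, 0 ≤ b n)
    (hrec : ∀ n, a (n+1) ≤ (1 - t n) * a n + b n)
    (hdiv : Tendsto (fun m => ∑ k ∈ Finset.range m, t k) atTop atTop) :
    Tendsto a atTop (nhds 0) := by
  have ht0 : ∀ n, 0 ≤ 1 - t n := fun n => by linarith [(ht n).2]
  have key : ∀ n m, n ≤ m →
      a m ≤ (∏ k ∈ Finset.Ico n m, (1 - t k)) * a n + ∑ k ∈ Finset.Ico n m, b k := by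
    intro n m hnm
    induction m with
    | zero =>
        have : n = 0 := Nat.le_zero.mp hnm
        subst this; simp
    | succ m ih =>
        rcases Nat.lt_or_ge n (m+1) with h | h
        · have hnm' : n ≤ m := Nat.lt_succ_iff.mp h
          have ih' := ih hnm'
          have hP : 0 ≤ ∏ k ∈ Finset.Ico n m, (1 - t k) :=
            Finset.prod_nonneg fun k _ => ht0 k
          have hS : 0 ≤ ∑ k ∈ Finset.Ico n m, b k :=
            Finset.sum_nonneg fun k _ => hb0 k
          calc a (m+1) ≤ (1 - t m) * a m + b m := hrec m
            _ ≤ (1 - t m) * ((∏ k ∈ Finset.Ico n m, (1 - t k)) * a n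
                  + ∑ k ∈ Finset.Ico n m, b k) + b m := by
                apply add_le_add_left
                exact mul_le_mul_of_nonneg_left ih' (ht0 m)
            _ ≤ (∏ k ∈ Finset.Ico n (m+1), (1 - t k)) * a n
                  + ∑ k ∈ Finset.Ico n (m+1), b k := by
                rw [Finset.prod_Ico_succ_top hnm', Finset.sum_Ico_succ_top hnm']
                have h1 : (1 - t m) * (∑ k ∈ Finset.Ico n m, b k)
                    ≤ ∑ k ∈ Finset.Ico n m, b k := by
                  nlinarith [(ht n).1, (ht m).1]
                nlinarith
        · have : n = m + 1 := le_antisymm hnm h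
          subst this; simp
  rw [Metric.tendsto_atTop]
  intro ε hε
  -- choose n0 with tail of b small
  have htsum := hb.hasSum.tendsto_sum_nat
  have : ∀ᶠ n in atTop, (∑' k, b k) - (∑ k ∈ Finset.range n, b k) < ε/4 := by
    have : Tendsto (fun n => (∑' k, b k) - ∑ k ∈ Finset.range n, b k) atTop (nhds 0) := by
      have h0 : Tendsto (fun _ : ℕ => ∑' k, b k) atTop (nhds (∑' k, b k)) :=
        tendsto_const_nhds
      simpa using h0.sub htsum
    have := (this.eventually (eventually_lt_nhds (by linarith : (0:ℝ) < ε/4)))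
    simpa using this
  obtain ⟨n0, hn0⟩ := this.exists
  have tail_bd : ∀ m, n0 ≤ m → ∑ k ∈ Finset.Ico n0 m, b k ≤ ε/4 := by
    intro m hm
    have h1 : ∑ k ∈ Finset.Ico n0 m, b k
        = ∑ k ∈ Finset.range m, b k - ∑ k ∈ Finset.range n0, b k := by
      rw [Finset.sum_Ico_eq_sub _ hm]
    have h2 : ∑ k ∈ Finset.range m, b k ≤ ∑' k, b k :=
      Summable.sum_le_tsum _ (fun k _ => hb0 k) hb
    linarith
  -- product bound: ∏ ≤ exp(-∑ t) → 0
  have prod_bd : ∀ m, (∏ k ∈ Finset.Ico n0 m, (1 - t k))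
      ≤ Real.exp (-(∑ k ∈ Finset.Ico n0 m, t k)) := by
    intro m
    rw [← Finset.sum_neg_distrib, Real.exp_sum]
    apply Finset.prod_le_prod (fun k _ => ht0 k)
    intro k _
    have := Real.add_one_le_exp (-(t k))
    linarith
  have hPtend : Tendsto (fun m => Real.exp (-(∑ k ∈ Finset.Ico n0 m, t k)) * a n0)
      atTop (nhds 0) := by
    have h1 : Tendsto (fun m => ∑ k ∈ Finset.Ico n0 m, t k) atTop atTop := by
      have : ∀ᶠ m in atTop, ∑ k ∈ Finset.Ico n0 m, t k
          = ∑ k ∈ Finset.range m, t k - ∑ k ∈ Finset.range n0, t k := by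
        filter_upwards [eventually_ge_atTop n0] with m hm
        rw [Finset.sum_Ico_eq_sub _ hm]
      have h3 := tendsto_atTop_add_const_right atTop (-(∑ k ∈ Finset.range n0, t k)) hdiv
      refine Tendsto.congr' ?_ h3
      filter_upwards [this] with m hm
      rw [hm, sub_eq_add_neg]
    have h2 : Tendsto (fun m => Real.exp (-(∑ k ∈ Finset.Ico n0 m, t k))) atTop (nhds 0) :=
      Real.tendsto_exp_atBot.comp (tendsto_neg_atTop_atBot.comp h1)
    simpa using h2.mul_const (a n0)
  have := (hPtend.eventually (eventually_lt_nhds (by linarith : (0:ℝ) < ε/4)))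
  obtain ⟨m0, hm0⟩ := (this.and (eventually_ge_atTop n0)).exists_forall_of_atTop
  refine ⟨m0, fun m hm => ?_⟩
  obtain ⟨h1, h2⟩ := hm0 m hm
  have hk := key n0 m h2
  have hPexp : (∏ k ∈ Finset.Ico n0 m, (1 - t k)) * a n0
      ≤ Real.exp (-(∑ k ∈ Finset.Ico n0 m, t k)) * a n0 :=
    mul_le_mul_of_nonneg_right (prod_bd m) (ha n0)
  have := tail_bd m h2
  rw [Real.dist_eq, sub_zero, abs_of_nonneg (ha m)]
  linarith

/-- Asymptotic regularity of the cyclic iteration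
`x (n+1) = T (n+1) (λ_{n+1} • u + (1 - λ_{n+1}) • x n)` in a real normed space:
if `λ_n → 0`, `∑ |λ_{n+N} - λ_n| < ∞`, `∑ λ_n = ∞` and `(x_n)` is bounded,
then `‖x n - T_{n+N}⋯T_{n+1} (x n)‖ → 0`. -/
theorem stmt_14 {X : Type*} [NormedAddCommGroup X] [NormedSpace ℝ X]
    (N : ℕ) (hN : 1 ≤ N) (C : Set X) (hC : Convex ℝ C)
    (T : ℕ → X → X)
    (hTmap : ∀ i, 1 ≤ i → i ≤ N → Set.MapsTo (T i) C C)
    (hTne : ∀ i, 1 ≤ i → i ≤ N → ∀ x ∈ C, ∀ y ∈ C, ‖T i x - T i y‖ ≤ ‖x - y‖)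
    (hcyc : ∀ n, 1 ≤ n → T n = T ((n - 1) % N + 1))
    (lam : ℕ → ℝ) (hlam : ∀ n, 1 ≤ n → lam n ∈ Set.Icc (0 : ℝ) 1)
    (hlam0 : Filter.Tendsto lam Filter.atTop (nhds 0))
    (hsum : Summable (fun n : ℕ => |lam (n + 1 + N) - lam (n + 1)|))
    (hdiv : Filter.Tendsto (fun m : ℕ => ∑ n ∈ Finset.Icc 1 m, lam n)
      Filter.atTop Filter.atTop)
    (u : X) (hu : u ∈ C) (x : ℕ → X) (hx0 : x 0 = u)
    (hx : ∀ n : ℕ, x (n + 1) = T (n + 1) (lam (n + 1) • u + (1 - lam (n + 1)) • x n))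
    (hbdd : Bornology.IsBounded (Set.range x)) :
    Filter.Tendsto (fun n : ℕ => ‖x n - iterComp T n N (x n)‖)
      Filter.atTop (nhds 0) := by
  have hN0 : 0 < N := hN
  -- extended mapping/nonexpansive facts
  have Tmap' : ∀ n, 1 ≤ n → Set.MapsTo (T n) C C := by
    intro n hn
    rw [hcyc n hn]
    exact hTmap _ (Nat.le_add_left 1 _) (Nat.succ_le_of_lt (Nat.mod_lt _ hN0))
  have Tne' : ∀ n, 1 ≤ n → ∀ z ∈ C, ∀ w ∈ C, ‖T n z - T n w‖ ≤ ‖z - w‖ := by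
    intro n hn
    rw [hcyc n hn]
    exact hTne _ (Nat.le_add_left 1 _) (Nat.succ_le_of_lt (Nat.mod_lt _ hN0))
  have Tper : ∀ n : ℕ, T (n + 1 + N) = T (n + 1) := by
    intro n
    rw [hcyc (n + 1 + N) (by omega), hcyc (n + 1) (by omega)]
    have h : (n + 1 + N - 1) % N = (n + 1 - 1) % N := by
      rw [show n + 1 + N - 1 = n + N from by omega, show n + 1 - 1 = n from rfl,
        Nat.add_mod_right]
    rw [h]
  -- lambda facts
  have hl0 : ∀ n : ℕ, 0 ≤ lam (n+1) := fun n => (hlam (n+1) (by omega)).1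
  have hl1 : ∀ n : ℕ, lam (n+1) ≤ 1 := fun n => (hlam (n+1) (by omega)).2
  -- membership
  have xC : ∀ n, x n ∈ C := by
    intro n
    induction n with
    | zero => rw [hx0]; exact hu
    | succ n ih =>
        rw [hx n]
        exact Tmap' (n+1) (by omega) (hC hu ih (hl0 n) (by linarith [hl1 n]) (by ring))
  have yC : ∀ n : ℕ, lam (n+1) • u + (1 - lam (n+1)) • x n ∈ C := fun n =>
    hC hu (xC n) (hl0 n) (by linarith [hl1 n]) (by ring)
  -- bound
  obtain ⟨r, hr⟩ := hbdd.exists_norm_le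
  have hr' : ∀ n, ‖x n‖ ≤ r := fun n => hr _ (Set.mem_range_self n)
  set M : ℝ := ‖u‖ + r with hM
  have hM0 : 0 ≤ M := le_trans (norm_nonneg u) (by linarith [norm_nonneg (x 0), hr' 0])
  have hMu : ∀ n, ‖u - x n‖ ≤ M := fun n =>
    le_trans (norm_sub_le _ _) (by simp [hM]; linarith [hr' n])
  have hMx : ∀ n, ‖x n - u‖ ≤ M := fun n => by
    rw [norm_sub_rev]; exact hMu n
  -- Step A : ‖x (n+N) - x n‖ → 0
  have hA : Tendsto (fun n => ‖x (n + N) - x n‖) atTop (nhds 0) := by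
    apply xu_lemma_s14 _ (fun n => lam (n + 1 + N))
      (fun n => M * |lam (n + 1 + N) - lam (n + 1)|)
      (fun n => norm_nonneg _) (fun n => hlam _ (by omega))
      (hsum.mul_left M) (fun n => mul_nonneg hM0 (abs_nonneg _))
    · -- recurrence
      intro n
      have e1 : x (n + N + 1) = T (n + N + 1)
          (lam (n + N + 1) • u + (1 - lam (n + N + 1)) • x (n + N)) := hx (n + N)
      have e2 : x (n + 1) = T (n + 1)
          (lam (n + 1) • u + (1 - lam (n + 1)) • x n) := hx n
      have hTeq : T (n + N + 1) = T (n + 1) := by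
        rw [show n + N + 1 = n + 1 + N by ring, Tper]
      have h3 : ‖x (n + N + 1) - x (n + 1)‖
          ≤ ‖(lam (n + N + 1) • u + (1 - lam (n + N + 1)) • x (n + N))
              - (lam (n + 1) • u + (1 - lam (n + 1)) • x n)‖ := by
        rw [e1, e2, hTeq]
        exact Tne' (n+1) (by omega) _ (by simpa using yC (n + N)) _ (yC n)
      have h4 : (lam (n + N + 1) • u + (1 - lam (n + N + 1)) • x (n + N))
          - (lam (n + 1) • u + (1 - lam (n + 1)) • x n)
          = (1 - lam (n + N + 1)) • (x (n + N) - x n)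
            + (lam (n + N + 1) - lam (n + 1)) • (u - x n) := by
        module
      have h5 : ‖(1 - lam (n + N + 1)) • (x (n + N) - x n)
            + (lam (n + N + 1) - lam (n + 1)) • (u - x n)‖
          ≤ (1 - lam (n + N + 1)) * ‖x (n + N) - x n‖
            + |lam (n + N + 1) - lam (n + 1)| * M := by
        refine le_trans (norm_add_le _ _) (add_le_add ?_ ?_)
        · rw [norm_smul, Real.norm_eq_abs,
            abs_of_nonneg (by linarith [hl1 (n + N)] : (0:ℝ) ≤ 1 - lam (n + N + 1))]
        · rw [norm_smul, Real.norm_eq_abs]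
          exact mul_le_mul_of_nonneg_left (hMu n) (abs_nonneg _)
      have hidx : n + 1 + N = n + N + 1 := by ring
      calc ‖x (n + 1 + N) - x (n + 1)‖ = ‖x (n + N + 1) - x (n + 1)‖ := by rw [hidx]
        _ ≤ (1 - lam (n + N + 1)) * ‖x (n + N) - x n‖
            + |lam (n + N + 1) - lam (n + 1)| * M := by
              refine le_trans h3 ?_; rw [h4]; exact h5
        _ = (1 - lam (n + 1 + N)) * ‖x (n + N) - x n‖
            + M * |lam (n + 1 + N) - lam (n + 1)| := by rw [hidx]; ring
    · -- divergence of ∑ lam (k+1+N)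
      have key : ∀ m : ℕ, ∑ j ∈ Finset.Icc 1 (m + N), lam j
          = ∑ j ∈ Finset.Icc 1 N, lam j + ∑ k ∈ Finset.range m, lam (k + 1 + N) := by
        intro m
        induction m with
        | zero => simp
        | succ m ih =>
            rw [show m + 1 + N = (m + N) + 1 by ring,
              Finset.sum_Icc_succ_top (by omega), ih, Finset.sum_range_succ,
              show m + N + 1 = m + 1 + N from by ring]
            ring
      have h1 : Tendsto (fun m => ∑ j ∈ Finset.Icc 1 (m + N), lam j) atTop atTop :=
        hdiv.comp (tendsto_add_atTop_nat N)
      have h2 : Tendsto (fun m => ∑ j ∈ Finset.Icc 1 (m + N), lam j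
          - ∑ j ∈ Finset.Icc 1 N, lam j) atTop atTop :=
        tendsto_atTop_add_const_right _ _ h1
      refine h2.congr fun m => ?_
      rw [key m]; ring
  -- Step B : distance from iterate composition
  have hB : ∀ n k : ℕ, iterComp T n k (x n) ∈ C ∧
      ‖iterComp T n k (x n) - x (n + k)‖ ≤ ∑ j ∈ Finset.range k, lam (n + j + 1) * M := by
    intro n k
    induction k with
    | zero => simp [iterComp, xC n]
    | succ k ih =>
        obtain ⟨ihC, ihB⟩ := ih
        constructor
        · exact Tmap' (n + k + 1) (by omega) ihC
        · have e : x (n + k + 1) = T (n + k + 1)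
              (lam (n + k + 1) • u + (1 - lam (n + k + 1)) • x (n + k)) := hx (n + k)
          have h1 : ‖iterComp T n (k+1) (x n) - x (n + (k + 1))‖
              ≤ ‖iterComp T n k (x n)
                  - (lam (n + k + 1) • u + (1 - lam (n + k + 1)) • x (n + k))‖ := by
            show ‖T (n + k + 1) (iterComp T n k (x n)) - x (n + (k+1))‖ ≤ _
            rw [show n + (k+1) = n + k + 1 by ring, e]
            exact Tne' (n + k + 1) (by omega) _ ihC _ (yC (n + k))
          have h2 : iterComp T n k (x n)
              - (lam (n + k + 1) • u + (1 - lam (n + k + 1)) • x (n + k))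
              = (iterComp T n k (x n) - x (n + k))
                + lam (n + k + 1) • (x (n + k) - u) := by module
          have h3 : ‖lam (n + k + 1) • (x (n + k) - u)‖ ≤ lam (n + k + 1) * M := by
            rw [norm_smul, Real.norm_eq_abs, abs_of_nonneg (hl0 (n + k))]
            exact mul_le_mul_of_nonneg_left (hMx (n + k)) (hl0 (n + k))
          rw [Finset.sum_range_succ]
          calc ‖iterComp T n (k+1) (x n) - x (n + (k + 1))‖
              ≤ ‖(iterComp T n k (x n) - x (n + k))
                  + lam (n + k + 1) • (x (n + k) - u)‖ := by rw [← h2]; exact h1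
            _ ≤ ‖iterComp T n k (x n) - x (n + k)‖ + lam (n + k + 1) * M :=
                le_trans (norm_add_le _ _) (by linarith)
            _ ≤ (∑ j ∈ Finset.range k, lam (n + j + 1) * M) + lam (n + k + 1) * M := by
                linarith
  -- combine
  have hg : Tendsto (fun n => ‖x (n + N) - x n‖
      + ∑ j ∈ Finset.range N, lam (n + j + 1) * M) atTop (nhds 0) := by
    have h1 : Tendsto (fun n => ∑ j ∈ Finset.range N, lam (n + j + 1) * M)
        atTop (nhds 0) := by
      have : Tendsto (fun n => ∑ j ∈ Finset.range N, lam (n + j + 1) * M)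
          atTop (nhds (∑ j ∈ Finset.range N, (0:ℝ))) := by
        apply tendsto_finset_sum
        intro j _
        have := (hlam0.comp (tendsto_add_atTop_nat (j + 1))).mul_const M
        simpa [Function.comp, add_assoc] using this
      simpa using this
    simpa using hA.add h1
  apply squeeze_zero (fun n => norm_nonneg _) _ hg
  intro n
  calc ‖x n - iterComp T n N (x n)‖
      ≤ ‖x n - x (n + N)‖ + ‖x (n + N) - iterComp T n N (x n)‖ := by
        have := norm_add_le (x n - x (n + N)) (x (n + N) - iterComp T n N (x n))
        simpa using this
    _ ≤ ‖x (n + N) - x n‖ + ∑ j ∈ Finset.range N, lam (n + j + 1) * M := by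
        rw [norm_sub_rev (x n) (x (n + N)),
          norm_sub_rev (x (n + N)) (iterComp T n N (x n))]
        exact add_le_add_right (hB n N).2 _
end

section
/- For all μ ∈ (0,1] and all t ∈ [0,1], sin(tμπ/2) / sin(μπ/2) ≤ t + (1 − cos(μπ/2))·(1 − t). -/
open Real

lemma sin_concave_aux {θ t : ℝ} (hθ0 : 0 ≤ θ) (hθπ : θ ≤ π) (ht0 : 0 ≤ t) (ht1 : t ≤ 1) :
    t * Real.sin θ ≤ Real.sin (t * θ) := by
  have h := strictConcaveOn_sin_Icc.concaveOn.2
    (show (0:ℝ) ∈ Set.Icc 0 π from ⟨le_refl 0, Real.pi_pos.le⟩)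
    (show θ ∈ Set.Icc 0 π from ⟨hθ0, hθπ⟩)
    (show (0:ℝ) ≤ 1 - t by linarith) ht0 (by ring)
  simpa using h

/-- For all `μ ∈ (0,1]` and `t ∈ [0,1]`,
`sin(tμπ/2) / sin(μπ/2) ≤ t + (1 - cos(μπ/2))·(1 - t)`. -/
theorem stmt_15 (μ t : ℝ) (hμ0 : 0 < μ) (hμ1 : μ ≤ 1) (ht0 : 0 ≤ t) (ht1 : t ≤ 1) :
    Real.sin (t * μ * Real.pi / 2) / Real.sin (μ * Real.pi / 2) ≤
      t + (1 - Real.cos (μ * Real.pi / 2)) * (1 - t) := by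
  set θ := μ * Real.pi / 2 with hθ
  have hπ := Real.pi_pos
  have hθ0 : 0 < θ := by positivity
  have hθ2 : θ ≤ π / 2 := by
    rw [hθ]; nlinarith
  have hθπ : θ ≤ π := by linarith
  have hsθ : 0 < Real.sin θ := Real.sin_pos_of_pos_of_lt_pi hθ0 (by linarith)
  have hcθ : 0 ≤ Real.cos θ := Real.cos_nonneg_of_mem_Icc ⟨by linarith, hθ2⟩
  -- concavity: (1-t)*sin θ ≤ sin ((1-t)*θ)
  have hconc : (1 - t) * Real.sin θ ≤ Real.sin ((1 - t) * θ) :=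
    sin_concave_aux hθ0.le hθπ (by linarith) (by linarith)
  have hcos1 : Real.cos ((1 - t) * θ) ≤ 1 := Real.cos_le_one _
  have hkey : Real.sin (t * θ) ≤ Real.sin θ - Real.cos θ * ((1 - t) * Real.sin θ) := by
    have : t * θ = θ - (1 - t) * θ := by ring
    rw [this, Real.sin_sub]
    have h1 : Real.sin θ * Real.cos ((1 - t) * θ) ≤ Real.sin θ := by
      nlinarith
    have h2 : Real.cos θ * ((1 - t) * Real.sin θ) ≤ Real.cos θ * Real.sin ((1 - t) * θ) :=
      mul_le_mul_of_nonneg_left hconc hcθ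
    linarith
  rw [div_le_iff₀ hsθ]
  have : t * μ * Real.pi / 2 = t * θ := by rw [hθ]; ring
  rw [this]
  nlinarith [hkey]
end
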